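/- arXiv:1602.00356 — 4 statements merged into one kernel-verified Lean document; each statement's English description precedes it below -/
import Mathlib

section
/- Let G be a connected multigraph formed from connected graphs H and H' by identifying a single vertex of H with a single vertex of H' (and no other overlap). Then Ψ_G = Ψ_H · Ψ_{H'}. -/
/-- A multigraph: each edge `e` has endpoints `fst e` and `snd e`. -/
structure Multigraph (V : Type) (E : Type) where
  fst : E → V
  snd : E → V

namespace Multigraph

variable {V E V' E' W : Type}

/-- Adjacency using only edges in the set `S`. -/
def Adj (G : Multigraph V E) (S : Set E) (u v : V) : Prop :=
  ∃ e ∈ S, (G.fst e = u ∧ G.snd e = v) ∨ (G.fst e = v ∧ G.snd e = u)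

/-- All vertices are connected using edges from `S`. -/
def ConnOn (G : Multigraph V E) (S : Set E) : Prop :=
  ∀ u v : V, Relation.ReflTransGen (G.Adj S) u v

/-- The multigraph is connected. -/
def ConnectedGraph (G : Multigraph V E) : Prop := G.ConnOn Set.univ

/-- A spanning tree: a minimally spanning-connected edge set. -/
def IsSpanningTree (G : Multigraph V E) [DecidableEq E] (T : Finset E) : Prop :=
  G.ConnOn ↑T ∧ ∀ e ∈ T, ¬ G.ConnOn ↑(T.erase e)

open Classical in
/-- The Kirchhoff polynomial `Ψ_G = ∑_{T spanning tree} ∏_{e ∉ T} t_e`. -/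
noncomputable def kirchhoff (G : Multigraph V E) [Fintype E] [DecidableEq E] :
    MvPolynomial E ℚ :=
  ∑ T : Finset E, if G.IsSpanningTree T then ∏ e ∈ Tᶜ, MvPolynomial.X e else 0

/-- Deletion of the edge `e`. -/
def delete (G : Multigraph V E) (e : E) : Multigraph V {e' : E // e' ≠ e} :=
  ⟨fun e' => G.fst e'.1, fun e' => G.snd e'.1⟩

/-- Contraction of the edge `e` (its two endpoints get identified). -/
def contract (G : Multigraph V E) (e : E) :
    Multigraph (Quot fun a b : V => a = G.fst e ∧ b = G.snd e) {e' : E // e' ≠ e} :=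
  ⟨fun e' => Quot.mk _ (G.fst e'.1), fun e' => Quot.mk _ (G.snd e'.1)⟩

/-- Identify the two vertices `a` and `b`. -/
def identify (G : Multigraph V E) (a b : V) :
    Multigraph (Quot fun x y : V => x = a ∧ y = b) E :=
  ⟨fun e => Quot.mk _ (G.fst e), fun e => Quot.mk _ (G.snd e)⟩

/-- A self-loop. -/
def IsLoop (G : Multigraph V E) (e : E) : Prop := G.fst e = G.snd e

/-- A bridge: deleting `e` disconnects the graph. -/
def IsBridge (G : Multigraph V E) (e : E) : Prop := ¬ G.ConnOn {e' | e' ≠ e}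

/-- The whole graph is a tree (its full edge set is a spanning tree). -/
def IsTreeGraph (G : Multigraph V E) [Fintype E] [DecidableEq E] : Prop := G.IsSpanningTree Finset.univ

/-- A regular edge: not a bridge, not a self-loop, and deleting it does not leave a tree. -/
def IsRegular (G : Multigraph V E) [Fintype E] [DecidableEq E] (e : E) : Prop :=
  ¬ G.IsBridge e ∧ ¬ G.IsLoop e ∧ ¬ (G.delete e).IsTreeGraph

/-- The Jacobian ideal of a polynomial: the ideal generated by its partial derivatives. -/
noncomputable def jacobianIdeal {σ : Type} (f : MvPolynomial σ ℚ) :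
    Ideal (MvPolynomial σ ℚ) :=
  Ideal.span (Set.range fun i : σ => MvPolynomial.pderiv i f)

/-- Aluffi's Condition 1 for the pair `(G, e)`: `Ψ_G` lies in the Jacobian ideal of `Ψ_{G∖e}`. -/
def Cond1 (G : Multigraph V E) [Fintype E] [DecidableEq E] (e : E) : Prop :=
  G.kirchhoff ∈
    jacobianIdeal (MvPolynomial.rename (Subtype.val : {e' : E // e' ≠ e} → E)
      (G.delete e).kirchhoff)

end Multigraph


namespace Multigraph

variable {V E V' E' W E0 F : Type}

theorem adj_symm (G : Multigraph W F) (S : Set F) : Symmetric (G.Adj S) := by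
  rintro u v ⟨e, he, h | h⟩
  · exact ⟨e, he, Or.inr h⟩
  · exact ⟨e, he, Or.inl h⟩

theorem lift_rtg (H : Multigraph V E0) (G : Multigraph W F) (φ : V → W)
    (S0 : Set E0) (S : Set F)
    (h : ∀ e ∈ S0, ∃ f ∈ S, G.fst f = φ (H.fst e) ∧ G.snd f = φ (H.snd e))
    {u v : V} (huv : Relation.ReflTransGen (H.Adj S0) u v) :
    Relation.ReflTransGen (G.Adj S) (φ u) (φ v) := by
  induction huv with
  | refl => exact .refl
  | @tail b c _ hadj ih =>
    obtain ⟨e, he, h1 | h1⟩ := hadj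
    · obtain ⟨f, hf, hf1, hf2⟩ := h e he
      exact ih.tail ⟨f, hf, Or.inl ⟨by rw [hf1, h1.1], by rw [hf2, h1.2]⟩⟩
    · obtain ⟨f, hf, hf1, hf2⟩ := h e he
      exact ih.tail ⟨f, hf, Or.inr ⟨by rw [hf1, h1.1], by rw [hf2, h1.2]⟩⟩

theorem proj_rtg (H : Multigraph V E0) (G : Multigraph W F) (p : W → V)
    (S0 : Set E0) (S : Set F)
    (h : ∀ f ∈ S, (∃ e ∈ S0, p (G.fst f) = H.fst e ∧ p (G.snd f) = H.snd e)
        ∨ p (G.fst f) = p (G.snd f))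
    {u v : W} (huv : Relation.ReflTransGen (G.Adj S) u v) :
    Relation.ReflTransGen (H.Adj S0) (p u) (p v) := by
  induction huv with
  | refl => exact .refl
  | @tail b c _ hadj ih =>
    obtain ⟨f, hf, h1 | h1⟩ := hadj
    · obtain ⟨hb, hcc⟩ := h1
      subst hb; subst hcc
      rcases h f hf with ⟨e, he, he1, he2⟩ | heq
      · exact ih.tail ⟨e, he, Or.inl ⟨he1.symm, he2.symm⟩⟩
      · rwa [heq] at ih
    · obtain ⟨hb, hcc⟩ := h1
      subst hb; subst hcc
      rcases h f hf with ⟨e, he, he1, he2⟩ | heq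
      · exact ih.tail ⟨e, he, Or.inr ⟨he1.symm, he2.symm⟩⟩
      · rwa [← heq] at ih

theorem connOn_join_iff
    (H : Multigraph V E) (H' : Multigraph V' E') (G : Multigraph W (E ⊕ E'))
    (φ : V → W) (φ' : V' → W) (w0 : W)
    (hφ : Function.Injective φ) (hφ' : Function.Injective φ')
    (hc : ∀ e : E, G.fst (Sum.inl e) = φ (H.fst e) ∧ G.snd (Sum.inl e) = φ (H.snd e))
    (hc' : ∀ e' : E', G.fst (Sum.inr e') = φ' (H'.fst e') ∧
      G.snd (Sum.inr e') = φ' (H'.snd e'))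
    (hcover : Set.range φ ∪ Set.range φ' = Set.univ)
    (hmeet : Set.range φ ∩ Set.range φ' = {w0})
    (S : Set (E ⊕ E')) :
    G.ConnOn S ↔ H.ConnOn (Sum.inl ⁻¹' S) ∧ H'.ConnOn (Sum.inr ⁻¹' S) := by
  classical
  have hw0 : w0 ∈ Set.range φ ∩ Set.range φ' := by rw [hmeet]; rfl
  obtain ⟨⟨v0, hv0⟩, ⟨v0', hv0'⟩⟩ := hw0
  constructor
  · intro hconn
    constructor
    · set p : W → V := fun w => if h : ∃ v, φ v = w then h.choose else v0 with hp
      have hpφ : ∀ v, p (φ v) = v := by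
        intro v
        have h : ∃ x, φ x = φ v := ⟨v, rfl⟩
        simp only [hp, dif_pos h]
        exact hφ h.choose_spec
      have hp' : ∀ v', p (φ' v') = v0 := by
        intro v'
        by_cases h : ∃ x, φ x = φ' v'
        · have hw : φ' v' = w0 := by
            have hm : φ' v' ∈ Set.range φ ∩ Set.range φ' := ⟨h, ⟨v', rfl⟩⟩
            rwa [hmeet] at hm
          rw [hw, ← hv0, hpφ]
        · simp only [hp, dif_neg h]
      intro u v
      have hedge : ∀ f ∈ S, (∃ e ∈ Sum.inl ⁻¹' S,
          p (G.fst f) = H.fst e ∧ p (G.snd f) = H.snd e)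
          ∨ p (G.fst f) = p (G.snd f) := by
        rintro (e | e') hf
        · exact Or.inl ⟨e, hf, by rw [(hc e).1, hpφ], by rw [(hc e).2, hpφ]⟩
        · exact Or.inr (by rw [(hc' e').1, (hc' e').2, hp', hp'])
      have key := proj_rtg H G p (Sum.inl ⁻¹' S) S hedge (hconn (φ u) (φ v))
      rwa [hpφ, hpφ] at key
    · set p : W → V' := fun w => if h : ∃ v, φ' v = w then h.choose else v0' with hp
      have hpφ : ∀ v, p (φ' v) = v := by
        intro v
        have h : ∃ x, φ' x = φ' v := ⟨v, rfl⟩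
        simp only [hp, dif_pos h]
        exact hφ' h.choose_spec
      have hp' : ∀ v, p (φ v) = v0' := by
        intro v
        by_cases h : ∃ x, φ' x = φ v
        · have hw : φ v = w0 := by
            have hm : φ v ∈ Set.range φ ∩ Set.range φ' := ⟨⟨v, rfl⟩, h⟩
            rwa [hmeet] at hm
          rw [hw, ← hv0', hpφ]
        · simp only [hp, dif_neg h]
      intro u v
      have hedge : ∀ f ∈ S, (∃ e ∈ Sum.inr ⁻¹' S,
          p (G.fst f) = H'.fst e ∧ p (G.snd f) = H'.snd e)
          ∨ p (G.fst f) = p (G.snd f) := by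
        rintro (e | e') hf
        · exact Or.inr (by rw [(hc e).1, (hc e).2, hp', hp'])
        · exact Or.inl ⟨e', hf, by rw [(hc' e').1, hpφ], by rw [(hc' e').2, hpφ]⟩
      have key := proj_rtg H' G p (Sum.inr ⁻¹' S) S hedge (hconn (φ' u) (φ' v))
      rwa [hpφ, hpφ] at key
  · rintro ⟨h1, h2⟩
    have key : ∀ w : W, Relation.ReflTransGen (G.Adj S) w w0 := by
      intro w
      have hw : w ∈ Set.range φ ∪ Set.range φ' := by rw [hcover]; trivial
      rcases hw with ⟨u, hu⟩ | ⟨u', hu'⟩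
      · rw [← hu, ← hv0]
        exact lift_rtg H G φ _ S (fun e he => ⟨Sum.inl e, he, (hc e).1, (hc e).2⟩)
          (h1 u v0)
      · rw [← hu', ← hv0']
        exact lift_rtg H' G φ' _ S (fun e he => ⟨Sum.inr e, he, (hc' e).1, (hc' e).2⟩)
          (h2 u' v0')
    intro u v
    exact (key u).trans (haveI : Std.Symm (G.Adj S) := ⟨fun a b h => adj_symm G S h⟩; Std.Symm.symm _ _ (key v))

end Multigraph

namespace Multigraph

variable {V E V' E' W : Type}

lemma pre_inl_disjSum [DecidableEq E] [DecidableEq E'] (A : Finset E) (B : Finset E') :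
    Sum.inl ⁻¹' (↑(A.disjSum B) : Set (E ⊕ E')) = ↑A := by
  ext x; simp

lemma pre_inr_disjSum [DecidableEq E] [DecidableEq E'] (A : Finset E) (B : Finset E') :
    Sum.inr ⁻¹' (↑(A.disjSum B) : Set (E ⊕ E')) = ↑B := by
  ext x; simp

lemma pre_inl_erase_inl [DecidableEq E] [DecidableEq E'] (A : Finset E) (B : Finset E')
    (e : E) : Sum.inl ⁻¹' (↑((A.disjSum B).erase (Sum.inl e)) : Set (E ⊕ E'))
      = ↑(A.erase e) := by
  ext x; simp [Finset.mem_erase]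

lemma pre_inr_erase_inl [DecidableEq E] [DecidableEq E'] (A : Finset E) (B : Finset E')
    (e : E) : Sum.inr ⁻¹' (↑((A.disjSum B).erase (Sum.inl e)) : Set (E ⊕ E')) = ↑B := by
  ext x; simp [Finset.mem_erase]

lemma pre_inl_erase_inr [DecidableEq E] [DecidableEq E'] (A : Finset E) (B : Finset E')
    (e : E') : Sum.inl ⁻¹' (↑((A.disjSum B).erase (Sum.inr e)) : Set (E ⊕ E')) = ↑A := by
  ext x; simp [Finset.mem_erase]

lemma pre_inr_erase_inr [DecidableEq E] [DecidableEq E'] (A : Finset E) (B : Finset E')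
    (e : E') : Sum.inr ⁻¹' (↑((A.disjSum B).erase (Sum.inr e)) : Set (E ⊕ E'))
      = ↑(B.erase e) := by
  ext x; simp [Finset.mem_erase]

theorem isSpanningTree_disjSum_iff [DecidableEq E] [DecidableEq E']
    (H : Multigraph V E) (H' : Multigraph V' E') (G : Multigraph W (E ⊕ E'))
    (hconn : ∀ S : Set (E ⊕ E'),
      G.ConnOn S ↔ H.ConnOn (Sum.inl ⁻¹' S) ∧ H'.ConnOn (Sum.inr ⁻¹' S))
    (A : Finset E) (B : Finset E') :
    G.IsSpanningTree (A.disjSum B) ↔ H.IsSpanningTree A ∧ H'.IsSpanningTree B := by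
  unfold IsSpanningTree
  constructor
  · rintro ⟨hC, hmin⟩
    have hC' := (hconn _).mp hC
    rw [pre_inl_disjSum, pre_inr_disjSum] at hC'
    refine ⟨⟨hC'.1, fun e he hbad => ?_⟩, ⟨hC'.2, fun e he hbad => ?_⟩⟩
    · refine hmin (Sum.inl e) (by simp [he]) ((hconn _).mpr ?_)
      rw [pre_inl_erase_inl, pre_inr_erase_inl]
      exact ⟨hbad, hC'.2⟩
    · refine hmin (Sum.inr e) (by simp [he]) ((hconn _).mpr ?_)
      rw [pre_inl_erase_inr, pre_inr_erase_inr]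
      exact ⟨hC'.1, hbad⟩
  · rintro ⟨⟨hA, hminA⟩, ⟨hB, hminB⟩⟩
    refine ⟨(hconn _).mpr (by rw [pre_inl_disjSum, pre_inr_disjSum]; exact ⟨hA, hB⟩), ?_⟩
    rintro (e | e) he hbad
    · have hb := (hconn _).mp hbad
      rw [pre_inl_erase_inl, pre_inr_erase_inl] at hb
      exact hminA e (by simpa using he) hb.1
    · have hb := (hconn _).mp hbad
      rw [pre_inl_erase_inr, pre_inr_erase_inr] at hb
      exact hminB e (by simpa using he) hb.2

lemma compl_disjSum [Fintype E] [DecidableEq E] [Fintype E'] [DecidableEq E']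
    (A : Finset E) (B : Finset E') :
    (A.disjSum B)ᶜ = Aᶜ.disjSum Bᶜ := by
  ext (x | x) <;> simp

end Multigraph


open Multigraph MvPolynomial in
/-- One-vertex join: if the connected graph `G` is formed from connected graphs
`H` and `H'` by identifying a single vertex (the images of `φ` and `φ'` cover
`G` and overlap in exactly one vertex `w0`), then `Ψ_G = Ψ_H · Ψ_{H'}`. -/
theorem kirchhoff_one_vertex_join {V E V' E' W : Type}
    [Fintype E] [DecidableEq E] [Fintype E'] [DecidableEq E']
    (H : Multigraph V E) (H' : Multigraph V' E') (G : Multigraph W (E ⊕ E'))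
    (φ : V → W) (φ' : V' → W) (w0 : W)
    (hφ : Function.Injective φ) (hφ' : Function.Injective φ')
    (hc : ∀ e : E, G.fst (Sum.inl e) = φ (H.fst e) ∧ G.snd (Sum.inl e) = φ (H.snd e))
    (hc' : ∀ e' : E', G.fst (Sum.inr e') = φ' (H'.fst e') ∧
      G.snd (Sum.inr e') = φ' (H'.snd e'))
    (hcover : Set.range φ ∪ Set.range φ' = Set.univ)
    (hmeet : Set.range φ ∩ Set.range φ' = {w0})
    (hG : G.ConnectedGraph) (hH : H.ConnectedGraph) (hH' : H'.ConnectedGraph) :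
    G.kirchhoff =
      rename (Sum.inl : E → E ⊕ E') H.kirchhoff *
        rename (Sum.inr : E' → E ⊕ E') H'.kirchhoff := by
  classical
  have hconnS := connOn_join_iff H H' G φ φ' w0 hφ hφ' hc hc' hcover hmeet
  have hbij : Function.Bijective (fun P : Finset E × Finset E' => P.1.disjSum P.2) := by
    constructor
    · rintro ⟨A, B⟩ ⟨A', B'⟩ h
      simp only [Finset.disjSum_inj] at h
      exact Prod.ext h.1 h.2
    · intro T
      exact ⟨(T.toLeft, T.toRight), Finset.toLeft_disjSum_toRight⟩
  rw [kirchhoff, kirchhoff, kirchhoff, map_sum, map_sum, Finset.sum_mul_sum,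
    ← hbij.sum_comp (fun T => if G.IsSpanningTree T then ∏ e ∈ Tᶜ, (X e : MvPolynomial (E ⊕ E') ℚ) else 0),
    Fintype.sum_prod_type]
  refine Finset.sum_congr rfl fun A _ => Finset.sum_congr rfl fun B _ => ?_
  rw [apply_ite (rename (Sum.inl : E → E ⊕ E')),
    apply_ite (rename (Sum.inr : E' → E ⊕ E')), map_zero, map_zero, map_prod, map_prod]
  simp only [rename_X]
  rw [ite_zero_mul_ite_zero]
  by_cases hST : H.IsSpanningTree A ∧ H'.IsSpanningTree B
  · rw [if_pos hST, if_pos ((isSpanningTree_disjSum_iff H H' G hconnS A B).mpr hST),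
      compl_disjSum, Finset.prod_disjSum]
  · rw [if_neg hST,
      if_neg (fun hh => hST ((isSpanningTree_disjSum_iff H H' G hconnS A B).mp hh))]
end

section
/- Let G be formed from graphs H and H' by identifying two vertices: a vertex pair {1,2} of H is identified with a vertex pair of H'. Then Ψ_G = Ψ_{H̄}·Ψ_{H'} + Ψ_H·Ψ_{H̄'}, where H̄ denotes H with vertices 1 and 2 identified. -/
namespace TwoCut
open Multigraph

variable {V E : Type}

/-- Reachability via edges in `S`. -/
abbrev Reach (X : Multigraph V E) (S : Set E) (u v : V) : Prop :=
  Relation.ReflTransGen (X.Adj S) u v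

lemma adj_symm {X : Multigraph V E} {S : Set E} {u v : V} (h : X.Adj S u v) : X.Adj S v u := by
  obtain ⟨e, he, h | h⟩ := h
  exacts [⟨e, he, Or.inr h⟩, ⟨e, he, Or.inl h⟩]

lemma reach_symm {X : Multigraph V E} {S : Set E} {u v : V} (h : Reach X S u v) :
    Reach X S v u := by
  induction h with
  | refl => exact .refl
  | tail _ h ih => exact Relation.ReflTransGen.head (adj_symm h) ih

lemma adj_mono {X : Multigraph V E} {S S' : Set E} (hs : S ⊆ S') {u v : V}
    (h : X.Adj S u v) : X.Adj S' u v := by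
  obtain ⟨e, he, h⟩ := h; exact ⟨e, hs he, h⟩

lemma reach_mono {X : Multigraph V E} {S S' : Set E} (hs : S ⊆ S') {u v : V}
    (h : Reach X S u v) : Reach X S' u v :=
  Relation.ReflTransGen.mono (fun _ _ => adj_mono hs) _ _ h

lemma reach_adj {X : Multigraph V E} {S : Set E} {u v : V} (h : X.Adj S u v) :
    Reach X S u v := Relation.ReflTransGen.single h

/-- Rerouting: if the endpoints of `e` are connected without `e`, then reachability
on `S` implies reachability on `S \ {e}`. -/
lemma reach_reroute {X : Multigraph V E} {S : Set E} {e : E}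
    (he : Reach X (S \ {e}) (X.fst e) (X.snd e)) {u v : V}
    (h : Reach X S u v) : Reach X (S \ {e}) u v := by
  induction h with
  | refl => exact .refl
  | tail _ hadj ih =>
    rename_i b c _
    refine ih.trans ?_
    obtain ⟨f, hf, hor⟩ := hadj
    by_cases hfe : f = e
    · subst hfe
      rcases hor with ⟨h1, h2⟩ | ⟨h1, h2⟩
      · exact h1 ▸ h2 ▸ he
      · exact h2 ▸ h1 ▸ reach_symm he
    · exact reach_adj ⟨f, ⟨hf, hfe⟩, hor⟩

/-- Bridge decomposition: any walk either avoids `e` or passes through its endpoints. -/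
lemma reach_cases {X : Multigraph V E} {S : Set E} {u v : V} (h : Reach X S u v) (e : E) :
    Reach X (S \ {e}) u v ∨
      (Reach X (S \ {e}) u (X.fst e) ∧ Reach X (S \ {e}) (X.snd e) v) ∨
      (Reach X (S \ {e}) u (X.snd e) ∧ Reach X (S \ {e}) (X.fst e) v) := by
  induction h using Relation.ReflTransGen.head_induction_on with
  | refl => exact Or.inl .refl
  | head hadj _ ih =>
    rename_i a c _
    obtain ⟨f, hf, hor⟩ := hadj
    by_cases hfe : f = e
    · subst hfe
      rcases hor with ⟨h1, h2⟩ | ⟨h1, h2⟩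
      · -- a = fst e, c = snd e
        subst h1; subst h2
        rcases ih with h | ⟨h1, h2⟩ | ⟨h1, h2⟩
        · exact Or.inr (Or.inl ⟨.refl, h⟩)
        · exact Or.inr (Or.inl ⟨.refl, h2⟩)
        · exact Or.inl h2
      · subst h1; subst h2
        rcases ih with h | ⟨h1, h2⟩ | ⟨h1, h2⟩
        · exact Or.inr (Or.inr ⟨.refl, h⟩)
        · exact Or.inl h2
        · exact Or.inr (Or.inr ⟨.refl, h2⟩)
    · have step : X.Adj (S \ {e}) a c := ⟨f, ⟨hf, hfe⟩, hor⟩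
      rcases ih with h | ⟨h1, h2⟩ | ⟨h1, h2⟩
      · exact Or.inl (Relation.ReflTransGen.head step h)
      · exact Or.inr (Or.inl ⟨Relation.ReflTransGen.head step h1, h2⟩)
      · exact Or.inr (Or.inr ⟨Relation.ReflTransGen.head step h1, h2⟩)

/-- `Rel2 X p q S x y`: `x` and `y` become connected after identifying `p` and `q`. -/
def Rel2 (X : Multigraph V E) (p q : V) (S : Set E) (x y : V) : Prop :=
  Reach X S x y ∨ (Reach X S x p ∧ Reach X S y q) ∨ (Reach X S x q ∧ Reach X S y p)

lemma rel2_mono {X : Multigraph V E} {p q : V} {S S' : Set E} (hs : S ⊆ S') {x y : V}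
    (h : Rel2 X p q S x y) : Rel2 X p q S' x y := by
  rcases h with h | ⟨h1, h2⟩ | ⟨h1, h2⟩
  · exact Or.inl (reach_mono hs h)
  · exact Or.inr (Or.inl ⟨reach_mono hs h1, reach_mono hs h2⟩)
  · exact Or.inr (Or.inr ⟨reach_mono hs h1, reach_mono hs h2⟩)

lemma rel2_symm {X : Multigraph V E} {p q : V} {S : Set E} {x y : V}
    (h : Rel2 X p q S x y) : Rel2 X p q S y x := by
  rcases h with h | ⟨h1, h2⟩ | ⟨h1, h2⟩
  · exact Or.inl (reach_symm h)
  · exact Or.inr (Or.inr ⟨h2, h1⟩)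
  · exact Or.inr (Or.inl ⟨h2, h1⟩)

lemma rel2_left {X : Multigraph V E} {p q : V} {S : Set E} {x x' y : V}
    (hx : Reach X S x x') (h : Rel2 X p q S x' y) : Rel2 X p q S x y := by
  rcases h with h | ⟨h1, h2⟩ | ⟨h1, h2⟩
  · exact Or.inl (hx.trans h)
  · exact Or.inr (Or.inl ⟨hx.trans h1, h2⟩)
  · exact Or.inr (Or.inr ⟨hx.trans h1, h2⟩)

lemma erase_erase_subset [DecidableEq E] {S : Finset E} {e e' : E} :
    (↑((S.erase e).erase e') : Set E) ⊆ ↑(S.erase e') := by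
  intro f hf
  simp only [Finset.mem_coe, Finset.mem_erase] at hf ⊢
  exact ⟨hf.1, hf.2.2⟩

/-- If `p ≠ q` are joined by a walk in `S`, then some edge of `S` lies on a cycle of
the graph with `p` and `q` identified. -/
lemma exists_cycle_edge [DecidableEq E] (X : Multigraph V E) {p q : V} (hpq : p ≠ q) :
    ∀ S : Finset E, Reach X ↑S p q →
      ∃ e ∈ S, Rel2 X p q ↑(S.erase e) (X.fst e) (X.snd e) := by
  intro S
  induction S using Finset.strongInduction with
  | _ S ih =>
    intro h
    rcases h.cases_head with heq | ⟨z, hadj, hz⟩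
    · exact absurd heq hpq
    obtain ⟨e, he, hor⟩ := hadj
    by_cases hrel : Rel2 X p q ↑(S.erase e) (X.fst e) (X.snd e)
    · exact ⟨e, he, hrel⟩
    rw [Finset.coe_erase] at hrel
    have hrec : Reach X (↑S \ {e}) p q → ∃ e' ∈ S, Rel2 X p q ↑(S.erase e') (X.fst e') (X.snd e') := by
      intro hpq'
      rw [← Finset.coe_erase] at hpq'
      obtain ⟨e', he', hr⟩ := ih (S.erase e) (Finset.erase_ssubset he) hpq'
      exact ⟨e', Finset.mem_of_mem_erase he', rel2_mono erase_erase_subset hr⟩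
    have hcases := reach_cases hz e
    rcases hor with ⟨h1, h2⟩ | ⟨h1, h2⟩
    · -- fst e = p, snd e = z
      rcases hcases with hc | ⟨hc1, hc2⟩ | ⟨hc1, hc2⟩
      · -- z ~ q without e : Rel2 (fst, snd) via (fst~p refl, snd~q)
        exact absurd (Or.inr (Or.inl ⟨h1 ▸ .refl, h2 ▸ hc⟩)) hrel
      · -- hc1 : z ~ fst e, hc2 : snd e ~ q ; snd e = z so hc2 : z ~ q
        exact absurd (Or.inr (Or.inl ⟨h1 ▸ .refl, h2 ▸ (h2 ▸ hc2 : Reach X (↑S \ {e}) z q)⟩)) hrel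
      · -- hc1 : z ~ snd e, hc2 : fst e ~ q, fst e = p : so p ~ q without e
        exact hrec (h1 ▸ hc2)
    · -- fst e = z, snd e = p
      rcases hcases with hc | ⟨hc1, hc2⟩ | ⟨hc1, hc2⟩
      · exact absurd (Or.inr (Or.inr ⟨h1 ▸ hc, h2 ▸ .refl⟩)) hrel
      · -- hc1 : z ~ fst e, hc2 : snd e ~ q : p ~ q without e
        exact hrec (h2 ▸ hc2)
      · -- hc1 : z ~ snd e = p?? hc2 : fst e ~ q, fst e = z : z ~ q without e
        exact absurd (Or.inr (Or.inr ⟨hc2, h2 ▸ .refl⟩)) hrel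

section IdentifyLemmas

variable {X : Multigraph V E} {p q : V}

lemma quot_mk_eq_iff (hpq : p ≠ q) {x y : V} :
    (Quot.mk (fun a b : V => a = p ∧ b = q) x = Quot.mk (fun a b : V => a = p ∧ b = q) y) ↔
      (x = y ∨ (x = p ∧ y = q) ∨ (x = q ∧ y = p)) := by
  constructor
  · intro h
    classical
    have hf : ∀ a b : V, (a = p ∧ b = q) → (if a = q then p else a) = (if b = q then p else b) := by
      rintro a b ⟨rfl, rfl⟩
      simp [hpq]
    have := congrArg (Quot.lift (fun z => if z = q then p else z) hf) h
    simp only [Quot.lift] at this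
    by_cases hx : x = q <;> by_cases hy : y = q <;> simp [hx, hy] at this ⊢ <;> tauto
  · rintro (rfl | ⟨rfl, rfl⟩ | ⟨rfl, rfl⟩)
    · rfl
    · exact Quot.sound ⟨rfl, rfl⟩
    · exact (Quot.sound ⟨rfl, rfl⟩).symm

lemma identify_fst (e : E) : (X.identify p q).fst e = Quot.mk _ (X.fst e) := rfl
lemma identify_snd (e : E) : (X.identify p q).snd e = Quot.mk _ (X.snd e) := rfl

lemma reach_identify_mk {S : Set E} {x y : V} (h : Reach X S x y) :
    Reach (X.identify p q) S (Quot.mk _ x) (Quot.mk _ y) := by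
  induction h with
  | refl => exact .refl
  | tail _ hadj ih =>
    refine ih.tail ?_
    obtain ⟨e, he, ⟨ha, hb⟩ | ⟨ha, hb⟩⟩ := hadj
    · exact ⟨e, he, Or.inl ⟨by rw [identify_fst, ha], by rw [identify_snd, hb]⟩⟩
    · exact ⟨e, he, Or.inr ⟨by rw [identify_fst, ha], by rw [identify_snd, hb]⟩⟩

lemma reach_identify_of_rel2 {S : Set E} {x y : V} (h : Rel2 X p q S x y) :
    Reach (X.identify p q) S (Quot.mk _ x) (Quot.mk _ y) := by
  have hmk : (Quot.mk (fun a b : V => a = p ∧ b = q) p) = Quot.mk _ q := Quot.sound ⟨rfl, rfl⟩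
  have hmk1 : Reach (X.identify p q) S (Quot.mk _ p) (Quot.mk _ q) := by
    rw [hmk]
  have hmk2 : Reach (X.identify p q) S (Quot.mk _ q) (Quot.mk _ p) := by
    rw [hmk]
  rcases h with h | ⟨h1, h2⟩ | ⟨h1, h2⟩
  · exact reach_identify_mk h
  · exact (reach_identify_mk h1).trans (hmk1.trans (reach_symm (reach_identify_mk h2)))
  · exact (reach_identify_mk h1).trans (hmk2.trans (reach_symm (reach_identify_mk h2)))

lemma rel2_of_eqpat (hx : ∀ S : Set E, True) {S : Set E} {x x₀ y : V}
    (hpat : x = x₀ ∨ (x = p ∧ x₀ = q) ∨ (x = q ∧ x₀ = p))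
    (h : Rel2 X p q S x₀ y) : Rel2 X p q S x y := by
  rcases hpat with rfl | ⟨rfl, rfl⟩ | ⟨rfl, rfl⟩
  · exact h
  · rcases h with h | ⟨hh1, hh2⟩ | ⟨hh1, hh2⟩
    · exact Or.inr (Or.inl ⟨.refl, reach_symm h⟩)
    · exact Or.inl ((reach_symm hh1).trans (reach_symm hh2))
    · exact Or.inl (reach_symm hh2)
  · rcases h with h | ⟨hh1, hh2⟩ | ⟨hh1, hh2⟩
    · exact Or.inr (Or.inr ⟨.refl, reach_symm h⟩)
    · exact Or.inl (reach_symm hh2)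
    · exact Or.inl ((reach_symm hh1).trans (reach_symm hh2))

lemma reach_identify_rel2 (hpq : p ≠ q) {S : Set E} {c d : Quot fun a b : V => a = p ∧ b = q}
    (h : Reach (X.identify p q) S c d) :
    ∀ x y : V, Quot.mk _ x = c → Quot.mk _ y = d → Rel2 X p q S x y := by
  induction h using Relation.ReflTransGen.head_induction_on with
  | refl =>
    intro x y hx hy
    have := (quot_mk_eq_iff hpq).1 (hx.trans hy.symm)
    rcases this with rfl | ⟨rfl, rfl⟩ | ⟨rfl, rfl⟩
    · exact Or.inl .refl
    · exact Or.inr (Or.inl ⟨.refl, .refl⟩)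
    · exact Or.inr (Or.inr ⟨.refl, .refl⟩)
  | head hadj _ ih =>
    intro x y hx hy
    obtain ⟨e, he, ⟨ha, hb⟩ | ⟨ha, hb⟩⟩ := hadj
    · -- Quot.mk (fst e) = current, Quot.mk (snd e) = next
      rw [identify_fst] at ha; rw [identify_snd] at hb
      have hpat := (quot_mk_eq_iff hpq).1 (hx.trans ha.symm)
      have hrest : Rel2 X p q S (X.snd e) y := ih _ _ hb hy
      have hstep : Reach X S (X.fst e) (X.snd e) := reach_adj ⟨e, he, Or.inl ⟨rfl, rfl⟩⟩
      exact rel2_of_eqpat (fun _ => trivial) hpat (rel2_left hstep hrest)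
    · rw [identify_fst] at ha; rw [identify_snd] at hb
      have hpat := (quot_mk_eq_iff hpq).1 (hx.trans hb.symm)
      have hrest : Rel2 X p q S (X.fst e) y := ih _ _ ha hy
      have hstep : Reach X S (X.snd e) (X.fst e) := reach_adj ⟨e, he, Or.inr ⟨rfl, rfl⟩⟩
      exact rel2_of_eqpat (fun _ => trivial) hpat (rel2_left hstep hrest)

lemma connOn_identify_iff (hpq : p ≠ q) {S : Set E} :
    (X.identify p q).ConnOn S ↔ ∀ x y : V, Rel2 X p q S x y := by
  constructor
  · intro h x y
    exact reach_identify_rel2 hpq (h (Quot.mk _ x) (Quot.mk _ y)) x y rfl rfl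
  · intro h c d
    induction c using Quot.ind with | _ x =>
    induction d using Quot.ind with | _ y =>
    exact reach_identify_of_rel2 (h x y)

lemma reach_identify_iff (hpq : p ≠ q) {S : Set E} {x y : V} :
    Reach (X.identify p q) S (Quot.mk _ x) (Quot.mk _ y) ↔ Rel2 X p q S x y :=
  ⟨fun h => reach_identify_rel2 hpq h x y rfl rfl, reach_identify_of_rel2⟩

end IdentifyLemmas

/-- Local characterization of spanning trees. -/
lemma isSpanningTree_iff [DecidableEq E] (X : Multigraph V E) (T : Finset E) :
    X.IsSpanningTree T ↔ X.ConnOn ↑T ∧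
      ∀ e ∈ T, ¬ Reach X ↑(T.erase e) (X.fst e) (X.snd e) := by
  refine and_congr_right fun hconn => forall₂_congr fun e he => not_congr ?_
  constructor
  · intro h
    exact h (X.fst e) (X.snd e)
  · intro h u v
    rw [Finset.coe_erase] at h ⊢
    exact reach_reroute h (hconn u v)

/-- Connectivity via the identified graph plus a link between the marked vertices. -/
lemma connOn_iff_rel2 (X : Multigraph V E) (p q : V) (S : Set E) :
    X.ConnOn S ↔ (∀ x y : V, Rel2 X p q S x y) ∧ Reach X S p q := by
  constructor
  · exact fun h => ⟨fun x y => Or.inl (h x y), h p q⟩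
  · rintro ⟨h, hpq⟩ x y
    rcases h x y with h' | ⟨h1, h2⟩ | ⟨h1, h2⟩
    · exact h'
    · exact h1.trans (hpq.trans (reach_symm h2))
    · exact h1.trans ((reach_symm hpq).trans (reach_symm h2))

section Join

variable {V' E' W : Type}
variable (H : Multigraph V E) (H' : Multigraph V' E') (G : Multigraph W (E ⊕ E'))
variable (v1 v2 : V) (u1 u2 : V') (φ : V → W) (φ' : V' → W)

/-- Reach predicate for two `φ`-side vertices. -/
def AA (S₁ : Set E) (S₂ : Set E') (x y : V) : Prop :=
  Reach H S₁ x y ∨ (Reach H' S₂ u1 u2 ∧ Rel2 H v1 v2 S₁ x y)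

/-- Reach predicate from a `φ`-side vertex to a `φ'`-side vertex. -/
def BB (S₁ : Set E) (S₂ : Set E') (x : V) (y : V') : Prop :=
  (Reach H S₁ x v1 ∧ Reach H' S₂ u1 y) ∨ (Reach H S₁ x v2 ∧ Reach H' S₂ u2 y)

/-- Reach predicate for two `φ'`-side vertices. -/
def CC (S₁ : Set E) (S₂ : Set E') (x y : V') : Prop :=
  Reach H' S₂ x y ∨ (Reach H S₁ v1 v2 ∧ Rel2 H' u1 u2 S₂ x y)

variable {H H' G v1 v2 u1 u2 φ φ'}
variable (hφ : Function.Injective φ) (hφ' : Function.Injective φ')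
  (h1 : φ v1 = φ' u1) (h2 : φ v2 = φ' u2)
  (hc : ∀ e : E, G.fst (Sum.inl e) = φ (H.fst e) ∧ G.snd (Sum.inl e) = φ (H.snd e))
  (hc' : ∀ e' : E', G.fst (Sum.inr e') = φ' (H'.fst e') ∧
    G.snd (Sum.inr e') = φ' (H'.snd e'))
  (hcover : Set.range φ ∪ Set.range φ' = Set.univ)
  (hmeet : Set.range φ ∩ Set.range φ' = {φ v1, φ v2})

include hφ hφ' h1 h2 hmeet in
lemma hub {x : V} {y' : V'} (hxy : φ x = φ' y') :
    (x = v1 ∧ y' = u1) ∨ (x = v2 ∧ y' = u2) := by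
  have hx : φ x ∈ Set.range φ ∩ Set.range φ' := ⟨⟨x, rfl⟩, ⟨y', hxy.symm⟩⟩
  rw [hmeet] at hx
  rcases hx with hx | hx
  · exact Or.inl ⟨hφ hx, hφ' ((hxy.symm.trans hx).trans h1)⟩
  · exact Or.inr ⟨hφ hx, hφ' ((hxy.symm.trans hx).trans h2)⟩

include hc in
lemma map_reach1 {S : Set (E ⊕ E')} {x y : V} (h : Reach H (Sum.inl ⁻¹' S) x y) :
    Reach G S (φ x) (φ y) := by
  induction h with
  | refl => exact .refl
  | tail _ hadj ih =>
    refine ih.tail ?_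
    obtain ⟨e, he, ⟨ha, hb⟩ | ⟨ha, hb⟩⟩ := hadj
    · exact ⟨Sum.inl e, he, Or.inl ⟨by rw [(hc e).1, ha], by rw [(hc e).2, hb]⟩⟩
    · exact ⟨Sum.inl e, he, Or.inr ⟨by rw [(hc e).1, ha], by rw [(hc e).2, hb]⟩⟩

include hc' in
lemma map_reach2 {S : Set (E ⊕ E')} {x y : V'} (h : Reach H' (Sum.inr ⁻¹' S) x y) :
    Reach G S (φ' x) (φ' y) := by
  induction h with
  | refl => exact .refl
  | tail _ hadj ih =>
    refine ih.tail ?_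
    obtain ⟨e, he, ⟨ha, hb⟩ | ⟨ha, hb⟩⟩ := hadj
    · exact ⟨Sum.inr e, he, Or.inl ⟨by rw [(hc' e).1, ha], by rw [(hc' e).2, hb]⟩⟩
    · exact ⟨Sum.inr e, he, Or.inr ⟨by rw [(hc' e).1, ha], by rw [(hc' e).2, hb]⟩⟩

include h1 h2 hc hc' in
lemma reach_of_AA {S : Set (E ⊕ E')} {x y : V}
    (h : AA H H' v1 v2 u1 u2 (Sum.inl ⁻¹' S) (Sum.inr ⁻¹' S) x y) :
    Reach G S (φ x) (φ y) := by
  rcases h with h | ⟨hs', h | ⟨ha, hb⟩ | ⟨ha, hb⟩⟩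
  · exact map_reach1 hc h
  · exact map_reach1 hc h
  · refine (map_reach1 hc ha).trans (?_ : Reach G S (φ v1) (φ y))
    rw [h1]
    refine (map_reach2 hc' hs').trans ?_
    rw [← h2]
    exact reach_symm (map_reach1 hc hb)
  · refine (map_reach1 hc ha).trans (?_ : Reach G S (φ v2) (φ y))
    rw [h2]
    refine (reach_symm (map_reach2 hc' hs')).trans ?_
    rw [← h1]
    exact reach_symm (map_reach1 hc hb)

include h1 h2 hc hc' in
lemma reach_of_BB {S : Set (E ⊕ E')} {x : V} {y : V'}
    (h : BB H H' v1 v2 u1 u2 (Sum.inl ⁻¹' S) (Sum.inr ⁻¹' S) x y) :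
    Reach G S (φ x) (φ' y) := by
  rcases h with ⟨ha, hb⟩ | ⟨ha, hb⟩
  · refine (map_reach1 hc ha).trans ?_
    rw [h1]
    exact map_reach2 hc' hb
  · refine (map_reach1 hc ha).trans ?_
    rw [h2]
    exact map_reach2 hc' hb

include h1 h2 hc hc' in
lemma reach_of_CC {S : Set (E ⊕ E')} {x y : V'}
    (h : CC H H' v1 v2 u1 u2 (Sum.inl ⁻¹' S) (Sum.inr ⁻¹' S) x y) :
    Reach G S (φ' x) (φ' y) := by
  rcases h with h | ⟨hs, h | ⟨ha, hb⟩ | ⟨ha, hb⟩⟩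
  · exact map_reach2 hc' h
  · exact map_reach2 hc' h
  · refine (map_reach2 hc' ha).trans (?_ : Reach G S (φ' u1) (φ' y))
    rw [← h1]
    refine (map_reach1 hc hs).trans ?_
    rw [h2]
    exact reach_symm (map_reach2 hc' hb)
  · refine (map_reach2 hc' ha).trans (?_ : Reach G S (φ' u2) (φ' y))
    rw [← h2]
    refine (reach_symm (map_reach1 hc hs)).trans ?_
    rw [h1]
    exact reach_symm (map_reach2 hc' hb)

lemma AA_left {S₁ : Set E} {S₂ : Set E'} {p q y : V} (hpq : Reach H S₁ p q)
    (h : AA H H' v1 v2 u1 u2 S₁ S₂ q y) : AA H H' v1 v2 u1 u2 S₁ S₂ p y := by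
  rcases h with h | ⟨hs, hrel⟩
  · exact Or.inl (hpq.trans h)
  · exact Or.inr ⟨hs, rel2_left hpq hrel⟩

lemma CC_left {S₁ : Set E} {S₂ : Set E'} {p q y : V'} (hpq : Reach H' S₂ p q)
    (h : CC H H' v1 v2 u1 u2 S₁ S₂ q y) : CC H H' v1 v2 u1 u2 S₁ S₂ p y := by
  rcases h with h | ⟨hs, hrel⟩
  · exact Or.inl (hpq.trans h)
  · exact Or.inr ⟨hs, rel2_left hpq hrel⟩

lemma BB_left {S₁ : Set E} {S₂ : Set E'} {p q : V} {y : V'} (hpq : Reach H S₁ p q)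
    (h : BB H H' v1 v2 u1 u2 S₁ S₂ q y) : BB H H' v1 v2 u1 u2 S₁ S₂ p y := by
  rcases h with ⟨ha, hb⟩ | ⟨ha, hb⟩
  · exact Or.inl ⟨hpq.trans ha, hb⟩
  · exact Or.inr ⟨hpq.trans ha, hb⟩

lemma BB_right {S₁ : Set E} {S₂ : Set E'} {x : V} {p q : V'} (hpq : Reach H' S₂ p q)
    (h : BB H H' v1 v2 u1 u2 S₁ S₂ x q) : BB H H' v1 v2 u1 u2 S₁ S₂ x p := by
  rcases h with ⟨ha, hb⟩ | ⟨ha, hb⟩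
  · exact Or.inl ⟨ha, hb.trans (reach_symm hpq)⟩
  · exact Or.inr ⟨ha, hb.trans (reach_symm hpq)⟩

include hφ hφ' h1 h2 hc hc' hmeet in
lemma reachG_P {S : Set (E ⊕ E')} {w w'' : W} (h : Reach G S w w'') :
    (∀ x y : V, φ x = w → φ y = w'' →
       AA H H' v1 v2 u1 u2 (Sum.inl ⁻¹' S) (Sum.inr ⁻¹' S) x y) ∧
    (∀ (x : V) (y' : V'), φ x = w → φ' y' = w'' →
       BB H H' v1 v2 u1 u2 (Sum.inl ⁻¹' S) (Sum.inr ⁻¹' S) x y') ∧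
    (∀ (x' : V') (y : V), φ' x' = w → φ y = w'' →
       BB H H' v1 v2 u1 u2 (Sum.inl ⁻¹' S) (Sum.inr ⁻¹' S) y x') ∧
    (∀ x' y' : V', φ' x' = w → φ' y' = w'' →
       CC H H' v1 v2 u1 u2 (Sum.inl ⁻¹' S) (Sum.inr ⁻¹' S) x' y') := by
  induction h using Relation.ReflTransGen.head_induction_on with
  | refl =>
    refine ⟨?_, ?_, ?_, ?_⟩
    · intro x y hx hy
      cases hφ (hx.trans hy.symm)
      exact Or.inl .refl
    · intro x y' hx hy'
      rcases hub hφ hφ' h1 h2 hmeet (hx.trans hy'.symm) with ⟨rfl, rfl⟩ | ⟨rfl, rfl⟩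
      · exact Or.inl ⟨.refl, .refl⟩
      · exact Or.inr ⟨.refl, .refl⟩
    · intro x' y hx' hy
      rcases hub hφ hφ' h1 h2 hmeet (hy.trans hx'.symm) with ⟨rfl, rfl⟩ | ⟨rfl, rfl⟩
      · exact Or.inl ⟨.refl, .refl⟩
      · exact Or.inr ⟨.refl, .refl⟩
    · intro x' y' hx' hy'
      cases hφ' (hx'.trans hy'.symm)
      exact Or.inl .refl
  | head hadj _ ih =>
    rename_i a c _
    obtain ⟨e, he, hor⟩ := hadj
    cases e with
    | inl e₁ =>
      have key : ∃ p q : V, φ p = a ∧ φ q = c ∧ Reach H (Sum.inl ⁻¹' S) p q := by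
        rcases hor with ⟨ha, hb⟩ | ⟨ha, hb⟩
        · exact ⟨H.fst e₁, H.snd e₁, (hc e₁).1.symm.trans ha, (hc e₁).2.symm.trans hb,
            reach_adj ⟨e₁, he, Or.inl ⟨rfl, rfl⟩⟩⟩
        · exact ⟨H.snd e₁, H.fst e₁, (hc e₁).2.symm.trans hb, (hc e₁).1.symm.trans ha,
            reach_adj ⟨e₁, he, Or.inr ⟨rfl, rfl⟩⟩⟩
      obtain ⟨p, q, hpa, hqc, hpq⟩ := key
      refine ⟨?_, ?_, ?_, ?_⟩
      · intro x y hx hy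
        cases hφ (hx.trans hpa.symm)
        exact AA_left hpq (ih.1 q y hqc hy)
      · intro x y' hx hy'
        cases hφ (hx.trans hpa.symm)
        exact BB_left hpq (ih.2.1 q y' hqc hy')
      · intro x' y hx' hy
        have hA := ih.1 q y hqc hy
        rcases hub hφ hφ' h1 h2 hmeet (hpa.trans hx'.symm) with ⟨rfl, rfl⟩ | ⟨rfl, rfl⟩
        · rcases hA with hq | ⟨hs', hq | ⟨ha, hb⟩ | ⟨ha, hb⟩⟩
          · exact Or.inl ⟨(reach_symm hq).trans (reach_symm hpq), .refl⟩
          · exact Or.inl ⟨(reach_symm hq).trans (reach_symm hpq), .refl⟩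
          · exact Or.inr ⟨hb, reach_symm hs'⟩
          · exact Or.inl ⟨hb, .refl⟩
        · rcases hA with hq | ⟨hs', hq | ⟨ha, hb⟩ | ⟨ha, hb⟩⟩
          · exact Or.inr ⟨(reach_symm hq).trans (reach_symm hpq), .refl⟩
          · exact Or.inr ⟨(reach_symm hq).trans (reach_symm hpq), .refl⟩
          · exact Or.inr ⟨hb, .refl⟩
          · exact Or.inl ⟨hb, hs'⟩
      · intro x' y' hx' hy'
        have hB := ih.2.1 q y' hqc hy'
        rcases hub hφ hφ' h1 h2 hmeet (hpa.trans hx'.symm) with ⟨rfl, rfl⟩ | ⟨rfl, rfl⟩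
        · rcases hB with ⟨ha, hb⟩ | ⟨ha, hb⟩
          · exact Or.inl hb
          · exact Or.inr ⟨hpq.trans ha, Or.inr (Or.inl ⟨.refl, reach_symm hb⟩)⟩
        · rcases hB with ⟨ha, hb⟩ | ⟨ha, hb⟩
          · exact Or.inr ⟨reach_symm (hpq.trans ha), Or.inr (Or.inr ⟨.refl, reach_symm hb⟩)⟩
          · exact Or.inl hb
    | inr e₂ =>
      have key : ∃ p q : V', φ' p = a ∧ φ' q = c ∧ Reach H' (Sum.inr ⁻¹' S) p q := by
        rcases hor with ⟨ha, hb⟩ | ⟨ha, hb⟩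
        · exact ⟨H'.fst e₂, H'.snd e₂, (hc' e₂).1.symm.trans ha, (hc' e₂).2.symm.trans hb,
            reach_adj ⟨e₂, he, Or.inl ⟨rfl, rfl⟩⟩⟩
        · exact ⟨H'.snd e₂, H'.fst e₂, (hc' e₂).2.symm.trans hb, (hc' e₂).1.symm.trans ha,
            reach_adj ⟨e₂, he, Or.inr ⟨rfl, rfl⟩⟩⟩
      obtain ⟨p, q, hpa, hqc, hpq⟩ := key
      refine ⟨?_, ?_, ?_, ?_⟩
      · intro x y hx hy
        have hB := ih.2.2.1 q y hqc hy
        rcases hub hφ hφ' h1 h2 hmeet (hx.trans hpa.symm) with ⟨rfl, rfl⟩ | ⟨rfl, rfl⟩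
        · rcases hB with ⟨ha, hb⟩ | ⟨ha, hb⟩
          · exact Or.inl (reach_symm ha)
          · exact Or.inr ⟨hpq.trans (reach_symm hb), Or.inr (Or.inl ⟨.refl, ha⟩)⟩
        · rcases hB with ⟨ha, hb⟩ | ⟨ha, hb⟩
          · exact Or.inr ⟨hb.trans (reach_symm hpq), Or.inr (Or.inr ⟨.refl, ha⟩)⟩
          · exact Or.inl (reach_symm ha)
      · intro x y' hx hy'
        have hC := ih.2.2.2 q y' hqc hy'
        rcases hub hφ hφ' h1 h2 hmeet (hx.trans hpa.symm) with ⟨rfl, rfl⟩ | ⟨rfl, rfl⟩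
        · rcases hC with hq | ⟨hs, hq | ⟨ha, hb⟩ | ⟨ha, hb⟩⟩
          · exact Or.inl ⟨.refl, hpq.trans hq⟩
          · exact Or.inl ⟨.refl, hpq.trans hq⟩
          · exact Or.inr ⟨hs, reach_symm hb⟩
          · exact Or.inl ⟨.refl, reach_symm hb⟩
        · rcases hC with hq | ⟨hs, hq | ⟨ha, hb⟩ | ⟨ha, hb⟩⟩
          · exact Or.inr ⟨.refl, hpq.trans hq⟩
          · exact Or.inr ⟨.refl, hpq.trans hq⟩
          · exact Or.inr ⟨.refl, reach_symm hb⟩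
          · exact Or.inl ⟨reach_symm hs, reach_symm hb⟩
      · intro x' y hx' hy
        cases hφ' (hx'.trans hpa.symm)
        exact BB_right hpq (ih.2.2.1 q y hqc hy)
      · intro x' y' hx' hy'
        cases hφ' (hx'.trans hpa.symm)
        exact CC_left hpq (ih.2.2.2 q y' hqc hy')

include hφ hφ' h1 h2 hc hc' hmeet in
lemma reachG_iff_AA {S : Set (E ⊕ E')} {x y : V} :
    Reach G S (φ x) (φ y) ↔ AA H H' v1 v2 u1 u2 (Sum.inl ⁻¹' S) (Sum.inr ⁻¹' S) x y :=
  ⟨fun h => (reachG_P hφ hφ' h1 h2 hc hc' hmeet h).1 x y rfl rfl,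
   reach_of_AA h1 h2 hc hc'⟩

include hφ hφ' h1 h2 hc hc' hmeet in
lemma reachG_iff_CC {S : Set (E ⊕ E')} {x y : V'} :
    Reach G S (φ' x) (φ' y) ↔ CC H H' v1 v2 u1 u2 (Sum.inl ⁻¹' S) (Sum.inr ⁻¹' S) x y :=
  ⟨fun h => (reachG_P hφ hφ' h1 h2 hc hc' hmeet h).2.2.2 x y rfl rfl,
   reach_of_CC h1 h2 hc hc'⟩

lemma AA_of {S₁ : Set E} {S₂ : Set E'} {x y : V}
    (hrel : Rel2 H v1 v2 S₁ x y)
    (hs : Reach H S₁ v1 v2 ∨ Reach H' S₂ u1 u2) :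
    AA H H' v1 v2 u1 u2 S₁ S₂ x y := by
  rcases hrel with h | ⟨ha, hb⟩ | ⟨ha, hb⟩
  · exact Or.inl h
  · rcases hs with hs | hs
    · exact Or.inl ((ha.trans hs).trans (reach_symm hb))
    · exact Or.inr ⟨hs, Or.inr (Or.inl ⟨ha, hb⟩)⟩
  · rcases hs with hs | hs
    · exact Or.inl ((ha.trans (reach_symm hs)).trans (reach_symm hb))
    · exact Or.inr ⟨hs, Or.inr (Or.inr ⟨ha, hb⟩)⟩

lemma CC_of {S₁ : Set E} {S₂ : Set E'} {x y : V'}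
    (hrel : Rel2 H' u1 u2 S₂ x y)
    (hs : Reach H S₁ v1 v2 ∨ Reach H' S₂ u1 u2) :
    CC H H' v1 v2 u1 u2 S₁ S₂ x y := by
  rcases hrel with h | ⟨ha, hb⟩ | ⟨ha, hb⟩
  · exact Or.inl h
  · rcases hs with hs | hs
    · exact Or.inr ⟨hs, Or.inr (Or.inl ⟨ha, hb⟩)⟩
    · exact Or.inl ((ha.trans hs).trans (reach_symm hb))
  · rcases hs with hs | hs
    · exact Or.inr ⟨hs, Or.inr (Or.inr ⟨ha, hb⟩)⟩
    · exact Or.inl ((ha.trans (reach_symm hs)).trans (reach_symm hb))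

lemma BB_of {S₁ : Set E} {S₂ : Set E'} {x : V} {y : V'}
    (hrel1 : Rel2 H v1 v2 S₁ x v1) (hrel2 : Rel2 H' u1 u2 S₂ u1 y)
    (hs : Reach H S₁ v1 v2 ∨ Reach H' S₂ u1 u2) :
    BB H H' v1 v2 u1 u2 S₁ S₂ x y := by
  have hx : Reach H S₁ x v1 ∨ Reach H S₁ x v2 := by
    rcases hrel1 with h | ⟨ha, hb⟩ | ⟨ha, hb⟩
    · exact Or.inl h
    · exact Or.inl ha
    · exact Or.inr ha
  have hy : Reach H' S₂ u1 y ∨ Reach H' S₂ u2 y := by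
    rcases hrel2 with h | ⟨ha, hb⟩ | ⟨ha, hb⟩
    · exact Or.inl h
    · exact Or.inr (reach_symm hb)
    · exact Or.inl (reach_symm hb)
  rcases hx with hx | hx <;> rcases hy with hy | hy
  · exact Or.inl ⟨hx, hy⟩
  · rcases hs with hs | hs
    · exact Or.inr ⟨hx.trans hs, hy⟩
    · exact Or.inl ⟨hx, hs.trans hy⟩
  · rcases hs with hs | hs
    · exact Or.inl ⟨hx.trans (reach_symm hs), hy⟩
    · exact Or.inr ⟨hx, (reach_symm hs).trans hy⟩
  · exact Or.inr ⟨hx, hy⟩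

include hφ hφ' h1 h2 hc hc' hcover hmeet in
lemma connG_iff {S : Set (E ⊕ E')} :
    G.ConnOn S ↔
      ((∀ x y : V, Rel2 H v1 v2 (Sum.inl ⁻¹' S) x y) ∧
       (∀ x y : V', Rel2 H' u1 u2 (Sum.inr ⁻¹' S) x y) ∧
       (Reach H (Sum.inl ⁻¹' S) v1 v2 ∨ Reach H' (Sum.inr ⁻¹' S) u1 u2)) := by
  constructor
  · intro h
    refine ⟨?_, ?_, ?_⟩
    · intro x y
      rcases (reachG_P hφ hφ' h1 h2 hc hc' hmeet (h (φ x) (φ y))).1 x y rfl rfl with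
        h' | ⟨_, hrel⟩
      · exact Or.inl h'
      · exact hrel
    · intro x y
      rcases (reachG_P hφ hφ' h1 h2 hc hc' hmeet (h (φ' x) (φ' y))).2.2.2 x y rfl rfl with
        h' | ⟨_, hrel⟩
      · exact Or.inl h'
      · exact hrel
    · rcases (reachG_P hφ hφ' h1 h2 hc hc' hmeet (h (φ v1) (φ' u2))).2.1 v1 u2 rfl rfl with
        ⟨ha, hb⟩ | ⟨ha, hb⟩
      · exact Or.inr hb
      · exact Or.inl ha
  · rintro ⟨hr1, hr2, hs⟩ w w'
    have hw : ∀ z : W, (∃ x : V, φ x = z) ∨ (∃ x' : V', φ' x' = z) := by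
      intro z
      have : z ∈ Set.range φ ∪ Set.range φ' := by rw [hcover]; trivial
      exact this
    rcases hw w with ⟨x, rfl⟩ | ⟨x, rfl⟩ <;> rcases hw w' with ⟨y, rfl⟩ | ⟨y, rfl⟩
    · exact reach_of_AA h1 h2 hc hc' (AA_of (hr1 x y) hs)
    · exact reach_of_BB h1 h2 hc hc' (BB_of (hr1 x v1) (hr2 u1 y) hs)
    · exact reach_symm (reach_of_BB h1 h2 hc hc' (BB_of (hr1 y v1) (hr2 u1 x) hs))
    · exact reach_of_CC h1 h2 hc hc' (CC_of (hr2 x y) hs)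

end Join

section STUnfold

variable {V' E' : Type} [DecidableEq E] [DecidableEq E']

lemma preim_inl (T : Finset (E ⊕ E')) :
    Sum.inl ⁻¹' (↑T : Set (E ⊕ E')) = ↑T.toLeft := by
  ext e; simp

lemma preim_inr (T : Finset (E ⊕ E')) :
    Sum.inr ⁻¹' (↑T : Set (E ⊕ E')) = ↑T.toRight := by
  ext e; simp

lemma preim_inl_erase_inl (T : Finset (E ⊕ E')) (e : E) :
    Sum.inl ⁻¹' (↑(T.erase (Sum.inl e)) : Set (E ⊕ E')) = ↑(T.toLeft.erase e) := by
  ext f; simp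

lemma preim_inr_erase_inl (T : Finset (E ⊕ E')) (e : E) :
    Sum.inr ⁻¹' (↑(T.erase (Sum.inl e)) : Set (E ⊕ E')) = ↑T.toRight := by
  ext f; simp

lemma preim_inl_erase_inr (T : Finset (E ⊕ E')) (e : E') :
    Sum.inl ⁻¹' (↑(T.erase (Sum.inr e)) : Set (E ⊕ E')) = ↑T.toLeft := by
  ext f; simp

lemma preim_inr_erase_inr (T : Finset (E ⊕ E')) (e : E') :
    Sum.inr ⁻¹' (↑(T.erase (Sum.inr e)) : Set (E ⊕ E')) = ↑(T.toRight.erase e) := by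
  ext f; simp

/-- Unfolded form of being a spanning tree of `X`. -/
lemma st_plain_iff (X : Multigraph V E) (p q : V) (T : Finset E) :
    X.IsSpanningTree T ↔
      ((∀ x y : V, Rel2 X p q ↑T x y) ∧ Reach X ↑T p q ∧
        ∀ e ∈ T, ¬ Reach X ↑(T.erase e) (X.fst e) (X.snd e)) := by
  rw [isSpanningTree_iff, connOn_iff_rel2 X p q]
  tauto

/-- Unfolded form of being a spanning tree of the identification `X̄`. -/
lemma st_ident_iff (X : Multigraph V E) {p q : V} (hpq : p ≠ q) (T : Finset E) :
    (X.identify p q).IsSpanningTree T ↔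
      ((∀ x y : V, Rel2 X p q ↑T x y) ∧
        ∀ e ∈ T, ¬ Rel2 X p q ↑(T.erase e) (X.fst e) (X.snd e)) := by
  rw [isSpanningTree_iff, connOn_identify_iff hpq]
  refine and_congr_right fun _ => forall₂_congr fun e he => not_congr ?_
  rw [identify_fst, identify_snd, reach_identify_iff hpq]

/-- A set cannot be simultaneously a spanning tree of `X` and of `X̄`. -/
lemma not_st_both (X : Multigraph V E) {p q : V} (hpq : p ≠ q) (T : Finset E) :
    ¬ (X.IsSpanningTree T ∧ (X.identify p q).IsSpanningTree T) := by
  rintro ⟨hA, hB⟩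
  have hs : Reach X ↑T p q := hA.1 p q
  obtain ⟨e, he, hrel⟩ := exists_cycle_edge X hpq T hs
  exact ((st_ident_iff X hpq T).1 hB).2 e he hrel

end STUnfold

section JoinST

variable {V' E' W : Type} [DecidableEq E] [DecidableEq E']
variable {H : Multigraph V E} {H' : Multigraph V' E'} {G : Multigraph W (E ⊕ E')}
variable {v1 v2 : V} {u1 u2 : V'} {φ : V → W} {φ' : V' → W}
variable (hv : v1 ≠ v2) (hu : u1 ≠ u2)
  (hφ : Function.Injective φ) (hφ' : Function.Injective φ')
  (h1 : φ v1 = φ' u1) (h2 : φ v2 = φ' u2)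
  (hc : ∀ e : E, G.fst (Sum.inl e) = φ (H.fst e) ∧ G.snd (Sum.inl e) = φ (H.snd e))
  (hc' : ∀ e' : E', G.fst (Sum.inr e') = φ' (H'.fst e') ∧
    G.snd (Sum.inr e') = φ' (H'.snd e'))
  (hcover : Set.range φ ∪ Set.range φ' = Set.univ)
  (hmeet : Set.range φ ∩ Set.range φ' = {φ v1, φ v2})

include hφ hφ' h1 h2 hc hc' hcover hmeet in
lemma stG_iff (T : Finset (E ⊕ E')) :
    G.IsSpanningTree T ↔
      ((∀ x y : V, Rel2 H v1 v2 ↑T.toLeft x y) ∧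
       (∀ x y : V', Rel2 H' u1 u2 ↑T.toRight x y) ∧
       (Reach H ↑T.toLeft v1 v2 ∨ Reach H' ↑T.toRight u1 u2) ∧
       (∀ e ∈ T.toLeft, ¬ AA H H' v1 v2 u1 u2 ↑(T.toLeft.erase e) ↑T.toRight
          (H.fst e) (H.snd e)) ∧
       (∀ e ∈ T.toRight, ¬ CC H H' v1 v2 u1 u2 ↑T.toLeft ↑(T.toRight.erase e)
          (H'.fst e) (H'.snd e))) := by
  rw [isSpanningTree_iff, connG_iff hφ hφ' h1 h2 hc hc' hcover hmeet,
    preim_inl, preim_inr]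
  have hAC : (∀ e ∈ T, ¬ Reach G ↑(T.erase e) (G.fst e) (G.snd e)) ↔
      ((∀ e ∈ T.toLeft, ¬ AA H H' v1 v2 u1 u2 ↑(T.toLeft.erase e) ↑T.toRight
          (H.fst e) (H.snd e)) ∧
       (∀ e ∈ T.toRight, ¬ CC H H' v1 v2 u1 u2 ↑T.toLeft ↑(T.toRight.erase e)
          (H'.fst e) (H'.snd e))) := by
    constructor
    · intro hac
      constructor
      · intro e he
        have := hac (Sum.inl e) (by simpa using he)
        rw [(hc e).1, (hc e).2, reachG_iff_AA hφ hφ' h1 h2 hc hc' hmeet,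
          preim_inl_erase_inl, preim_inr_erase_inl] at this
        exact this
      · intro e he
        have := hac (Sum.inr e) (by simpa using he)
        rw [(hc' e).1, (hc' e).2, reachG_iff_CC hφ hφ' h1 h2 hc hc' hmeet,
          preim_inl_erase_inr, preim_inr_erase_inr] at this
        exact this
    · rintro ⟨hl, hr⟩ e he
      cases e with
      | inl e =>
        rw [(hc e).1, (hc e).2, reachG_iff_AA hφ hφ' h1 h2 hc hc' hmeet,
          preim_inl_erase_inl, preim_inr_erase_inl]
        exact hl e (by simpa using he)
      | inr e =>
        rw [(hc' e).1, (hc' e).2, reachG_iff_CC hφ hφ' h1 h2 hc hc' hmeet,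
          preim_inl_erase_inr, preim_inr_erase_inr]
        exact hr e (by simpa using he)
  rw [hAC]
  tauto

include hv hu hφ hφ' h1 h2 hc hc' hcover hmeet in
/-- The spanning-tree splitting theorem. -/
lemma stG_split (T : Finset (E ⊕ E')) :
    G.IsSpanningTree T ↔
      ((H.IsSpanningTree T.toLeft ∧ (H'.identify u1 u2).IsSpanningTree T.toRight) ∨
       ((H.identify v1 v2).IsSpanningTree T.toLeft ∧ H'.IsSpanningTree T.toRight)) := by
  rw [stG_iff hφ hφ' h1 h2 hc hc' hcover hmeet, st_plain_iff H v1 v2,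
    st_plain_iff H' u1 u2, st_ident_iff H hv, st_ident_iff H' hu]
  constructor
  · rintro ⟨hr1, hr2, hs, hacl, hacr⟩
    by_cases hs' : Reach H' ↑T.toRight u1 u2
    · refine Or.inr ⟨⟨hr1, fun e he hrel => hacl e he (Or.inr ⟨hs', hrel⟩)⟩,
        hr2, hs', fun e he hreach => hacr e he (Or.inl hreach)⟩
    · have hs1 : Reach H ↑T.toLeft v1 v2 := hs.resolve_right hs'
      refine Or.inl ⟨⟨hr1, hs1, fun e he hreach => hacl e he (Or.inl hreach)⟩,
        hr2, fun e he hrel => hacr e he (Or.inr ⟨hs1, hrel⟩)⟩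
  · rintro (⟨⟨hr1, hs1, hacl⟩, hr2, hacr⟩ | ⟨⟨hr1, hacl⟩, hr2, hs2, hacr⟩)
    · have hns' : ¬ Reach H' ↑T.toRight u1 u2 := by
        intro hs'
        obtain ⟨e, he, hrel⟩ := exists_cycle_edge H' hu T.toRight hs'
        exact hacr e he hrel
      refine ⟨hr1, hr2, Or.inl hs1, ?_, ?_⟩
      · rintro e he (hreach | ⟨hs', _⟩)
        · exact hacl e he hreach
        · exact hns' hs'
      · rintro e he (hreach | ⟨_, hrel⟩)
        · exact hacr e he (Or.inl hreach)
        · exact hacr e he hrel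
    · have hns : ¬ Reach H ↑T.toLeft v1 v2 := by
        intro hs
        obtain ⟨e, he, hrel⟩ := exists_cycle_edge H hv T.toLeft hs
        exact hacl e he hrel
      refine ⟨hr1, hr2, Or.inr hs2, ?_, ?_⟩
      · rintro e he (hreach | ⟨_, hrel⟩)
        · exact hacl e he (Or.inl hreach)
        · exact hacl e he hrel
      · rintro e he (hreach | ⟨hs, _⟩)
        · exact hacr e he hreach
        · exact hns hs

include hv in
lemma stG_not_both (T : Finset (E ⊕ E')) :
    ¬ ((H.IsSpanningTree T.toLeft ∧ (H'.identify u1 u2).IsSpanningTree T.toRight) ∧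
       ((H.identify v1 v2).IsSpanningTree T.toLeft ∧ H'.IsSpanningTree T.toRight)) := by
  rintro ⟨⟨hA, _⟩, ⟨hB, _⟩⟩
  exact not_st_both H hv T.toLeft ⟨hA, hB⟩

end JoinST

end TwoCut


open Multigraph MvPolynomial in
/-- Two-vertex join formula: if `G` is formed from `H` and `H'` by identifying
the vertex pair `{v1, v2}` of `H` with the pair `{u1, u2}` of `H'`, then
`Ψ_G = Ψ_{H̄}·Ψ_{H'} + Ψ_H·Ψ_{H̄'}`, where the bar denotes identifying the two
marked vertices. -/
theorem kirchhoff_two_vertex_join {V E V' E' W : Type}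
    [Fintype E] [DecidableEq E] [Fintype E'] [DecidableEq E']
    (H : Multigraph V E) (H' : Multigraph V' E') (G : Multigraph W (E ⊕ E'))
    (v1 v2 : V) (u1 u2 : V') (hv : v1 ≠ v2) (hu : u1 ≠ u2)
    (φ : V → W) (φ' : V' → W)
    (hφ : Function.Injective φ) (hφ' : Function.Injective φ')
    (h1 : φ v1 = φ' u1) (h2 : φ v2 = φ' u2)
    (hc : ∀ e : E, G.fst (Sum.inl e) = φ (H.fst e) ∧ G.snd (Sum.inl e) = φ (H.snd e))
    (hc' : ∀ e' : E', G.fst (Sum.inr e') = φ' (H'.fst e') ∧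
      G.snd (Sum.inr e') = φ' (H'.snd e'))
    (hcover : Set.range φ ∪ Set.range φ' = Set.univ)
    (hmeet : Set.range φ ∩ Set.range φ' = {φ v1, φ v2}) :
    G.kirchhoff =
      rename (Sum.inl : E → E ⊕ E') (H.identify v1 v2).kirchhoff *
          rename (Sum.inr : E' → E ⊕ E') H'.kirchhoff
        + rename (Sum.inl : E → E ⊕ E') H.kirchhoff *
          rename (Sum.inr : E' → E ⊕ E') (H'.identify u1 u2).kirchhoff := by
  classical
  have hsplit := fun T => TwoCut.stG_split hv hu hφ hφ' h1 h2 hc hc' hcover hmeet T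
  have hexcl : ∀ A : Finset E, ¬ (H.IsSpanningTree A ∧ (H.identify v1 v2).IsSpanningTree A) :=
    fun A => TwoCut.not_st_both H hv A
  -- the bijection between edge subsets of `G` and pairs of edge subsets
  let eqv : Finset E × Finset E' ≃ Finset (E ⊕ E') :=
    { toFun := fun p => p.1.disjSum p.2
      invFun := fun T => (T.toLeft, T.toRight)
      left_inv := fun p => by simp
      right_inv := fun T => Finset.toLeft_disjSum_toRight }
  have hcompl : ∀ (A : Finset E) (B : Finset E'), (A.disjSum B)ᶜ = Aᶜ.disjSum Bᶜ := by
    intro A B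
    ext x
    cases x <;> simp
  -- monomials
  set mL : Finset E → MvPolynomial (E ⊕ E') ℚ :=
    fun A => ∏ e ∈ Aᶜ, X (Sum.inl e) with hmL
  set mR : Finset E' → MvPolynomial (E ⊕ E') ℚ :=
    fun B => ∏ e ∈ Bᶜ, X (Sum.inr e) with hmR
  have hterm : ∀ (A : Finset E) (B : Finset E'),
      (if G.IsSpanningTree (A.disjSum B) then ∏ e ∈ (A.disjSum B)ᶜ, (X e : MvPolynomial (E ⊕ E') ℚ) else 0) =
        (if H.IsSpanningTree A then mL A else 0) *
          (if (H'.identify u1 u2).IsSpanningTree B then mR B else 0) +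
        (if (H.identify v1 v2).IsSpanningTree A then mL A else 0) *
          (if H'.IsSpanningTree B then mR B else 0) := by
    intro A B
    have hm : ∏ e ∈ (A.disjSum B)ᶜ, (X e : MvPolynomial (E ⊕ E') ℚ) = mL A * mR B := by
      rw [hcompl, Finset.prod_disjSum]
    have hsp := hsplit (A.disjSum B)
    rw [Finset.toLeft_disjSum, Finset.toRight_disjSum] at hsp
    by_cases c1 : H.IsSpanningTree A ∧ (H'.identify u1 u2).IsSpanningTree B <;>
      by_cases c2 : (H.identify v1 v2).IsSpanningTree A ∧ H'.IsSpanningTree B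
    · exact absurd ⟨c1.1, c2.1⟩ (hexcl A)
    · rw [if_pos (hsp.2 (Or.inl c1)), hm, if_pos c1.1, if_pos c1.2]
      have h2' : ((if (H.identify v1 v2).IsSpanningTree A then mL A else 0) *
          (if H'.IsSpanningTree B then mR B else 0)) = 0 := by
        rcases not_and_or.1 c2 with hc | hc
        · rw [if_neg hc, zero_mul]
        · rw [if_neg hc, mul_zero]
      rw [h2', add_zero]
    · rw [if_pos (hsp.2 (Or.inr c2)), hm, if_pos c2.1, if_pos c2.2]
      have h1' : ((if H.IsSpanningTree A then mL A else 0) *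
          (if (H'.identify u1 u2).IsSpanningTree B then mR B else 0)) = 0 := by
        rcases not_and_or.1 c1 with hc | hc
        · rw [if_neg hc, zero_mul]
        · rw [if_neg hc, mul_zero]
      rw [h1', zero_add]
    · rw [if_neg (fun h => (hsp.1 h).elim c1 c2)]
      have h1' : ((if H.IsSpanningTree A then mL A else 0) *
          (if (H'.identify u1 u2).IsSpanningTree B then mR B else 0)) = 0 := by
        rcases not_and_or.1 c1 with hc | hc
        · rw [if_neg hc, zero_mul]
        · rw [if_neg hc, mul_zero]
      have h2' : ((if (H.identify v1 v2).IsSpanningTree A then mL A else 0) *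
          (if H'.IsSpanningTree B then mR B else 0)) = 0 := by
        rcases not_and_or.1 c2 with hc | hc
        · rw [if_neg hc, zero_mul]
        · rw [if_neg hc, mul_zero]
      rw [h1', h2', add_zero]
  have hren1 : ∀ (X1 : Multigraph V E),
      rename (Sum.inl : E → E ⊕ E') X1.kirchhoff =
        ∑ A : Finset E, if X1.IsSpanningTree A then mL A else 0 := by
    intro X1
    rw [Multigraph.kirchhoff, map_sum]
    refine Finset.sum_congr rfl fun A _ => ?_
    rw [apply_ite (rename (Sum.inl : E → E ⊕ E')), map_zero, map_prod]
    simp [hmL]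
  have hren1' : ∀ (X1 : Multigraph (Quot fun x y : V => x = v1 ∧ y = v2) E),
      rename (Sum.inl : E → E ⊕ E') X1.kirchhoff =
        ∑ A : Finset E, if X1.IsSpanningTree A then mL A else 0 := by
    intro X1
    rw [Multigraph.kirchhoff, map_sum]
    refine Finset.sum_congr rfl fun A _ => ?_
    rw [apply_ite (rename (Sum.inl : E → E ⊕ E')), map_zero, map_prod]
    simp [hmL]
  have hren2 : ∀ (X2 : Multigraph V' E'),
      rename (Sum.inr : E' → E ⊕ E') X2.kirchhoff =
        ∑ B : Finset E', if X2.IsSpanningTree B then mR B else 0 := by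
    intro X2
    rw [Multigraph.kirchhoff, map_sum]
    refine Finset.sum_congr rfl fun B _ => ?_
    rw [apply_ite (rename (Sum.inr : E' → E ⊕ E')), map_zero, map_prod]
    simp [hmR]
  have hren2' : ∀ (X2 : Multigraph (Quot fun x y : V' => x = u1 ∧ y = u2) E'),
      rename (Sum.inr : E' → E ⊕ E') X2.kirchhoff =
        ∑ B : Finset E', if X2.IsSpanningTree B then mR B else 0 := by
    intro X2
    rw [Multigraph.kirchhoff, map_sum]
    refine Finset.sum_congr rfl fun B _ => ?_
    rw [apply_ite (rename (Sum.inr : E' → E ⊕ E')), map_zero, map_prod]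
    simp [hmR]
  rw [hren1, hren1', hren2, hren2']
  rw [Multigraph.kirchhoff]
  rw [← Fintype.sum_equiv eqv
    (fun p => if G.IsSpanningTree (p.1.disjSum p.2) then
      ∏ e ∈ (p.1.disjSum p.2)ᶜ, (X e : MvPolynomial (E ⊕ E') ℚ) else 0)
    (fun T => if G.IsSpanningTree T then ∏ e ∈ Tᶜ, (X e : MvPolynomial (E ⊕ E') ℚ) else 0)
    (fun p => rfl)]
  rw [Fintype.sum_prod_type]
  simp_rw [hterm]
  simp_rw [Finset.sum_add_distrib]
  rw [← Finset.sum_mul_sum, ← Finset.sum_mul_sum]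
  ring
end

section
/- Let H and H' be source-terminal graphs with disjoint edge sets. Then for the parallel join G = H ⋆ H' (identifying sources and identifying terminals) one has Ψ_G = Ψ_H·Φ_{H'} + Φ_H·Ψ_{H'} and Φ_G = Φ_H·Φ_{H'}, where Φ_X denotes the Kirchhoff polynomial of X with source and terminal identified. -/
namespace Multigraph

variable {V E V' E' : Type}

/-- Parallel join of two source-terminal graphs: identify the two sources and
the two terminals. -/
def parallelJoin (H : Multigraph V E) (s t : V) (H' : Multigraph V' E') (s' t' : V') :
    Multigraph
      (Quot fun a b : V ⊕ V' =>
        (a = Sum.inl s ∧ b = Sum.inr s') ∨ (a = Sum.inl t ∧ b = Sum.inr t'))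
      (E ⊕ E') :=
  ⟨fun e => Quot.mk _ (Sum.elim (fun a => (Sum.inl (H.fst a) : V ⊕ V'))
      (fun b => Sum.inr (H'.fst b)) e),
   fun e => Quot.mk _ (Sum.elim (fun a => (Sum.inl (H.snd a) : V ⊕ V'))
      (fun b => Sum.inr (H'.snd b)) e)⟩

/-- The polynomial `Φ`: the Kirchhoff polynomial of the graph with source and
terminal identified (the second Symanzik polynomial). -/
noncomputable def breaker (H : Multigraph V E) [Fintype E] [DecidableEq E] (s t : V) :
    MvPolynomial E ℚ :=
  (H.identify s t).kirchhoff

end Multigraph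

namespace MGAux

open Relation Multigraph Function

variable {V E W V' E' : Type}

lemma rtg_mono_rtg {α : Type*} {r p : α → α → Prop}
    (h : ∀ x y, r x y → ReflTransGen p x y) {x y : α}
    (hr : ReflTransGen r x y) : ReflTransGen p x y := by
  have h2 : ReflTransGen (ReflTransGen p) x y := ReflTransGen.mono h _ _ hr
  rwa [Relation.reflTransGen_idem] at h2

lemma adj_symm {G : Multigraph V E} {S : Set E} {u v : V} (h : G.Adj S u v) : G.Adj S v u := by
  obtain ⟨e, he, h | h⟩ := h
  · exact ⟨e, he, Or.inr h⟩
  · exact ⟨e, he, Or.inl h⟩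

lemma adj_mono {G : Multigraph V E} {S S' : Set E} (hs : S ⊆ S') {u v : V}
    (h : G.Adj S u v) : G.Adj S' u v := by
  obtain ⟨e, he, h⟩ := h
  exact ⟨e, hs he, h⟩

/-- Connectivity of a "comapped" multigraph in terms of the base vertex type. -/
lemma connOn_comap (G : Multigraph V E) (f : V → W) (hf : Function.Surjective f) (S : Set E) :
    (Multigraph.mk (fun e => f (G.fst e)) (fun e => f (G.snd e))).ConnOn S ↔
      ∀ u v : V, ReflTransGen (fun x y => G.Adj S x y ∨ f x = f y) u v := by
  constructor
  · intro hc u v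
    have key : ∀ p q : W, ReflTransGen
        ((Multigraph.mk (fun e => f (G.fst e)) (fun e => f (G.snd e))).Adj S) p q →
        ∀ u v : V, f u = p → f v = q →
          ReflTransGen (fun x y => G.Adj S x y ∨ f x = f y) u v := by
      intro p q hpq
      induction hpq with
      | refl => intro u v hu hv; exact ReflTransGen.single (Or.inr (hu.trans hv.symm))
      | @tail b c hab hbc ih =>
        intro u v hu hv
        obtain ⟨e, he, hor⟩ := hbc
        rcases hor with ⟨h1, h2⟩ | ⟨h1, h2⟩
        · have r1 := ih u (G.fst e) hu h1
          have r2 : ReflTransGen (fun x y => G.Adj S x y ∨ f x = f y) (G.fst e) (G.snd e) :=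
            ReflTransGen.single (Or.inl ⟨e, he, Or.inl ⟨rfl, rfl⟩⟩)
          exact (r1.trans r2).tail (Or.inr (h2.trans hv.symm))
        · have r1 := ih u (G.snd e) hu h2
          have r2 : ReflTransGen (fun x y => G.Adj S x y ∨ f x = f y) (G.snd e) (G.fst e) :=
            ReflTransGen.single (Or.inl ⟨e, he, Or.inr ⟨rfl, rfl⟩⟩)
          exact (r1.trans r2).tail (Or.inr (h1.trans hv.symm))
    exact key (f u) (f v) (hc (f u) (f v)) u v rfl rfl
  · intro hc p q
    obtain ⟨u, rfl⟩ := hf p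
    obtain ⟨v, rfl⟩ := hf q
    refine ReflTransGen.lift' f ?_ _ _ (hc u v)
    intro x y hxy
    rcases hxy with hadj | heq
    · obtain ⟨e, he, hor⟩ := hadj
      rcases hor with ⟨h1, h2⟩ | ⟨h1, h2⟩
      · exact ReflTransGen.single ⟨e, he, Or.inl ⟨congrArg f h1, congrArg f h2⟩⟩
      · exact ReflTransGen.single ⟨e, he, Or.inr ⟨congrArg f h1, congrArg f h2⟩⟩
    · show ReflTransGen _ (f x) (f y)
      exact heq ▸ ReflTransGen.refl

/-- Link relation: the symmetric relation identifying exactly `a` and `b`. -/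
def LinkRel {α : Sort*} (a b : α) : α → α → Prop := fun x y => (x = a ∧ y = b) ∨ (x = b ∧ y = a)

lemma linkRel_symm {α : Sort*} {a b x y : α} (h : LinkRel a b x y) : LinkRel a b y x := by
  rcases h with h | h
  · exact Or.inr ⟨h.2, h.1⟩
  · exact Or.inl ⟨h.2, h.1⟩

lemma mk_pair_eq_iff {a b x y : V} :
    (Quot.mk (fun x y : V => x = a ∧ y = b) x = Quot.mk _ y) ↔ x = y ∨ LinkRel a b x y := by
  classical
  constructor
  · intro h
    let φ : V → V := fun z => if z = a ∨ z = b then a else z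
    have hφ : ∀ p q : V, (p = a ∧ q = b) → φ p = φ q := by
      rintro p q ⟨rfl, rfl⟩; simp [φ]
    have h2 : φ x = φ y := congrArg (Quot.lift φ hφ) h
    by_cases hx : x = a ∨ x = b <;> by_cases hy : y = a ∨ y = b <;>
      simp only [φ, if_pos, if_neg, hx, hy, if_true, if_false] at h2
    · rcases hx with rfl | rfl <;> rcases hy with rfl | rfl
      · exact Or.inl rfl
      · exact Or.inr (Or.inl ⟨rfl, rfl⟩)
      · exact Or.inr (Or.inr ⟨rfl, rfl⟩)
      · exact Or.inl rfl
    · exact absurd (Or.inl h2.symm) hy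
    · exact absurd (Or.inl h2) hx
    · exact Or.inl h2
  · rintro (rfl | ⟨rfl, rfl⟩ | ⟨rfl, rfl⟩)
    · rfl
    · exact Quot.sound ⟨rfl, rfl⟩
    · exact (Quot.sound ⟨rfl, rfl⟩).symm

end MGAux
namespace MGAux

open Relation Multigraph Function

variable {V E W V' E' : Type}

lemma mk_pair2_eq_iff {α : Type*} {a b c d : α}
    (h1 : a ≠ c) (h2 : a ≠ d) (h3 : b ≠ c) (h4 : b ≠ d) {x y : α} :
    (Quot.mk (fun p q => (p = a ∧ q = b) ∨ (p = c ∧ q = d)) x = Quot.mk _ y) ↔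
      x = y ∨ LinkRel a b x y ∨ LinkRel c d x y := by
  classical
  constructor
  · intro h
    let φ : α → α := fun z => if z = a ∨ z = b then a else if z = c ∨ z = d then c else z
    have hφ : ∀ p q : α, ((p = a ∧ q = b) ∨ (p = c ∧ q = d)) → φ p = φ q := by
      rintro p q (⟨rfl, rfl⟩ | ⟨rfl, rfl⟩)
      · simp [φ]
      · have : ¬(p = a ∨ p = b) := by rintro (rfl | rfl); exacts [h1 rfl, h3 rfl]
        have h' : ¬(q = a ∨ q = b) := by rintro (rfl | rfl); exacts [h2 rfl, h4 rfl]
        simp [φ, this, h']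
    have hxy : φ x = φ y := congrArg (Quot.lift φ hφ) h
    by_cases hx1 : x = a ∨ x = b
    · by_cases hy1 : y = a ∨ y = b
      · rcases hx1 with rfl | rfl <;> rcases hy1 with rfl | rfl
        · exact Or.inl rfl
        · exact Or.inr (Or.inl (Or.inl ⟨rfl, rfl⟩))
        · exact Or.inr (Or.inl (Or.inr ⟨rfl, rfl⟩))
        · exact Or.inl rfl
      · by_cases hy2 : y = c ∨ y = d
        · simp only [φ, if_pos hx1, if_neg hy1, if_pos hy2] at hxy
          exact absurd hxy h1
        · simp only [φ, if_pos hx1, if_neg hy1, if_neg hy2] at hxy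
          exact absurd hxy.symm (by rintro rfl; exact hy1 (Or.inl rfl))
    · by_cases hx2 : x = c ∨ x = d
      · by_cases hy1 : y = a ∨ y = b
        · simp only [φ, if_neg hx1, if_pos hx2, if_pos hy1] at hxy
          exact absurd hxy.symm h1
        · by_cases hy2 : y = c ∨ y = d
          · rcases hx2 with rfl | rfl <;> rcases hy2 with rfl | rfl
            · exact Or.inl rfl
            · exact Or.inr (Or.inr (Or.inl ⟨rfl, rfl⟩))
            · exact Or.inr (Or.inr (Or.inr ⟨rfl, rfl⟩))
            · exact Or.inl rfl
          · simp only [φ, if_neg hx1, if_pos hx2, if_neg hy1, if_neg hy2] at hxy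
            exact absurd hxy.symm (by rintro rfl; exact hy2 (Or.inl rfl))
      · by_cases hy1 : y = a ∨ y = b
        · simp only [φ, if_neg hx1, if_neg hx2, if_pos hy1] at hxy
          exact absurd hxy (by rintro rfl; exact hx1 (Or.inl rfl))
        · by_cases hy2 : y = c ∨ y = d
          · simp only [φ, if_neg hx1, if_neg hx2, if_neg hy1, if_pos hy2] at hxy
            exact absurd hxy (by rintro rfl; exact hx2 (Or.inl rfl))
          · simp only [φ, if_neg hx1, if_neg hx2, if_neg hy1, if_neg hy2] at hxy
            exact Or.inl hxy
  · rintro (rfl | (⟨rfl, rfl⟩ | ⟨rfl, rfl⟩) | (⟨rfl, rfl⟩ | ⟨rfl, rfl⟩))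
    · rfl
    · exact Quot.sound (Or.inl ⟨rfl, rfl⟩)
    · symm; exact Quot.sound (Or.inl ⟨rfl, rfl⟩)
    · exact Quot.sound (Or.inr ⟨rfl, rfl⟩)
    · symm; exact Quot.sound (Or.inr ⟨rfl, rfl⟩)

/-- Connectivity allowing the extra identification of `a` and `b`. -/
def QConn (G : Multigraph V E) (a b : V) (A : Set E) : Prop :=
  ∀ u v : V, ReflTransGen (fun x y => G.Adj A x y ∨ LinkRel a b x y) u v

lemma identify_connOn (G : Multigraph V E) (a b : V) (A : Set E) :
    (G.identify a b).ConnOn A ↔ QConn G a b A := by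
  have key := connOn_comap G (Quot.mk fun x y : V => x = a ∧ y = b)
    Quot.mk_surjective A
  have : (G.identify a b).ConnOn A ↔ ∀ u v : V,
      ReflTransGen (fun x y => G.Adj A x y ∨
        Quot.mk (fun x y : V => x = a ∧ y = b) x = Quot.mk _ y) u v := key
  rw [this]
  constructor
  · intro h u v
    refine rtg_mono_rtg ?_ (h u v)
    intro x y hxy
    rcases hxy with hadj | heq
    · exact ReflTransGen.single (Or.inl hadj)
    · rcases mk_pair_eq_iff.mp heq with rfl | hl
      · exact ReflTransGen.refl
      · exact ReflTransGen.single (Or.inr hl)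
  · intro h u v
    refine rtg_mono_rtg ?_ (h u v)
    intro x y hxy
    rcases hxy with hadj | hl
    · exact ReflTransGen.single (Or.inl hadj)
    · exact ReflTransGen.single (Or.inr (mk_pair_eq_iff.mpr (Or.inr hl)))

/-- The disjoint sum of two multigraphs on `V ⊕ V'`. -/
def sumGraph (H : Multigraph V E) (H' : Multigraph V' E') : Multigraph (V ⊕ V') (E ⊕ E') :=
  ⟨Sum.elim (fun a => (Sum.inl (H.fst a) : V ⊕ V')) (fun b => Sum.inr (H'.fst b)),
   Sum.elim (fun a => (Sum.inl (H.snd a) : V ⊕ V')) (fun b => Sum.inr (H'.snd b))⟩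

lemma sumGraph_adj {H : Multigraph V E} {H' : Multigraph V' E'} {S : Set (E ⊕ E')}
    {p q : V ⊕ V'} :
    (sumGraph H H').Adj S p q ↔
      (∃ u v, p = Sum.inl u ∧ q = Sum.inl v ∧ H.Adj (Sum.inl ⁻¹' S) u v) ∨
      (∃ u v, p = Sum.inr u ∧ q = Sum.inr v ∧ H'.Adj (Sum.inr ⁻¹' S) u v) := by
  constructor
  · rintro ⟨e, he, h⟩
    rcases e with e | e
    · left
      rcases h with ⟨h1, h2⟩ | ⟨h1, h2⟩
      · exact ⟨H.fst e, H.snd e, h1.symm, h2.symm, ⟨e, he, Or.inl ⟨rfl, rfl⟩⟩⟩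
      · exact ⟨H.snd e, H.fst e, h2.symm, h1.symm, ⟨e, he, Or.inr ⟨rfl, rfl⟩⟩⟩
    · right
      rcases h with ⟨h1, h2⟩ | ⟨h1, h2⟩
      · exact ⟨H'.fst e, H'.snd e, h1.symm, h2.symm, ⟨e, he, Or.inl ⟨rfl, rfl⟩⟩⟩
      · exact ⟨H'.snd e, H'.fst e, h2.symm, h1.symm, ⟨e, he, Or.inr ⟨rfl, rfl⟩⟩⟩
  · rintro (⟨u, v, rfl, rfl, ⟨e, he, h⟩⟩ | ⟨u, v, rfl, rfl, ⟨e, he, h⟩⟩)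
    · rcases h with ⟨h1, h2⟩ | ⟨h1, h2⟩
      · exact ⟨Sum.inl e, he, Or.inl ⟨congrArg Sum.inl h1, congrArg Sum.inl h2⟩⟩
      · exact ⟨Sum.inl e, he, Or.inr ⟨congrArg Sum.inl h1, congrArg Sum.inl h2⟩⟩
    · rcases h with ⟨h1, h2⟩ | ⟨h1, h2⟩
      · exact ⟨Sum.inr e, he, Or.inl ⟨congrArg Sum.inr h1, congrArg Sum.inr h2⟩⟩
      · exact ⟨Sum.inr e, he, Or.inr ⟨congrArg Sum.inr h1, congrArg Sum.inr h2⟩⟩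

end MGAux
namespace MGAux

open Relation Multigraph Function

section Join

variable {V E V' E' : Type}

/-- The relation underlying connectivity of the parallel join. -/
def RJ (H : Multigraph V E) (s t : V) (H' : Multigraph V' E') (s' t' : V')
    (S : Set (E ⊕ E')) : (V ⊕ V') → (V ⊕ V') → Prop := fun p q =>
  (sumGraph H H').Adj S p q ∨ LinkRel (Sum.inl s) (Sum.inr s') p q ∨
    LinkRel (Sum.inl t) (Sum.inr t') p q

/-- Membership in the four-element identified class. -/
def In4 (s t : V) (s' t' : V') (p : V ⊕ V') : Prop :=
  p = Sum.inl s ∨ p = Sum.inr s' ∨ p = Sum.inl t ∨ p = Sum.inr t'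

/-- The relation underlying connectivity of the parallel join with `s,t` further
identified. -/
def RJst (H : Multigraph V E) (s t : V) (H' : Multigraph V' E') (s' t' : V')
    (S : Set (E ⊕ E')) : (V ⊕ V') → (V ⊕ V') → Prop := fun p q =>
  (sumGraph H H').Adj S p q ∨ (In4 s t s' t' p ∧ In4 s t s' t' q)

/-- Left local relation. -/
def QL (H : Multigraph V E) (s t : V) (S : Set (E ⊕ E')) : V → V → Prop :=
  fun x y => H.Adj (Sum.inl ⁻¹' S) x y ∨ LinkRel s t x y

/-- Right local relation. -/
def QR (H' : Multigraph V' E') (s' t' : V') (S : Set (E ⊕ E')) : V' → V' → Prop :=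
  fun x y => H'.Adj ((Sum.inr : E' → E ⊕ E') ⁻¹' S) x y ∨ LinkRel s' t' x y

/-- The simulation invariant for projecting paths in the join to the two sides. -/
def Sim (H : Multigraph V E) (s t : V) (H' : Multigraph V' E') (s' t' : V')
    (S : Set (E ⊕ E')) : (V ⊕ V') → (V ⊕ V') → Prop
  | Sum.inl u, Sum.inl v => ReflTransGen (QL H s t S) u v
  | Sum.inl u, Sum.inr v' => ReflTransGen (QL H s t S) u s ∧ ReflTransGen (QR H' s' t' S) v' s'
  | Sum.inr u', Sum.inl v => ReflTransGen (QR H' s' t' S) u' s' ∧ ReflTransGen (QL H s t S) v s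
  | Sum.inr u', Sum.inr v' => ReflTransGen (QR H' s' t' S) u' v'

/-- The value carried by `Sim p _` when the second argument is in the identified class. -/
def AuxP (H : Multigraph V E) (s t : V) (H' : Multigraph V' E') (s' t' : V')
    (S : Set (E ⊕ E')) : (V ⊕ V') → Prop
  | Sum.inl u => ReflTransGen (QL H s t S) u s
  | Sum.inr u' => ReflTransGen (QR H' s' t' S) u' s'

variable {H : Multigraph V E} {s t : V} {H' : Multigraph V' E'} {s' t' : V'}
  {S : Set (E ⊕ E')}

lemma rj_le_rjst {p q : V ⊕ V'} (h : RJ H s t H' s' t' S p q) : RJst H s t H' s' t' S p q := by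
  rcases h with h | h | h
  · exact Or.inl h
  · rcases h with ⟨rfl, rfl⟩ | ⟨rfl, rfl⟩ <;>
      exact Or.inr ⟨by simp [In4], by simp [In4]⟩
  · rcases h with ⟨rfl, rfl⟩ | ⟨rfl, rfl⟩ <;>
      exact Or.inr ⟨by simp [In4], by simp [In4]⟩

lemma rj_symm {p q : V ⊕ V'} (h : RJ H s t H' s' t' S p q) : RJ H s t H' s' t' S q p := by
  rcases h with h | h | h
  · exact Or.inl (adj_symm h)
  · exact Or.inr (Or.inl (linkRel_symm h))
  · exact Or.inr (Or.inr (linkRel_symm h))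

lemma rjst_symm {p q : V ⊕ V'} (h : RJst H s t H' s' t' S p q) : RJst H s t H' s' t' S q p := by
  rcases h with h | h
  · exact Or.inl (adj_symm h)
  · exact Or.inr ⟨h.2, h.1⟩

lemma ql_symm {x y : V} (h : QL H s t S x y) : QL H s t S y x := by
  rcases h with h | h
  · exact Or.inl (adj_symm h)
  · exact Or.inr (linkRel_symm h)

lemma qr_symm {x y : V'} (h : QR H' s' t' S x y) : QR H' s' t' S y x := by
  rcases h with h | h
  · exact Or.inl (adj_symm h)
  · exact Or.inr (linkRel_symm h)

lemma rtg_ql_symm {x y : V} (h : ReflTransGen (QL H s t S) x y) :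
    ReflTransGen (QL H s t S) y x :=
  (@ReflTransGen.stdSymm _ _ ⟨fun _ _ => ql_symm⟩).symm _ _ h

lemma rtg_qr_symm {x y : V'} (h : ReflTransGen (QR H' s' t' S) x y) :
    ReflTransGen (QR H' s' t' S) y x :=
  (@ReflTransGen.stdSymm _ _ ⟨fun _ _ => qr_symm⟩).symm _ _ h

lemma rtg_ql_st : ReflTransGen (QL H s t S) s t :=
  ReflTransGen.single (Or.inr (Or.inl ⟨rfl, rfl⟩))

lemma rtg_qr_st : ReflTransGen (QR H' s' t' S) s' t' :=
  ReflTransGen.single (Or.inr (Or.inl ⟨rfl, rfl⟩))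

lemma sim_out {p q : V ⊕ V'} (hq : In4 s t s' t' q) (h : Sim H s t H' s' t' S p q) :
    AuxP H s t H' s' t' S p := by
  rcases hq with rfl | rfl | rfl | rfl <;> rcases p with u | u'
  · exact h
  · exact h.1
  · exact h.1
  · exact h
  · exact h.trans (rtg_ql_symm rtg_ql_st)
  · exact h.1
  · exact h.1
  · exact h.trans (rtg_qr_symm rtg_qr_st)

lemma sim_in {p q : V ⊕ V'} (hq : In4 s t s' t' q)
    (h : AuxP H s t H' s' t' S p) :
    Sim H s t H' s' t' S p q := by
  rcases hq with rfl | rfl | rfl | rfl <;> rcases p with u | u'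
  · exact h
  · exact ⟨h, ReflTransGen.refl⟩
  · exact ⟨h, ReflTransGen.refl⟩
  · exact h
  · exact h.trans rtg_ql_st
  · exact ⟨h, rtg_ql_symm rtg_ql_st⟩
  · exact ⟨h, rtg_qr_symm rtg_qr_st⟩
  · exact h.trans rtg_qr_st

lemma sim_refl (p : V ⊕ V') : Sim H s t H' s' t' S p p := by
  rcases p with u | u' <;> exact ReflTransGen.refl

lemma sim_of_rtg {p q : V ⊕ V'} (h : ReflTransGen (RJst H s t H' s' t' S) p q) :
    Sim H s t H' s' t' S p q := by
  induction h with
  | refl => exact sim_refl p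
  | @tail b c hab hbc ih =>
    rcases hbc with hadj | h4
    · rcases sumGraph_adj.mp hadj with ⟨v, v₂, rfl, rfl, ha⟩ | ⟨v, v₂, rfl, rfl, ha⟩
      · rcases p with u | u'
        · exact ih.tail (Or.inl ha)
        · exact ⟨ih.1, ReflTransGen.trans
            (ReflTransGen.single (show QL H s t S _ _ from Or.inl (adj_symm ha))) ih.2⟩
      · rcases p with u | u'
        · exact ⟨ih.1, ReflTransGen.trans
            (ReflTransGen.single (show QR H' s' t' S _ _ from Or.inl (adj_symm ha))) ih.2⟩
        · exact ih.tail (Or.inl ha)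
    · exact sim_in h4.2 (sim_out h4.1 ih)

lemma rtg_rjst_ll {u v : V}
    (h : ReflTransGen (RJst H s t H' s' t' S) (Sum.inl u) (Sum.inl v)) :
    ReflTransGen (QL H s t S) u v := sim_of_rtg h

lemma rtg_rjst_rr {u v : V'}
    (h : ReflTransGen (RJst H s t H' s' t' S) (Sum.inr u) (Sum.inr v)) :
    ReflTransGen (QR H' s' t' S) u v := sim_of_rtg h

end Join

end MGAux
namespace MGAux

open Relation Multigraph Function

section Join2

variable {V E V' E' : Type}
variable {H : Multigraph V E} {s t : V} {H' : Multigraph V' E'} {s' t' : V'}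
  {S : Set (E ⊕ E')}

lemma adj_inl {u v : V} (h : H.Adj (Sum.inl ⁻¹' S) u v) :
    (sumGraph H H').Adj S (Sum.inl u) (Sum.inl v) :=
  sumGraph_adj.mpr (Or.inl ⟨u, v, rfl, rfl, h⟩)

lemma adj_inr {u v : V'} (h : H'.Adj ((Sum.inr : E' → E ⊕ E') ⁻¹' S) u v) :
    (sumGraph H H').Adj S (Sum.inr u) (Sum.inr v) :=
  sumGraph_adj.mpr (Or.inr ⟨u, v, rfl, rfl, h⟩)

/-- Lift of plain left connectivity into the join relation. -/
lemma lift_plain_L {u v : V} (h : ReflTransGen (H.Adj (Sum.inl ⁻¹' S)) u v) :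
    ReflTransGen (RJ H s t H' s' t' S) (Sum.inl u) (Sum.inl v) :=
  ReflTransGen.lift' Sum.inl
    (fun _ _ ha => ReflTransGen.single (Or.inl (adj_inl ha))) _ _ h

lemma lift_plain_R {u v : V'} (h : ReflTransGen (H'.Adj ((Sum.inr : E' → E ⊕ E') ⁻¹' S)) u v) :
    ReflTransGen (RJ H s t H' s' t' S) (Sum.inr u) (Sum.inr v) :=
  ReflTransGen.lift' Sum.inr
    (fun _ _ ha => ReflTransGen.single (Or.inl (adj_inr ha))) _ _ h

lemma rtg_rj_symm {p q : V ⊕ V'}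
    (h : ReflTransGen (RJ H s t H' s' t' S) p q) : ReflTransGen (RJ H s t H' s' t' S) q p :=
  (@ReflTransGen.stdSymm _ _ ⟨fun _ _ => rj_symm⟩).symm _ _ h

lemma rtg_rjst_symm {p q : V ⊕ V'}
    (h : ReflTransGen (RJst H s t H' s' t' S) p q) : ReflTransGen (RJst H s t H' s' t' S) q p :=
  (@ReflTransGen.stdSymm _ _ ⟨fun _ _ => rjst_symm⟩).symm _ _ h

/-- Lift of left `QL`-connectivity into the join relation, given that the two
terminals are joined. -/
lemma lift_q_L (hrt : ReflTransGen (RJ H s t H' s' t' S) (Sum.inl s) (Sum.inl t))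
    {u v : V} (h : ReflTransGen (QL H s t S) u v) :
    ReflTransGen (RJ H s t H' s' t' S) (Sum.inl u) (Sum.inl v) := by
  refine ReflTransGen.lift' Sum.inl ?_ _ _ h
  intro x y hxy
  rcases hxy with ha | ⟨rfl, rfl⟩ | ⟨rfl, rfl⟩
  · exact ReflTransGen.single (Or.inl (adj_inl ha))
  · exact hrt
  · exact rtg_rj_symm hrt

lemma lift_q_R (hrt : ReflTransGen (RJ H s t H' s' t' S) (Sum.inr s') (Sum.inr t'))
    {u v : V'} (h : ReflTransGen (QR H' s' t' S) u v) :
    ReflTransGen (RJ H s t H' s' t' S) (Sum.inr u) (Sum.inr v) := by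
  refine ReflTransGen.lift' Sum.inr ?_ _ _ h
  intro x y hxy
  rcases hxy with ha | ⟨rfl, rfl⟩ | ⟨rfl, rfl⟩
  · exact ReflTransGen.single (Or.inl (adj_inr ha))
  · exact hrt
  · exact rtg_rj_symm hrt

lemma lift_q_L_st {u v : V} (h : ReflTransGen (QL H s t S) u v) :
    ReflTransGen (RJst H s t H' s' t' S) (Sum.inl u) (Sum.inl v) := by
  refine ReflTransGen.lift' Sum.inl ?_ _ _ h
  intro x y hxy
  rcases hxy with ha | ⟨rfl, rfl⟩ | ⟨rfl, rfl⟩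
  · exact ReflTransGen.single (Or.inl (adj_inl ha))
  · exact ReflTransGen.single (Or.inr ⟨by simp [In4], by simp [In4]⟩)
  · exact ReflTransGen.single (Or.inr ⟨by simp [In4], by simp [In4]⟩)

lemma lift_q_R_st {u v : V'} (h : ReflTransGen (QR H' s' t' S) u v) :
    ReflTransGen (RJst H s t H' s' t' S) (Sum.inr u) (Sum.inr v) := by
  refine ReflTransGen.lift' Sum.inr ?_ _ _ h
  intro x y hxy
  rcases hxy with ha | ⟨rfl, rfl⟩ | ⟨rfl, rfl⟩
  · exact ReflTransGen.single (Or.inl (adj_inr ha))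
  · exact ReflTransGen.single (Or.inr ⟨by simp [In4], by simp [In4]⟩)
  · exact ReflTransGen.single (Or.inr ⟨by simp [In4], by simp [In4]⟩)

/-- Characterization of connectivity of the doubly identified join. -/
lemma rjst_conn_iff :
    (∀ p q : V ⊕ V', ReflTransGen (RJst H s t H' s' t' S) p q) ↔
      ((∀ u v : V, ReflTransGen (QL H s t S) u v) ∧
        (∀ u v : V', ReflTransGen (QR H' s' t' S) u v)) := by
  constructor
  · intro h
    exact ⟨fun u v => rtg_rjst_ll (h _ _), fun u v => rtg_rjst_rr (h _ _)⟩
  · rintro ⟨h1, h2⟩ p q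
    have hlink : ReflTransGen (RJst H s t H' s' t' S) (Sum.inl s) (Sum.inr s') :=
      ReflTransGen.single (Or.inr ⟨by simp [In4], by simp [In4]⟩)
    have cross : ∀ (u : V) (v' : V'),
        ReflTransGen (RJst H s t H' s' t' S) (Sum.inl u) (Sum.inr v') := fun u v' =>
      ((lift_q_L_st (h1 u s)).trans hlink).trans (lift_q_R_st (h2 s' v'))
    rcases p with u | u' <;> rcases q with v | v'
    · exact lift_q_L_st (h1 u v)
    · exact cross u v'
    · exact rtg_rjst_symm (cross v u')
    · exact lift_q_R_st (h2 u' v')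

/-- Characterization of connectivity of the join. -/
lemma rj_conn_iff :
    (∀ p q : V ⊕ V', ReflTransGen (RJ H s t H' s' t' S) p q) ↔
      (((∀ u v : V, ReflTransGen (H.Adj (Sum.inl ⁻¹' S)) u v) ∧
          (∀ u v : V', ReflTransGen (QR H' s' t' S) u v)) ∨
        ((∀ u v : V, ReflTransGen (QL H s t S) u v) ∧
          (∀ u v : V', ReflTransGen (H'.Adj ((Sum.inr : E' → E ⊕ E') ⁻¹' S)) u v))) := by
  classical
  constructor
  · intro h
    have hq1 : ∀ u v : V, ReflTransGen (QL H s t S) u v := fun u v =>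
      rtg_rjst_ll (ReflTransGen.mono (fun _ _ => rj_le_rjst) _ _ (h (Sum.inl u) (Sum.inl v)))
    have hq2 : ∀ u v : V', ReflTransGen (QR H' s' t' S) u v := fun u v =>
      rtg_rjst_rr (ReflTransGen.mono (fun _ _ => rj_le_rjst) _ _ (h (Sum.inr u) (Sum.inr v)))
    by_cases hc1 : ReflTransGen (H.Adj (Sum.inl ⁻¹' S)) s t
    · left
      refine ⟨fun u v => ?_, hq2⟩
      refine rtg_mono_rtg ?_ (hq1 u v)
      rintro x y (ha | ⟨rfl, rfl⟩ | ⟨rfl, rfl⟩)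
      · exact ReflTransGen.single ha
      · exact hc1
      · exact (@ReflTransGen.stdSymm _ _ ⟨fun _ _ hh => adj_symm hh⟩).symm _ _ hc1
    by_cases hc2 : ReflTransGen (H'.Adj ((Sum.inr : E' → E ⊕ E') ⁻¹' S)) s' t'
    · right
      refine ⟨hq1, fun u v => ?_⟩
      refine rtg_mono_rtg ?_ (hq2 u v)
      rintro x y (ha | ⟨rfl, rfl⟩ | ⟨rfl, rfl⟩)
      · exact ReflTransGen.single ha
      · exact hc2
      · exact (@ReflTransGen.stdSymm _ _ ⟨fun _ _ hh => adj_symm hh⟩).symm _ _ hc2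
    -- cut argument : contradiction
    exfalso
    set Wp : V ⊕ V' → Prop := fun p =>
      Sum.rec (fun u => ReflTransGen (H.Adj (Sum.inl ⁻¹' S)) s u)
        (fun u' => ReflTransGen (H'.Adj ((Sum.inr : E' → E ⊕ E') ⁻¹' S)) s' u') p with hWp
    have step : ∀ p q : V ⊕ V', RJ H s t H' s' t' S p q → Wp p → Wp q := by
      rintro p q (hadj | hl | hl) hp
      · rcases sumGraph_adj.mp hadj with ⟨u, v, rfl, rfl, ha⟩ | ⟨u, v, rfl, rfl, ha⟩
        · exact ReflTransGen.tail hp ha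
        · exact ReflTransGen.tail hp ha
      · rcases hl with ⟨rfl, rfl⟩ | ⟨rfl, rfl⟩
        · exact ReflTransGen.refl
        · exact ReflTransGen.refl
      · rcases hl with ⟨rfl, rfl⟩ | ⟨rfl, rfl⟩
        · exact absurd hp hc1
        · exact absurd hp hc2
    have pres : ∀ p q : V ⊕ V', ReflTransGen (RJ H s t H' s' t' S) p q → Wp p → Wp q := by
      intro p q hpq
      induction hpq with
      | refl => exact id
      | tail hab hbc ih => exact fun hp => step _ _ hbc (ih hp)
    exact hc1 (pres (Sum.inl s) (Sum.inl t) (h _ _) ReflTransGen.refl)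
  · rintro (⟨h1, h2⟩ | ⟨h1, h2⟩)
    · have hlt : ReflTransGen (RJ H s t H' s' t' S) (Sum.inl s) (Sum.inl t) :=
        lift_plain_L (h1 s t)
      have hrst : ReflTransGen (RJ H s t H' s' t' S) (Sum.inr s') (Sum.inr t') := by
        refine ReflTransGen.trans (ReflTransGen.single ?_)
          (hlt.trans (ReflTransGen.single ?_))
        · exact Or.inr (Or.inl (Or.inr ⟨rfl, rfl⟩))
        · exact Or.inr (Or.inr (Or.inl ⟨rfl, rfl⟩))
      have hll : ∀ u v : V, ReflTransGen (RJ H s t H' s' t' S) (Sum.inl u) (Sum.inl v) :=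
        fun u v => lift_plain_L (h1 u v)
      have hrr : ∀ u v : V', ReflTransGen (RJ H s t H' s' t' S) (Sum.inr u) (Sum.inr v) :=
        fun u v => lift_q_R hrst (h2 u v)
      have cross : ∀ (u : V) (v' : V'),
          ReflTransGen (RJ H s t H' s' t' S) (Sum.inl u) (Sum.inr v') := fun u v' =>
        ((hll u s).tail (Or.inr (Or.inl (Or.inl ⟨rfl, rfl⟩)))).trans (hrr s' v')
      intro p q
      rcases p with u | u' <;> rcases q with v | v'
      · exact hll u v
      · exact cross u v'
      · exact rtg_rj_symm (cross v u')
      · exact hrr u' v'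
    · have hrst : ReflTransGen (RJ H s t H' s' t' S) (Sum.inr s') (Sum.inr t') :=
        lift_plain_R (h2 s' t')
      have hlt : ReflTransGen (RJ H s t H' s' t' S) (Sum.inl s) (Sum.inl t) := by
        refine ReflTransGen.trans (ReflTransGen.single ?_)
          (hrst.trans (ReflTransGen.single ?_))
        · exact Or.inr (Or.inl (Or.inl ⟨rfl, rfl⟩))
        · exact Or.inr (Or.inr (Or.inr ⟨rfl, rfl⟩))
      have hll : ∀ u v : V, ReflTransGen (RJ H s t H' s' t' S) (Sum.inl u) (Sum.inl v) :=
        fun u v => lift_q_L hlt (h1 u v)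
      have hrr : ∀ u v : V', ReflTransGen (RJ H s t H' s' t' S) (Sum.inr u) (Sum.inr v) :=
        fun u v => lift_plain_R (h2 u v)
      have cross : ∀ (u : V) (v' : V'),
          ReflTransGen (RJ H s t H' s' t' S) (Sum.inl u) (Sum.inr v') := fun u v' =>
        ((hll u s).tail (Or.inr (Or.inl (Or.inl ⟨rfl, rfl⟩)))).trans (hrr s' v')
      intro p q
      rcases p with u | u' <;> rcases q with v | v'
      · exact hll u v
      · exact cross u v'
      · exact rtg_rj_symm (cross v u')
      · exact hrr u' v'

end Join2

end MGAux
namespace MGAux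

open Relation Multigraph Function

section Join3

variable {V E V' E' : Type}
variable {H : Multigraph V E} {s t : V} {H' : Multigraph V' E'} {s' t' : V'}
  {S : Set (E ⊕ E')}

lemma parallelJoin_connOn (hst : s ≠ t) (hst' : s' ≠ t') :
    (parallelJoin H s t H' s' t').ConnOn S ↔
      ∀ p q : V ⊕ V', ReflTransGen (RJ H s t H' s' t' S) p q := by
  have key := connOn_comap (sumGraph H H')
    (Quot.mk fun a b : V ⊕ V' =>
      (a = Sum.inl s ∧ b = Sum.inr s') ∨ (a = Sum.inl t ∧ b = Sum.inr t'))
    Quot.mk_surjective S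
  have h1 : s ≠ t → (Sum.inl s : V ⊕ V') ≠ Sum.inl t := fun h hh => h (Sum.inl.inj hh)
  have hEq : ∀ x y : V ⊕ V',
      (Quot.mk (fun a b : V ⊕ V' =>
        (a = Sum.inl s ∧ b = Sum.inr s') ∨ (a = Sum.inl t ∧ b = Sum.inr t')) x =
        Quot.mk _ y) ↔
      x = y ∨ LinkRel (Sum.inl s) (Sum.inr s') x y ∨ LinkRel (Sum.inl t) (Sum.inr t') x y :=
    fun x y => mk_pair2_eq_iff (h1 hst) (by simp) (by simp)
      (fun hh => hst' (Sum.inr.inj hh))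
  have key2 : (parallelJoin H s t H' s' t').ConnOn S ↔
      ∀ p q : V ⊕ V', ReflTransGen (fun x y => (sumGraph H H').Adj S x y ∨
        Quot.mk (fun a b : V ⊕ V' =>
          (a = Sum.inl s ∧ b = Sum.inr s') ∨ (a = Sum.inl t ∧ b = Sum.inr t')) x =
          Quot.mk _ y) p q := key
  rw [key2]
  constructor
  · intro h p q
    refine rtg_mono_rtg ?_ (h p q)
    rintro x y (hadj | heq)
    · exact ReflTransGen.single (Or.inl hadj)
    · rcases (hEq x y).mp heq with rfl | hl | hl
      · exact ReflTransGen.refl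
      · exact ReflTransGen.single (Or.inr (Or.inl hl))
      · exact ReflTransGen.single (Or.inr (Or.inr hl))
  · intro h p q
    refine rtg_mono_rtg ?_ (h p q)
    rintro x y (hadj | hl | hl)
    · exact ReflTransGen.single (Or.inl hadj)
    · exact ReflTransGen.single (Or.inr ((hEq x y).mpr (Or.inr (Or.inl hl))))
    · exact ReflTransGen.single (Or.inr ((hEq x y).mpr (Or.inr (Or.inr hl))))

lemma double_mk_eq_iff (hst : s ≠ t) (hst' : s' ≠ t') (x y : V ⊕ V') :
    (Quot.mk
        (fun a b : Quot (fun a b : V ⊕ V' =>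
          (a = Sum.inl s ∧ b = Sum.inr s') ∨ (a = Sum.inl t ∧ b = Sum.inr t')) =>
            a = Quot.mk _ (Sum.inl s) ∧ b = Quot.mk _ (Sum.inl t))
        (Quot.mk _ x) = Quot.mk _ (Quot.mk _ y)) ↔
      x = y ∨ (In4 s t s' t' x ∧ In4 s t s' t' y) := by
  classical
  constructor
  · intro h
    let φ : V ⊕ V' → V ⊕ V' := fun z => if In4 s t s' t' z then Sum.inl s else z
    have hφ2 : ∀ p q : V ⊕ V',
        ((p = Sum.inl s ∧ q = Sum.inr s') ∨ (p = Sum.inl t ∧ q = Sum.inr t')) → φ p = φ q := by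
      rintro p q (⟨rfl, rfl⟩ | ⟨rfl, rfl⟩) <;> simp [φ, In4]
    have hφ3 : ∀ a b, (a = Quot.mk _ (Sum.inl s) ∧ b = Quot.mk _ (Sum.inl t)) →
        Quot.lift φ hφ2 a = Quot.lift φ hφ2 b := by
      rintro a b ⟨rfl, rfl⟩
      show φ (Sum.inl s) = φ (Sum.inl t)
      simp [φ, In4]
    have h2 : φ x = φ y := congrArg (Quot.lift (Quot.lift φ hφ2) hφ3) h
    by_cases hx : In4 s t s' t' x <;> by_cases hy : In4 s t s' t' y
    · exact Or.inr ⟨hx, hy⟩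
    · simp only [φ, if_pos hx, if_neg hy] at h2
      exact absurd (Or.inl h2.symm) hy
    · simp only [φ, if_neg hx, if_pos hy] at h2
      exact absurd (Or.inl h2) hx
    · simp only [φ, if_neg hx, if_neg hy] at h2
      exact Or.inl h2
  · rintro (rfl | ⟨hx, hy⟩)
    · rfl
    · have key : ∀ z : V ⊕ V', In4 s t s' t' z →
          (Quot.mk
            (fun a b : Quot (fun a b : V ⊕ V' =>
              (a = Sum.inl s ∧ b = Sum.inr s') ∨ (a = Sum.inl t ∧ b = Sum.inr t')) =>
                a = Quot.mk _ (Sum.inl s) ∧ b = Quot.mk _ (Sum.inl t))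
            (Quot.mk _ z) = Quot.mk _ (Quot.mk _ (Sum.inl s))) := by
        have e1 : (Quot.mk (fun a b : V ⊕ V' =>
            (a = Sum.inl s ∧ b = Sum.inr s') ∨ (a = Sum.inl t ∧ b = Sum.inr t')) (Sum.inl s)) =
            Quot.mk _ (Sum.inr s') := Quot.sound (Or.inl ⟨rfl, rfl⟩)
        have e2 : (Quot.mk (fun a b : V ⊕ V' =>
            (a = Sum.inl s ∧ b = Sum.inr s') ∨ (a = Sum.inl t ∧ b = Sum.inr t')) (Sum.inl t)) =
            Quot.mk _ (Sum.inr t') := Quot.sound (Or.inr ⟨rfl, rfl⟩)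
        rintro z (rfl | rfl | rfl | rfl)
        · rfl
        · exact congrArg _ e1.symm
        · exact (Quot.sound ⟨rfl, rfl⟩).symm
        · calc _ = Quot.mk _ (Quot.mk _ (Sum.inl t : V ⊕ V')) := congrArg _ e2.symm
            _ = _ := (Quot.sound ⟨rfl, rfl⟩).symm
      exact (key x hx).trans (key y hy).symm

lemma joinIdentify_connOn (hst : s ≠ t) (hst' : s' ≠ t') :
    ((parallelJoin H s t H' s' t').identify
        (Quot.mk _ (Sum.inl s)) (Quot.mk _ (Sum.inl t))).ConnOn S ↔
      ∀ p q : V ⊕ V', ReflTransGen (RJst H s t H' s' t' S) p q := by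
  have hsurj : Function.Surjective
      (fun z : V ⊕ V' =>
        (Quot.mk
          (fun a b : Quot (fun a b : V ⊕ V' =>
            (a = Sum.inl s ∧ b = Sum.inr s') ∨ (a = Sum.inl t ∧ b = Sum.inr t')) =>
              a = Quot.mk _ (Sum.inl s) ∧ b = Quot.mk _ (Sum.inl t))
          (Quot.mk _ z))) := by
    intro q
    induction q using Quot.ind with
    | _ a =>
      induction a using Quot.ind with
      | _ z => exact ⟨z, rfl⟩
  have key := connOn_comap (sumGraph H H') _ hsurj S
  have key2 : ((parallelJoin H s t H' s' t').identify
      (Quot.mk _ (Sum.inl s)) (Quot.mk _ (Sum.inl t))).ConnOn S ↔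
      ∀ p q : V ⊕ V', ReflTransGen (fun x y => (sumGraph H H').Adj S x y ∨
        (Quot.mk
          (fun a b : Quot (fun a b : V ⊕ V' =>
            (a = Sum.inl s ∧ b = Sum.inr s') ∨ (a = Sum.inl t ∧ b = Sum.inr t')) =>
              a = Quot.mk _ (Sum.inl s) ∧ b = Quot.mk _ (Sum.inl t))
          (Quot.mk _ x) = Quot.mk _ (Quot.mk _ y))) p q := key
  rw [key2]
  constructor
  · intro h p q
    refine rtg_mono_rtg ?_ (h p q)
    rintro x y (hadj | heq)
    · exact ReflTransGen.single (Or.inl hadj)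
    · rcases (double_mk_eq_iff hst hst' x y).mp heq with rfl | hl
      · exact ReflTransGen.refl
      · exact ReflTransGen.single (Or.inr hl)
  · intro h p q
    refine rtg_mono_rtg ?_ (h p q)
    rintro x y (hadj | hl)
    · exact ReflTransGen.single (Or.inl hadj)
    · exact ReflTransGen.single (Or.inr ((double_mk_eq_iff hst hst' x y).mpr (Or.inr hl)))

/-- Connectivity of the parallel join in terms of the two sides. -/
lemma join_connOn_iff (hst : s ≠ t) (hst' : s' ≠ t') :
    (parallelJoin H s t H' s' t').ConnOn S ↔
      ((H.ConnOn (Sum.inl ⁻¹' S) ∧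
          (H'.identify s' t').ConnOn ((Sum.inr : E' → E ⊕ E') ⁻¹' S)) ∨
        ((H.identify s t).ConnOn (Sum.inl ⁻¹' S) ∧
          H'.ConnOn ((Sum.inr : E' → E ⊕ E') ⁻¹' S))) := by
  rw [parallelJoin_connOn hst hst', rj_conn_iff,
    identify_connOn H s t (Sum.inl ⁻¹' S), identify_connOn H' s' t' ((Sum.inr : E' → E ⊕ E') ⁻¹' S)]
  exact Iff.rfl

/-- Connectivity of the doubly-identified parallel join in terms of the two sides. -/
lemma joinst_connOn_iff (hst : s ≠ t) (hst' : s' ≠ t') :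
    ((parallelJoin H s t H' s' t').identify
        (Quot.mk _ (Sum.inl s)) (Quot.mk _ (Sum.inl t))).ConnOn S ↔
      ((H.identify s t).ConnOn (Sum.inl ⁻¹' S) ∧
        (H'.identify s' t').ConnOn ((Sum.inr : E' → E ⊕ E') ⁻¹' S)) := by
  rw [joinIdentify_connOn hst hst', rjst_conn_iff,
    identify_connOn H s t (Sum.inl ⁻¹' S), identify_connOn H' s' t' ((Sum.inr : E' → E ⊕ E') ⁻¹' S)]
  exact Iff.rfl

end Join3

end MGAux
namespace MGAux

open Relation Multigraph Function

variable {V E V' E' : Type}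

lemma exists_reroute (G : Multigraph V E) [DecidableEq E] (T : Finset E) :
    ∀ {a b : V}, ReflTransGen (G.Adj ↑T) a b → a = b ∨
      ∃ e ∈ T, ((ReflTransGen (G.Adj ↑(T.erase e)) a (G.fst e) ∧
                 ReflTransGen (G.Adj ↑(T.erase e)) (G.snd e) b) ∨
                (ReflTransGen (G.Adj ↑(T.erase e)) a (G.snd e) ∧
                 ReflTransGen (G.Adj ↑(T.erase e)) (G.fst e) b)) := by
  induction T using Finset.strongInduction with
  | _ T ih =>
    intro a b h
    induction h using Relation.ReflTransGen.head_induction_on with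
    | refl => exact Or.inl rfl
    | @head a c hstep hrest ih2 =>
      obtain ⟨f, hf, hor⟩ := hstep
      have hf' : f ∈ T := hf
      rcases ih2 with rfl | ⟨e, he, hcase⟩
      · right
        refine ⟨f, hf', ?_⟩
        rcases hor with ⟨h1, h2⟩ | ⟨h1, h2⟩
        · exact Or.inl ⟨by rw [h1], by rw [h2]⟩
        · exact Or.inr ⟨by rw [h2], by rw [h1]⟩
      · by_cases hfe : f = e
        · subst hfe
          rcases hor with ⟨h1, h2⟩ | ⟨h1, h2⟩ <;> rcases hcase with ⟨hc1, hc2⟩ | ⟨hc1, hc2⟩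
          · exact Or.inr ⟨f, he, Or.inl ⟨by rw [h1], hc2⟩⟩
          · -- recurse : a ~ b inside T.erase f
            have hab : ReflTransGen (G.Adj ↑(T.erase f)) a b := h1 ▸ hc2
            rcases ih (T.erase f) (Finset.erase_ssubset he) hab with rfl | ⟨e', he', hcc⟩
            · exact Or.inl rfl
            · right
              refine ⟨e', Finset.mem_of_mem_erase he', ?_⟩
              have hsub : (↑((T.erase f).erase e') : Set E) ⊆ ↑(T.erase e') := by
                intro x hx
                simp only [Finset.coe_erase, Set.mem_diff, Set.mem_singleton_iff,
                  Finset.mem_coe] at hx ⊢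
                exact ⟨hx.1.1, hx.2⟩
              rcases hcc with ⟨c1, c2⟩ | ⟨c1, c2⟩
              · exact Or.inl ⟨ReflTransGen.mono (fun _ _ hh => adj_mono hsub hh) _ _ c1,
                  ReflTransGen.mono (fun _ _ hh => adj_mono hsub hh) _ _ c2⟩
              · exact Or.inr ⟨ReflTransGen.mono (fun _ _ hh => adj_mono hsub hh) _ _ c1,
                  ReflTransGen.mono (fun _ _ hh => adj_mono hsub hh) _ _ c2⟩
          · -- other recursion : hc2 : snd f ~ b, snd f = a
            have hab : ReflTransGen (G.Adj ↑(T.erase f)) a b := h2 ▸ hc2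
            rcases ih (T.erase f) (Finset.erase_ssubset he) hab with rfl | ⟨e', he', hcc⟩
            · exact Or.inl rfl
            · right
              refine ⟨e', Finset.mem_of_mem_erase he', ?_⟩
              have hsub : (↑((T.erase f).erase e') : Set E) ⊆ ↑(T.erase e') := by
                intro x hx
                simp only [Finset.coe_erase, Set.mem_diff, Set.mem_singleton_iff,
                  Finset.mem_coe] at hx ⊢
                exact ⟨hx.1.1, hx.2⟩
              rcases hcc with ⟨c1, c2⟩ | ⟨c1, c2⟩
              · exact Or.inl ⟨ReflTransGen.mono (fun _ _ hh => adj_mono hsub hh) _ _ c1,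
                  ReflTransGen.mono (fun _ _ hh => adj_mono hsub hh) _ _ c2⟩
              · exact Or.inr ⟨ReflTransGen.mono (fun _ _ hh => adj_mono hsub hh) _ _ c1,
                  ReflTransGen.mono (fun _ _ hh => adj_mono hsub hh) _ _ c2⟩
          · exact Or.inr ⟨f, he, Or.inr ⟨by rw [h2], hc2⟩⟩
        · have hstep' : G.Adj ↑(T.erase e) a c := by
            refine ⟨f, ?_, hor⟩
            simp only [Finset.coe_erase, Set.mem_diff, Set.mem_singleton_iff, Finset.mem_coe]
            exact ⟨hf', hfe⟩
          right
          rcases hcase with ⟨c1, c2⟩ | ⟨c1, c2⟩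
          · exact ⟨e, he, Or.inl ⟨(ReflTransGen.single hstep').trans c1, c2⟩⟩
          · exact ⟨e, he, Or.inr ⟨(ReflTransGen.single hstep').trans c1, c2⟩⟩

/-- A spanning tree of the graph with `s, t` identified is never connected
in the original graph (when `s ≠ t`): some edge could be dropped. -/
lemma not_connOn_of_identify_ST {G : Multigraph V E} [DecidableEq E] {s t : V} (hst : s ≠ t)
    {T : Finset E} (hT : (G.identify s t).IsSpanningTree T) : ¬ G.ConnOn ↑T := by
  intro hc
  obtain ⟨hq, hmin⟩ := hT
  rcases exists_reroute G T (hc s t) with h | ⟨e, he, hcase⟩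
  · exact hst h
  · apply hmin e he
    rw [identify_connOn] at hq ⊢
    intro u v
    have hRLsymm : ∀ x y : V,
        (G.Adj ↑(T.erase e) x y ∨ LinkRel s t x y) →
        (G.Adj ↑(T.erase e) y x ∨ LinkRel s t y x) := by
      rintro x y (hh | hh)
      · exact Or.inl (adj_symm hh)
      · exact Or.inr (linkRel_symm hh)
    have hend : ReflTransGen (fun x y => G.Adj ↑(T.erase e) x y ∨ LinkRel s t x y)
        (G.fst e) (G.snd e) := by
      rcases hcase with ⟨c1, c2⟩ | ⟨c1, c2⟩
      · -- s ~ fst e , snd e ~ t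
        have p1 : ReflTransGen (fun x y => G.Adj ↑(T.erase e) x y ∨ LinkRel s t x y)
            (G.fst e) s :=
          (@ReflTransGen.stdSymm _ _ ⟨fun _ _ => hRLsymm _ _⟩).symm _ _
            (ReflTransGen.mono (fun _ _ hh => Or.inl hh) _ _ c1)
        have p2 : ReflTransGen (fun x y => G.Adj ↑(T.erase e) x y ∨ LinkRel s t x y)
            t (G.snd e) :=
          (@ReflTransGen.stdSymm _ _ ⟨fun _ _ => hRLsymm _ _⟩).symm _ _
            (ReflTransGen.mono (fun _ _ hh => Or.inl hh) _ _ c2)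
        exact (p1.tail (Or.inr (Or.inl ⟨rfl, rfl⟩))).trans p2
      · -- s ~ snd e , fst e ~ t
        have p1 : ReflTransGen (fun x y => G.Adj ↑(T.erase e) x y ∨ LinkRel s t x y)
            (G.fst e) t := ReflTransGen.mono (fun _ _ hh => Or.inl hh) _ _ c2
        have p2 : ReflTransGen (fun x y => G.Adj ↑(T.erase e) x y ∨ LinkRel s t x y)
            s (G.snd e) := ReflTransGen.mono (fun _ _ hh => Or.inl hh) _ _ c1
        exact (p1.tail (Or.inr (Or.inr ⟨rfl, rfl⟩))).trans p2
    refine rtg_mono_rtg ?_ (hq u v)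
    rintro x y (⟨f, hf, hor⟩ | hl)
    · by_cases hfe : f = e
      · subst hfe
        rcases hor with ⟨h1, h2⟩ | ⟨h1, h2⟩
        · rw [← h1, ← h2]; exact hend
        · rw [← h1, ← h2]
          exact (@ReflTransGen.stdSymm _ _ ⟨fun _ _ => hRLsymm _ _⟩).symm _ _ hend
      · refine ReflTransGen.single (Or.inl ⟨f, ?_, hor⟩)
        simp only [Finset.coe_erase, Set.mem_diff, Set.mem_singleton_iff, Finset.mem_coe]
        exact ⟨hf, hfe⟩
    · exact ReflTransGen.single (Or.inr hl)

end MGAux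
namespace MGAux

open Relation Multigraph Function

section STChar

variable {V E V' E' : Type} [DecidableEq E] [DecidableEq E']

lemma connOn_mono {G : Multigraph V E} {S S' : Set E} (h : S ⊆ S') (hc : G.ConnOn S) :
    G.ConnOn S' := fun u v => ReflTransGen.mono (fun _ _ hh => adj_mono h hh) _ _ (hc u v)

lemma coe_toLeft (T : Finset (E ⊕ E')) :
    (↑T.toLeft : Set E) = Sum.inl ⁻¹' (↑T : Set (E ⊕ E')) := by
  ext x; simp

lemma coe_toRight (T : Finset (E ⊕ E')) :
    (↑T.toRight : Set E') = (Sum.inr : E' → E ⊕ E') ⁻¹' (↑T : Set (E ⊕ E')) := by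
  ext x; simp

lemma preim_inl_erase_inl (T : Finset (E ⊕ E')) (e : E) :
    Sum.inl ⁻¹' (↑(T.erase (Sum.inl e)) : Set (E ⊕ E')) = ↑(T.toLeft.erase e) := by
  ext x; simp [Finset.mem_erase]

lemma preim_inr_erase_inl (T : Finset (E ⊕ E')) (e : E) :
    (Sum.inr : E' → E ⊕ E') ⁻¹' (↑(T.erase (Sum.inl e)) : Set (E ⊕ E')) = ↑T.toRight := by
  ext x; simp [Finset.mem_erase]

lemma preim_inl_erase_inr (T : Finset (E ⊕ E')) (e : E') :
    Sum.inl ⁻¹' (↑(T.erase (Sum.inr e)) : Set (E ⊕ E')) = ↑T.toLeft := by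
  ext x; simp [Finset.mem_erase]

lemma preim_inr_erase_inr (T : Finset (E ⊕ E')) (e : E') :
    (Sum.inr : E' → E ⊕ E') ⁻¹' (↑(T.erase (Sum.inr e)) : Set (E ⊕ E')) = ↑(T.toRight.erase e) := by
  ext x; simp [Finset.mem_erase]

variable {H : Multigraph V E} {s t : V} {H' : Multigraph V' E'} {s' t' : V'}

lemma join_connOn_finset (hst : s ≠ t) (hst' : s' ≠ t') {T : Finset (E ⊕ E')} :
    (parallelJoin H s t H' s' t').ConnOn ↑T ↔
      ((H.ConnOn ↑T.toLeft ∧ (H'.identify s' t').ConnOn ↑T.toRight) ∨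
        ((H.identify s t).ConnOn ↑T.toLeft ∧ H'.ConnOn ↑T.toRight)) := by
  rw [join_connOn_iff hst hst', coe_toLeft, coe_toRight]

lemma join_connOn_erase_inl (hst : s ≠ t) (hst' : s' ≠ t') {T : Finset (E ⊕ E')} {e : E} :
    (parallelJoin H s t H' s' t').ConnOn ↑(T.erase (Sum.inl e)) ↔
      ((H.ConnOn ↑(T.toLeft.erase e) ∧ (H'.identify s' t').ConnOn ↑T.toRight) ∨
        ((H.identify s t).ConnOn ↑(T.toLeft.erase e) ∧ H'.ConnOn ↑T.toRight)) := by
  rw [join_connOn_iff hst hst', preim_inl_erase_inl, preim_inr_erase_inl]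

lemma join_connOn_erase_inr (hst : s ≠ t) (hst' : s' ≠ t') {T : Finset (E ⊕ E')} {e : E'} :
    (parallelJoin H s t H' s' t').ConnOn ↑(T.erase (Sum.inr e)) ↔
      ((H.ConnOn ↑T.toLeft ∧ (H'.identify s' t').ConnOn ↑(T.toRight.erase e)) ∨
        ((H.identify s t).ConnOn ↑T.toLeft ∧ H'.ConnOn ↑(T.toRight.erase e))) := by
  rw [join_connOn_iff hst hst', preim_inl_erase_inr, preim_inr_erase_inr]

lemma joinst_connOn_finset (hst : s ≠ t) (hst' : s' ≠ t') {T : Finset (E ⊕ E')} :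
    ((parallelJoin H s t H' s' t').identify
        (Quot.mk _ (Sum.inl s)) (Quot.mk _ (Sum.inl t))).ConnOn ↑T ↔
      ((H.identify s t).ConnOn ↑T.toLeft ∧ (H'.identify s' t').ConnOn ↑T.toRight) := by
  rw [joinst_connOn_iff hst hst', coe_toLeft, coe_toRight]

lemma joinst_connOn_erase_inl (hst : s ≠ t) (hst' : s' ≠ t') {T : Finset (E ⊕ E')} {e : E} :
    ((parallelJoin H s t H' s' t').identify
        (Quot.mk _ (Sum.inl s)) (Quot.mk _ (Sum.inl t))).ConnOn ↑(T.erase (Sum.inl e)) ↔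
      ((H.identify s t).ConnOn ↑(T.toLeft.erase e) ∧
        (H'.identify s' t').ConnOn ↑T.toRight) := by
  rw [joinst_connOn_iff hst hst', preim_inl_erase_inl, preim_inr_erase_inl]

lemma joinst_connOn_erase_inr (hst : s ≠ t) (hst' : s' ≠ t') {T : Finset (E ⊕ E')} {e : E'} :
    ((parallelJoin H s t H' s' t').identify
        (Quot.mk _ (Sum.inl s)) (Quot.mk _ (Sum.inl t))).ConnOn ↑(T.erase (Sum.inr e)) ↔
      ((H.identify s t).ConnOn ↑T.toLeft ∧
        (H'.identify s' t').ConnOn ↑(T.toRight.erase e)) := by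
  rw [joinst_connOn_iff hst hst', preim_inl_erase_inr, preim_inr_erase_inr]

theorem join_ST_iff (hst : s ≠ t) (hst' : s' ≠ t') {T : Finset (E ⊕ E')} :
    (parallelJoin H s t H' s' t').IsSpanningTree T ↔
      ((H.IsSpanningTree T.toLeft ∧ (H'.identify s' t').IsSpanningTree T.toRight) ∨
        ((H.identify s t).IsSpanningTree T.toLeft ∧ H'.IsSpanningTree T.toRight)) := by
  constructor
  · rintro ⟨hconn, hmin⟩
    rw [join_connOn_finset hst hst'] at hconn
    rcases hconn with ⟨hc1, hq2⟩ | ⟨hq1, hc2⟩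
    · left
      refine ⟨⟨hc1, fun e heL hc1' => ?_⟩, ⟨hq2, fun e heR hq2' => ?_⟩⟩
      · exact hmin (Sum.inl e) (Finset.mem_toLeft.mp heL)
          ((join_connOn_erase_inl hst hst').mpr (Or.inl ⟨hc1', hq2⟩))
      · exact hmin (Sum.inr e) (Finset.mem_toRight.mp heR)
          ((join_connOn_erase_inr hst hst').mpr (Or.inl ⟨hc1, hq2'⟩))
    · right
      refine ⟨⟨hq1, fun e heL hq1' => ?_⟩, ⟨hc2, fun e heR hc2' => ?_⟩⟩
      · exact hmin (Sum.inl e) (Finset.mem_toLeft.mp heL)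
          ((join_connOn_erase_inl hst hst').mpr (Or.inr ⟨hq1', hc2⟩))
      · exact hmin (Sum.inr e) (Finset.mem_toRight.mp heR)
          ((join_connOn_erase_inr hst hst').mpr (Or.inr ⟨hq1, hc2'⟩))
  · rintro (⟨⟨hc1, hm1⟩, ⟨hq2, hm2⟩⟩ | ⟨⟨hq1, hm1⟩, ⟨hc2, hm2⟩⟩)
    · refine ⟨(join_connOn_finset hst hst').mpr (Or.inl ⟨hc1, hq2⟩), ?_⟩
      rintro (e | e) hfT
      · rw [join_connOn_erase_inl hst hst']
        rintro (⟨hc1', _⟩ | ⟨_, hc2'⟩)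
        · exact hm1 e (Finset.mem_toLeft.mpr hfT) hc1'
        · exact not_connOn_of_identify_ST hst' ⟨hq2, hm2⟩ hc2'
      · rw [join_connOn_erase_inr hst hst']
        rintro (⟨_, hq2'⟩ | ⟨_, hc2'⟩)
        · exact hm2 e (Finset.mem_toRight.mpr hfT) hq2'
        · exact not_connOn_of_identify_ST hst' ⟨hq2, hm2⟩
            (connOn_mono (Finset.coe_subset.mpr (Finset.erase_subset _ _)) hc2')
    · refine ⟨(join_connOn_finset hst hst').mpr (Or.inr ⟨hq1, hc2⟩), ?_⟩
      rintro (e | e) hfT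
      · rw [join_connOn_erase_inl hst hst']
        rintro (⟨hc1', _⟩ | ⟨hq1', _⟩)
        · exact not_connOn_of_identify_ST hst ⟨hq1, hm1⟩
            (connOn_mono (Finset.coe_subset.mpr (Finset.erase_subset _ _)) hc1')
        · exact hm1 e (Finset.mem_toLeft.mpr hfT) hq1'
      · rw [join_connOn_erase_inr hst hst']
        rintro (⟨hc1', _⟩ | ⟨_, hc2'⟩)
        · exact not_connOn_of_identify_ST hst ⟨hq1, hm1⟩ hc1'
        · exact hm2 e (Finset.mem_toRight.mpr hfT) hc2'

theorem join_ST_not_both (hst : s ≠ t) {T : Finset (E ⊕ E')} :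
    ¬((H.IsSpanningTree T.toLeft ∧ (H'.identify s' t').IsSpanningTree T.toRight) ∧
      ((H.identify s t).IsSpanningTree T.toLeft ∧ H'.IsSpanningTree T.toRight)) := by
  rintro ⟨⟨h1, _⟩, ⟨h2, _⟩⟩
  exact not_connOn_of_identify_ST hst h2 h1.1

theorem joinst_ST_iff (hst : s ≠ t) (hst' : s' ≠ t') {T : Finset (E ⊕ E')} :
    ((parallelJoin H s t H' s' t').identify
        (Quot.mk _ (Sum.inl s)) (Quot.mk _ (Sum.inl t))).IsSpanningTree T ↔
      ((H.identify s t).IsSpanningTree T.toLeft ∧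
        (H'.identify s' t').IsSpanningTree T.toRight) := by
  constructor
  · rintro ⟨hconn, hmin⟩
    rw [joinst_connOn_finset hst hst'] at hconn
    obtain ⟨hq1, hq2⟩ := hconn
    refine ⟨⟨hq1, fun e heL hq1' => ?_⟩, ⟨hq2, fun e heR hq2' => ?_⟩⟩
    · exact hmin (Sum.inl e) (Finset.mem_toLeft.mp heL)
        ((joinst_connOn_erase_inl hst hst').mpr ⟨hq1', hq2⟩)
    · exact hmin (Sum.inr e) (Finset.mem_toRight.mp heR)
        ((joinst_connOn_erase_inr hst hst').mpr ⟨hq1, hq2'⟩)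
  · rintro ⟨⟨hq1, hm1⟩, ⟨hq2, hm2⟩⟩
    refine ⟨(joinst_connOn_finset hst hst').mpr ⟨hq1, hq2⟩, ?_⟩
    rintro (e | e) hfT
    · rw [joinst_connOn_erase_inl hst hst']
      rintro ⟨hq1', _⟩
      exact hm1 e (Finset.mem_toLeft.mpr hfT) hq1'
    · rw [joinst_connOn_erase_inr hst hst']
      rintro ⟨_, hq2'⟩
      exact hm2 e (Finset.mem_toRight.mpr hfT) hq2'

end STChar

end MGAux
namespace MGAux

open Relation Multigraph Function MvPolynomial

section Poly

variable {V E V' E' W : Type} [Fintype E] [DecidableEq E] [Fintype E'] [DecidableEq E']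

/-- The reindexing equivalence between pairs of finsets and finsets of a sum. -/
def finsetSumEquiv : Finset E × Finset E' ≃ Finset (E ⊕ E') where
  toFun p := p.1.disjSum p.2
  invFun T := (T.toLeft, T.toRight)
  left_inv p := by simp [Finset.toLeft_disjSum, Finset.toRight_disjSum]
  right_inv T := Finset.toLeft_disjSum_toRight

lemma compl_disjSum (T₁ : Finset E) (T₂ : Finset E') :
    (T₁.disjSum T₂)ᶜ = T₁ᶜ.disjSum T₂ᶜ := by
  ext (e | e) <;> simp

lemma prod_compl_disjSum (T₁ : Finset E) (T₂ : Finset E') :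
    (∏ e ∈ (T₁.disjSum T₂)ᶜ, (MvPolynomial.X e : MvPolynomial (E ⊕ E') ℚ)) =
      (∏ e ∈ T₁ᶜ, (MvPolynomial.X (Sum.inl e) : MvPolynomial (E ⊕ E') ℚ)) *
        ∏ e ∈ T₂ᶜ, (MvPolynomial.X (Sum.inr e) : MvPolynomial (E ⊕ E') ℚ) := by
  rw [compl_disjSum, Finset.prod_disjSum]

open Classical in
lemma kirchhoff_join_split (X : Multigraph W (E ⊕ E'))
    (P₁ Q₁ : Finset E → Prop) (P₂ Q₂ : Finset E' → Prop)
    (hchar : ∀ T : Finset (E ⊕ E'), X.IsSpanningTree T ↔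
      ((P₁ T.toLeft ∧ Q₂ T.toRight) ∨ (Q₁ T.toLeft ∧ P₂ T.toRight)))
    (hexcl : ∀ T : Finset (E ⊕ E'),
      ¬((P₁ T.toLeft ∧ Q₂ T.toRight) ∧ (Q₁ T.toLeft ∧ P₂ T.toRight))) :
    X.kirchhoff =
      (∑ T₁ : Finset E, if P₁ T₁ then ∏ e ∈ T₁ᶜ, MvPolynomial.X (Sum.inl e) else 0) *
          (∑ T₂ : Finset E', if Q₂ T₂ then ∏ e ∈ T₂ᶜ, MvPolynomial.X (Sum.inr e) else 0) +
        (∑ T₁ : Finset E, if Q₁ T₁ then ∏ e ∈ T₁ᶜ, MvPolynomial.X (Sum.inl e) else 0) *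
          (∑ T₂ : Finset E', if P₂ T₂ then ∏ e ∈ T₂ᶜ, MvPolynomial.X (Sum.inr e) else 0) := by
  have hreindex : X.kirchhoff = ∑ p : Finset E × Finset E',
      if X.IsSpanningTree (p.1.disjSum p.2) then
        ∏ e ∈ (p.1.disjSum p.2)ᶜ, (MvPolynomial.X e : MvPolynomial (E ⊕ E') ℚ) else 0 := by
    unfold Multigraph.kirchhoff
    exact (Fintype.sum_equiv finsetSumEquiv _ _ (fun p => rfl)).symm
  rw [hreindex, Fintype.sum_prod_type]
  have hpt : ∀ (T₁ : Finset E) (T₂ : Finset E'),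
      (if X.IsSpanningTree (T₁.disjSum T₂) then
          ∏ e ∈ (T₁.disjSum T₂)ᶜ, (MvPolynomial.X e : MvPolynomial (E ⊕ E') ℚ) else 0) =
        ((if P₁ T₁ then ∏ e ∈ T₁ᶜ, MvPolynomial.X (Sum.inl e) else 0) *
            (if Q₂ T₂ then ∏ e ∈ T₂ᶜ, MvPolynomial.X (Sum.inr e) else 0) +
          (if Q₁ T₁ then ∏ e ∈ T₁ᶜ, MvPolynomial.X (Sum.inl e) else 0) *
            (if P₂ T₂ then ∏ e ∈ T₂ᶜ, MvPolynomial.X (Sum.inr e) else 0)) := by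
    intro T₁ T₂
    have hch := hchar (T₁.disjSum T₂)
    have hex := hexcl (T₁.disjSum T₂)
    rw [Finset.toLeft_disjSum, Finset.toRight_disjSum] at hch hex
    rw [prod_compl_disjSum]
    by_cases h1 : P₁ T₁ <;> by_cases h2 : Q₂ T₂ <;> by_cases h3 : Q₁ T₁ <;>
      by_cases h4 : P₂ T₂ <;>
      simp only [h1, h2, h3, h4, and_true, and_false, true_and, false_and, or_true,
        or_false, or_self, if_true, if_false, hch, mul_zero, zero_mul, add_zero, zero_add,
        if_pos, if_neg, not_false_iff]
    · exact absurd ⟨⟨h1, h2⟩, ⟨h3, h4⟩⟩ hex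
    all_goals simp_all
  calc (∑ T₁ : Finset E, ∑ T₂ : Finset E',
        if X.IsSpanningTree (T₁.disjSum T₂) then
          ∏ e ∈ (T₁.disjSum T₂)ᶜ, (MvPolynomial.X e : MvPolynomial (E ⊕ E') ℚ) else 0)
      = ∑ T₁ : Finset E, ∑ T₂ : Finset E',
          ((if P₁ T₁ then ∏ e ∈ T₁ᶜ, MvPolynomial.X (Sum.inl e) else 0) *
              (if Q₂ T₂ then ∏ e ∈ T₂ᶜ, MvPolynomial.X (Sum.inr e) else 0) +
            (if Q₁ T₁ then ∏ e ∈ T₁ᶜ, MvPolynomial.X (Sum.inl e) else 0) *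
              (if P₂ T₂ then ∏ e ∈ T₂ᶜ, MvPolynomial.X (Sum.inr e) else 0)) := by
        exact Finset.sum_congr rfl fun T₁ _ => Finset.sum_congr rfl fun T₂ _ => hpt T₁ T₂
    _ = _ := by
        rw [Finset.sum_mul_sum, Finset.sum_mul_sum, ← Finset.sum_add_distrib]
        exact Finset.sum_congr rfl fun T₁ _ => by rw [← Finset.sum_add_distrib]

open Classical in
lemma rename_kirchhoff_inj {σ : Type} (Y : Multigraph V E) (f : E → σ) :
    MvPolynomial.rename f Y.kirchhoff =
      ∑ T : Finset E, if Y.IsSpanningTree T then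
        ∏ e ∈ Tᶜ, (MvPolynomial.X (f e) : MvPolynomial σ ℚ) else 0 := by
  unfold Multigraph.kirchhoff
  rw [map_sum]
  refine Finset.sum_congr rfl fun T _ => ?_
  rw [apply_ite (MvPolynomial.rename f), map_zero, map_prod]
  simp [MvPolynomial.rename_X]

end Poly

end MGAux
open Multigraph MvPolynomial in
/-- For the parallel join `G = H ⋆ H'` of source-terminal graphs with disjoint
edge sets: `Ψ_G = Ψ_H·Φ_{H'} + Φ_H·Ψ_{H'}` and `Φ_G = Φ_H·Φ_{H'}`. -/
theorem kirchhoff_parallelJoin {V E V' E' : Type}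
    [Fintype E] [DecidableEq E] [Fintype E'] [DecidableEq E']
    (H : Multigraph V E) (s t : V) (hst : s ≠ t)
    (H' : Multigraph V' E') (s' t' : V') (hst' : s' ≠ t') :
    (parallelJoin H s t H' s' t').kirchhoff =
        rename (Sum.inl : E → E ⊕ E') H.kirchhoff *
            rename (Sum.inr : E' → E ⊕ E') (H'.breaker s' t')
          + rename (Sum.inl : E → E ⊕ E') (H.breaker s t) *
            rename (Sum.inr : E' → E ⊕ E') H'.kirchhoff ∧
      (parallelJoin H s t H' s' t').breaker
          (Quot.mk _ (Sum.inl s)) (Quot.mk _ (Sum.inl t)) =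
        rename (Sum.inl : E → E ⊕ E') (H.breaker s t) *
          rename (Sum.inr : E' → E ⊕ E') (H'.breaker s' t') := by
  classical
  have hA1 := MGAux.rename_kirchhoff_inj H (Sum.inl : E → E ⊕ E')
  have hB2 := MGAux.rename_kirchhoff_inj (H'.identify s' t') (Sum.inr : E' → E ⊕ E')
  have hB1 := MGAux.rename_kirchhoff_inj (H.identify s t) (Sum.inl : E → E ⊕ E')
  have hA2 := MGAux.rename_kirchhoff_inj H' (Sum.inr : E' → E ⊕ E')
  constructor
  · have h1 := MGAux.kirchhoff_join_split (parallelJoin H s t H' s' t')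
      (fun T₁ => H.IsSpanningTree T₁) (fun T₁ => (H.identify s t).IsSpanningTree T₁)
      (fun T₂ => H'.IsSpanningTree T₂) (fun T₂ => (H'.identify s' t').IsSpanningTree T₂)
      (fun T => MGAux.join_ST_iff hst hst') (fun T => MGAux.join_ST_not_both hst)
    simp only [Multigraph.breaker]
    rw [hA1, hB2, hB1, hA2, h1]
  · have h2 := MGAux.kirchhoff_join_split
      ((parallelJoin H s t H' s' t').identify
        (Quot.mk _ (Sum.inl s)) (Quot.mk _ (Sum.inl t)))
      (fun _ => False) (fun T₁ => (H.identify s t).IsSpanningTree T₁)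
      (fun T₂ => (H'.identify s' t').IsSpanningTree T₂)
      (fun T₂ => (H'.identify s' t').IsSpanningTree T₂)
      (fun T => by
        rw [MGAux.joinst_ST_iff hst hst']
        constructor
        · intro h; exact Or.inr h
        · rintro (⟨h, _⟩ | h)
          · exact absurd h not_false
          · exact h)
      (fun T => by rintro ⟨⟨h, _⟩, _⟩; exact h)
    simp only [Multigraph.breaker]
    rw [hB1, hB2, h2]
    simp
end

section
/- Let G be a connected multigraph and e an edge such that e is neither a bridge nor a self-loop. Then Condition 1 for (G,e), i.e. Ψ_G ∈ ⟨∂Ψ_{G∖e}⟩, is equivalent to Ψ_{G/e} ∈ ⟨∂Ψ_{G∖e}⟩. -/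
set_option linter.unusedSectionVars false

namespace Multigraph

variable {V E : Type}

abbrev Reach (G : Multigraph V E) (S : Set E) (u v : V) : Prop :=
  Relation.ReflTransGen (G.Adj S) u v

theorem Adj.symm {G : Multigraph V E} {S : Set E} {u v : V} (h : G.Adj S u v) : G.Adj S v u := by
  obtain ⟨f, hf, h⟩ := h
  exact ⟨f, hf, h.symm⟩

theorem Reach.symm {G : Multigraph V E} {S : Set E} {u v : V} (h : G.Reach S u v) :
    G.Reach S v u := by
  induction h with
  | refl => exact .refl
  | tail _ h ih => exact Relation.ReflTransGen.head h.symm ih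

theorem Adj.mono {G : Multigraph V E} {S S' : Set E} (hS : S ⊆ S') {u v : V}
    (h : G.Adj S u v) : G.Adj S' u v := by
  obtain ⟨f, hf, h⟩ := h
  exact ⟨f, hS hf, h⟩

theorem Reach.mono {G : Multigraph V E} {S S' : Set E} (hS : S ⊆ S') {u v : V}
    (h : G.Reach S u v) : G.Reach S' u v :=
  Relation.ReflTransGen.mono (fun _ _ h => h.mono hS) _ _ h

theorem ConnOn.mono {G : Multigraph V E} {S S' : Set E} (hS : S ⊆ S')
    (h : G.ConnOn S) : G.ConnOn S' := fun u v => Reach.mono hS (h u v)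

theorem Reach.simulate {G : Multigraph V E} {S S' : Set E}
    (h : ∀ f ∈ S, G.Reach S' (G.fst f) (G.snd f)) {u v : V}
    (hr : G.Reach S u v) : G.Reach S' u v := by
  induction hr with
  | refl => exact .refl
  | tail _ hadj ih =>
    obtain ⟨f, hf, hc⟩ := hadj
    rcases hc with ⟨h1, h2⟩ | ⟨h1, h2⟩
    · exact ih.trans (h1 ▸ h2 ▸ h f hf)
    · exact ih.trans (h2 ▸ h1 ▸ Reach.symm (h f hf))

theorem ConnOn.simulate {G : Multigraph V E} {S S' : Set E}
    (h : ∀ f ∈ S, G.Reach S' (G.fst f) (G.snd f)) (hc : G.ConnOn S) : G.ConnOn S' :=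
  fun u v => Reach.simulate h (hc u v)

theorem exists_crossing {G : Multigraph V E} {S : Set E} {C : Set V} {a b : V}
    (hr : G.Reach S a b) (ha : a ∈ C) (hb : b ∉ C) :
    ∃ y ∈ S, (G.fst y ∈ C ∧ G.snd y ∉ C) ∨ (G.snd y ∈ C ∧ G.fst y ∉ C) := by
  induction hr with
  | refl => exact absurd ha hb
  | @tail c d _ hadj ih =>
    by_cases hc : c ∈ C
    · obtain ⟨f, hf, h⟩ := hadj
      refine ⟨f, hf, ?_⟩
      rcases h with ⟨h1, h2⟩ | ⟨h1, h2⟩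
      · exact Or.inl ⟨h1 ▸ hc, h2 ▸ hb⟩
      · exact Or.inr ⟨h2 ▸ hc, h1 ▸ hb⟩
    · exact ih hc

section Cut

variable [DecidableEq E] {G : Multigraph V E} {S : Finset E} {x : E}

/-- Every vertex lies on one of the two sides of the cut of `x`. -/
theorem cut_cover (hS : G.ConnOn ↑S) (v : V) :
    G.Reach ↑(S.erase x) (G.fst x) v ∨ G.Reach ↑(S.erase x) (G.snd x) v := by
  have h := hS (G.fst x) v
  clear hS
  induction h with
  | refl => exact Or.inl .refl
  | @tail b c _ hadj ih =>
    obtain ⟨f, hf, hc⟩ := hadj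
    by_cases hfx : f = x
    · subst hfx
      rcases hc with ⟨h1, h2⟩ | ⟨h1, h2⟩
      · exact Or.inr (h2 ▸ Relation.ReflTransGen.refl)
      · exact Or.inl (h1 ▸ Relation.ReflTransGen.refl)
    · have hf' : f ∈ (↑(S.erase x) : Set E) := by
        exact Finset.mem_coe.mpr (Finset.mem_erase.mpr ⟨hfx, hf⟩)
      rcases ih with ih | ih
      · exact Or.inl (ih.tail ⟨f, hf', hc⟩)
      · exact Or.inr (ih.tail ⟨f, hf', hc⟩)

theorem reach_erase_endpoints (hS : G.ConnOn ↑S)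
    (hxx : G.Reach ↑(S.erase x) (G.fst x) (G.snd x)) : G.ConnOn ↑(S.erase x) := by
  refine ConnOn.simulate (fun f hf => ?_) hS
  by_cases hfx : f = x
  · exact hfx ▸ hxx
  · exact Relation.ReflTransGen.single ⟨f, by exact Finset.mem_coe.mpr (Finset.mem_erase.mpr ⟨hfx, hf⟩), Or.inl ⟨rfl, rfl⟩⟩

theorem cut_disjoint (hS : G.ConnOn ↑S) (hx : ¬ G.ConnOn ↑(S.erase x)) {v : V}
    (h1 : G.Reach ↑(S.erase x) (G.fst x) v) (h2 : G.Reach ↑(S.erase x) (G.snd x) v) :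
    False :=
  hx (reach_erase_endpoints hS (h1.trans h2.symm))

end Cut

section Card

variable [DecidableEq E] {G : Multigraph V E}

theorem exists_spanningTree_subset :
    ∀ S : Finset E, G.ConnOn ↑S → ∃ T ⊆ S, G.IsSpanningTree T := by
  intro S
  induction S using Finset.strongInduction with
  | _ S ih =>
    intro hS
    by_cases h : ∀ x ∈ S, ¬ G.ConnOn ↑(S.erase x)
    · exact ⟨S, subset_rfl, hS, h⟩
    · push_neg at h
      obtain ⟨x, hxS, hx⟩ := h
      obtain ⟨T, hT1, hT2⟩ := ih (S.erase x) (Finset.erase_ssubset hxS) hx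
      exact ⟨T, hT1.trans (Finset.erase_subset _ _), hT2⟩

theorem exists_minimal_connector {a b : V} :
    ∀ S : Finset E, G.Reach ↑S a b →
      ∃ S' ⊆ S, G.Reach ↑S' a b ∧ ∀ y ∈ S', ¬ G.Reach ↑(S'.erase y) a b := by
  intro S
  induction S using Finset.strongInduction with
  | _ S ih =>
    intro hS
    by_cases h : ∀ x ∈ S, ¬ G.Reach ↑(S.erase x) a b
    · exact ⟨S, subset_rfl, hS, h⟩
    · push_neg at h
      obtain ⟨x, hxS, hx⟩ := h
      obtain ⟨S', h1, h2⟩ := ih (S.erase x) (Finset.erase_ssubset hxS) hx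
      exact ⟨S', h1.trans (Finset.erase_subset _ _), h2⟩

theorem IsSpanningTree.card_le {T : Finset E} (hT : G.IsSpanningTree T) :
    ∀ S : Finset E, G.ConnOn ↑S → T.card ≤ S.card := by
  suffices H : ∀ (n : ℕ) (S : Finset E), (S \ T).card = n → G.ConnOn ↑S → T.card ≤ S.card by
    intro S hS; exact H _ S rfl hS
  intro n
  induction n using Nat.strong_induction_on with
  | _ n ih =>
    intro S hn hS
    by_cases hsub : S ⊆ T
    · have : T = S := by
        apply Finset.Subset.antisymm _ hsub
        intro x hx
        by_contra hxS
        refine hT.2 x hx (hS.mono ?_)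
        intro y hy
        simp only [Finset.coe_erase, Set.mem_diff, Set.mem_singleton_iff]
        exact ⟨hsub hy, fun h => hxS (h ▸ hy)⟩
      exact le_of_eq (by rw [this])
    · obtain ⟨y, hyS, hyT⟩ := Finset.not_subset.mp hsub
      by_cases hcy : G.ConnOn ↑(S.erase y)
      · have hmem : y ∈ S \ T := Finset.mem_sdiff.mpr ⟨hyS, hyT⟩
        have hlt : ((S.erase y) \ T).card < n := by
          rw [Finset.erase_sdiff_comm, ← hn]
          exact Finset.card_erase_lt_of_mem hmem
        calc T.card ≤ (S.erase y).card := ih _ hlt _ rfl hcy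
          _ ≤ S.card := Finset.card_le_card (Finset.erase_subset _ _)
      · -- cut argument
        set C : Set V := {v | G.Reach ↑(S.erase y) (G.fst y) v} with hC
        have hfyC : G.fst y ∈ C := Relation.ReflTransGen.refl
        have hsyC : G.snd y ∉ C := fun h => cut_disjoint hS hcy h .refl
        obtain ⟨x, hxT, hcross⟩ := exists_crossing (hT.1 (G.fst y) (G.snd y)) hfyC hsyC
        have hxT' : x ∈ T := hxT
        -- x is not in S.erase y
        have hxSe : x ∉ S.erase y := by
          intro hmem
          rcases hcross with ⟨h1, h2⟩ | ⟨h1, h2⟩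
          · exact h2 (h1.tail ⟨x, Finset.mem_coe.mpr hmem, Or.inl ⟨rfl, rfl⟩⟩)
          · exact h2 (h1.tail ⟨x, Finset.mem_coe.mpr hmem, Or.inr ⟨rfl, rfl⟩⟩)
        have hxy : x ≠ y := fun h => hyT (h ▸ hxT')
        set S' : Finset E := insert x (S.erase y) with hS'
        have hsub' : (↑(S.erase y) : Set E) ⊆ ↑S' := by
          intro z hz; simp only [hS', Finset.coe_insert, Set.mem_insert_iff]; exact Or.inr hz
        have hconn' : G.ConnOn ↑S' := by
          refine hS.simulate (fun f hf => ?_)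
          by_cases hfy : f = y
          · rw [hfy]
            have hx_step : G.Reach ↑S' (G.fst x) (G.snd x) :=
              Relation.ReflTransGen.single ⟨x, by simp [hS'], Or.inl ⟨rfl, rfl⟩⟩
            rcases hcross with ⟨h1, h2⟩ | ⟨h1, h2⟩
            · have hc2 : G.Reach ↑(S.erase y) (G.snd y) (G.snd x) := by
                rcases cut_cover (x := y) hS (G.snd x) with h | h
                · exact absurd h h2
                · exact h
              exact ((Reach.mono hsub' h1).trans hx_step).trans (Reach.mono hsub' hc2).symm
            · have hc2 : G.Reach ↑(S.erase y) (G.snd y) (G.fst x) := by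
                rcases cut_cover (x := y) hS (G.fst x) with h | h
                · exact absurd h h2
                · exact h
              exact ((Reach.mono hsub' h1).trans hx_step.symm).trans (Reach.mono hsub' hc2).symm
          · exact Relation.ReflTransGen.single
              ⟨f, hsub' (Finset.mem_coe.mpr (Finset.mem_erase.mpr ⟨hfy, hf⟩)), Or.inl ⟨rfl, rfl⟩⟩
        have hmem : y ∈ S \ T := Finset.mem_sdiff.mpr ⟨hyS, hyT⟩
        have hlt : (S' \ T).card < n := by
          rw [hS', Finset.insert_sdiff_of_mem _ hxT', Finset.erase_sdiff_comm, ← hn]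
          exact Finset.card_erase_lt_of_mem hmem
        have hcard : S'.card = S.card := by
          rw [hS', Finset.card_insert_of_notMem hxSe, Finset.card_erase_add_one hyS]
        calc T.card ≤ S'.card := ih _ hlt _ rfl hconn'
          _ = S.card := hcard

theorem IsSpanningTree.card_eq {T₁ T₂ : Finset E} (h₁ : G.IsSpanningTree T₁)
    (h₂ : G.IsSpanningTree T₂) : T₁.card = T₂.card :=
  le_antisymm (h₁.card_le T₂ h₂.1) (h₂.card_le T₁ h₁.1)

end Card


section DeleteContract

variable [DecidableEq E] (G : Multigraph V E) (e : E)

/-- The subtype embedding for edges other than `e`. -/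
def emb : {e' : E // e' ≠ e} ↪ E := Function.Embedding.subtype _

variable {G e}

theorem e_not_mem_map {S : Finset {e' : E // e' ≠ e}} : e ∉ S.map (emb e) := by
  simp only [Finset.mem_map]
  rintro ⟨f, _, hf⟩
  exact f.2 hf

theorem adj_delete_iff {S : Finset {e' : E // e' ≠ e}} {u v : V} :
    (G.delete e).Adj ↑S u v ↔ G.Adj ↑(S.map (emb e)) u v := by
  constructor
  · rintro ⟨f, hf, hc⟩
    exact ⟨f.val, Finset.mem_coe.mpr (Finset.mem_map_of_mem _ hf), hc⟩
  · rintro ⟨g, hg, hc⟩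
    obtain ⟨f, hf, rfl⟩ := Finset.mem_map.mp (Finset.mem_coe.mp hg)
    exact ⟨f, hf, hc⟩

theorem reach_delete_iff {S : Finset {e' : E // e' ≠ e}} {u v : V} :
    (G.delete e).Reach ↑S u v ↔ G.Reach ↑(S.map (emb e)) u v := by
  constructor
  · exact fun h => Relation.ReflTransGen.mono (fun _ _ hh => adj_delete_iff.mp hh) _ _ h
  · exact fun h => Relation.ReflTransGen.mono (fun _ _ hh => adj_delete_iff.mpr hh) _ _ h

theorem connOn_delete_iff {S : Finset {e' : E // e' ≠ e}} :
    (G.delete e).ConnOn ↑S ↔ G.ConnOn ↑(S.map (emb e)) := by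
  constructor <;> intro h u v
  · exact Relation.ReflTransGen.mono (fun _ _ hh => adj_delete_iff.mp hh) _ _ (h u v)
  · exact Relation.ReflTransGen.mono (fun _ _ hh => adj_delete_iff.mpr hh) _ _ (h u v)

theorem isSpanningTree_delete_iff {S : Finset {e' : E // e' ≠ e}} :
    (G.delete e).IsSpanningTree S ↔ G.IsSpanningTree (S.map (emb e)) := by
  unfold IsSpanningTree
  rw [connOn_delete_iff]
  refine and_congr Iff.rfl ?_
  constructor
  · intro h g hg
    obtain ⟨f, hf, rfl⟩ := Finset.mem_map.mp hg
    rw [← Finset.map_erase]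
    exact fun hc => h f hf (connOn_delete_iff.mpr hc)
  · intro h f hf
    have := h (emb e f) (Finset.mem_map_of_mem _ hf)
    rw [← Finset.map_erase] at this
    exact fun hc => this (connOn_delete_iff.mp hc)


end DeleteContract

section Contract

variable [DecidableEq E] {G : Multigraph V E} {e : E}

/-- The quotient map for contraction. -/
abbrev qmk (G : Multigraph V E) (e : E) : V → Quot fun a b : V => a = G.fst e ∧ b = G.snd e :=
  Quot.mk _

theorem qmk_fst_snd : qmk G e (G.fst e) = qmk G e (G.snd e) := Quot.sound ⟨rfl, rfl⟩

theorem qmk_eq_iff {u v : V} :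
    qmk G e u = qmk G e v ↔
      u = v ∨ (u = G.fst e ∧ v = G.snd e) ∨ (u = G.snd e ∧ v = G.fst e) := by
  constructor
  · intro h
    rw [Quot.eq] at h
    induction h with
    | rel x y hr => exact Or.inr (Or.inl hr)
    | refl x => exact Or.inl rfl
    | symm x y _ ih =>
      rcases ih with h | ⟨h1, h2⟩ | ⟨h1, h2⟩
      · exact Or.inl h.symm
      · exact Or.inr (Or.inr ⟨h2, h1⟩)
      · exact Or.inr (Or.inl ⟨h2, h1⟩)
    | trans x y z _ _ ih1 ih2 =>
      rcases ih1 with h | ⟨h1, h2⟩ | ⟨h1, h2⟩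
      · exact h ▸ ih2
      · rcases ih2 with h' | ⟨h3, h4⟩ | ⟨h3, h4⟩
        · exact Or.inr (Or.inl ⟨h1, h' ▸ h2⟩)
        · exact Or.inr (Or.inl ⟨h1, h4⟩)
        · exact Or.inl (h1.trans h4.symm)
      · rcases ih2 with h' | ⟨h3, h4⟩ | ⟨h3, h4⟩
        · exact Or.inr (Or.inr ⟨h1, h' ▸ h2⟩)
        · exact Or.inl (h1.trans h4.symm)
        · exact Or.inr (Or.inr ⟨h1, h4⟩)
  · rintro (rfl | ⟨rfl, rfl⟩ | ⟨rfl, rfl⟩)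
    · rfl
    · exact qmk_fst_snd
    · exact qmk_fst_snd.symm

/-- Vertices with equal image in the contraction are joined by `e` in `G`. -/
theorem reach_of_qmk_eq {T₀ : Finset E} (he : e ∈ T₀) {u v : V}
    (h : qmk G e u = qmk G e v) : G.Reach ↑T₀ u v := by
  rcases qmk_eq_iff.mp h with rfl | ⟨rfl, rfl⟩ | ⟨rfl, rfl⟩
  · exact .refl
  · exact Relation.ReflTransGen.single ⟨e, Finset.mem_coe.mpr he, Or.inl ⟨rfl, rfl⟩⟩
  · exact Relation.ReflTransGen.single ⟨e, Finset.mem_coe.mpr he, Or.inr ⟨rfl, rfl⟩⟩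

theorem reach_project {S : Finset {e' : E // e' ≠ e}} {T₀ : Finset E}
    (hsub : T₀ ⊆ insert e (S.map (emb e))) {u v : V} (h : G.Reach ↑T₀ u v) :
    (G.contract e).Reach ↑S (qmk G e u) (qmk G e v) := by
  induction h with
  | refl => exact .refl
  | @tail b c _ hadj ih =>
    obtain ⟨f, hf, hc⟩ := hadj
    rcases Finset.mem_insert.mp (hsub (Finset.mem_coe.mp hf)) with heq | hf'
    · -- the step uses `e`; endpoints get identified
      rw [heq] at hc
      have : qmk G e b = qmk G e c := by
        rcases hc with ⟨h1, h2⟩ | ⟨h1, h2⟩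
        · exact h1 ▸ h2 ▸ qmk_fst_snd
        · exact h2 ▸ h1 ▸ qmk_fst_snd.symm
      exact this ▸ ih
    · obtain ⟨f', hf'S, rfl⟩ := Finset.mem_map.mp hf'
      refine ih.tail ⟨f', Finset.mem_coe.mpr hf'S, ?_⟩
      rcases hc with ⟨h1, h2⟩ | ⟨h1, h2⟩
      · exact Or.inl ⟨congrArg (qmk G e) h1, congrArg (qmk G e) h2⟩
      · exact Or.inr ⟨congrArg (qmk G e) h1, congrArg (qmk G e) h2⟩

theorem reach_lift {S : Finset {e' : E // e' ≠ e}} {T₀ : Finset E}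
    (he : e ∈ T₀) (hsub : S.map (emb e) ⊆ T₀)
    {x y : Quot fun a b : V => a = G.fst e ∧ b = G.snd e}
    (h : (G.contract e).Reach ↑S x y) :
    ∀ u v : V, qmk G e u = x → qmk G e v = y → G.Reach ↑T₀ u v := by
  induction h with
  | refl => exact fun u v hu hv => reach_of_qmk_eq he (hu.trans hv.symm)
  | @tail b c _ hadj ih =>
    intro u v hu hv
    obtain ⟨f, hfS, hc⟩ := hadj
    have hfT : f.val ∈ T₀ := hsub (Finset.mem_map_of_mem _ (Finset.mem_coe.mp hfS))
    rcases hc with ⟨h1, h2⟩ | ⟨h1, h2⟩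
    · refine (ih u (G.fst f.val) hu h1).trans ?_
      refine Relation.ReflTransGen.head ⟨f.val, Finset.mem_coe.mpr hfT, Or.inl ⟨rfl, rfl⟩⟩ ?_
      exact reach_of_qmk_eq he (h2.trans hv.symm)
    · refine (ih u (G.snd f.val) hu h2).trans ?_
      refine Relation.ReflTransGen.head ⟨f.val, Finset.mem_coe.mpr hfT, Or.inr ⟨rfl, rfl⟩⟩ ?_
      exact reach_of_qmk_eq he (h1.trans hv.symm)

theorem connOn_contract_of {S : Finset {e' : E // e' ≠ e}} {T₀ : Finset E}
    (hT : G.ConnOn ↑T₀) (hsub : T₀ ⊆ insert e (S.map (emb e))) :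
    (G.contract e).ConnOn ↑S := by
  intro a b
  induction a using Quot.ind with | _ u =>
  induction b using Quot.ind with | _ v =>
  exact reach_project hsub (hT u v)

theorem connOn_of_contract {S : Finset {e' : E // e' ≠ e}} {T₀ : Finset E}
    (he : e ∈ T₀) (hsub : S.map (emb e) ⊆ T₀)
    (h : (G.contract e).ConnOn ↑S) : G.ConnOn ↑T₀ :=
  fun u v => reach_lift he hsub (h (qmk G e u) (qmk G e v)) u v rfl rfl

theorem reach_empty {a b : V} (h : G.Reach ↑(∅ : Finset E) a b) : a = b := by
  induction h with
  | refl => rfl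
  | tail _ hadj ih =>
    obtain ⟨f, hf, _⟩ := hadj
    simp at hf


theorem not_connOn_map_of_contract_tree (hloop : G.fst e ≠ G.snd e)
    {S : Finset {e' : E // e' ≠ e}} (hS : (G.contract e).IsSpanningTree S) :
    ¬ G.ConnOn ↑(S.map (emb e)) := by
  intro hc
  obtain ⟨T₀, hT₀sub, hT₀⟩ := exists_spanningTree_subset _ hc
  set S₀ : Finset {e' : E // e' ≠ e} := S.filter (fun f => (emb e) f ∈ T₀) with hS₀
  have hmap : S₀.map (emb e) = T₀ := by
    ext g
    simp only [Finset.mem_map, hS₀, Finset.mem_filter]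
    constructor
    · rintro ⟨f, ⟨_, h2⟩, rfl⟩; exact h2
    · intro hg
      obtain ⟨f, hf, rfl⟩ := Finset.mem_map.mp (hT₀sub hg)
      exact ⟨f, ⟨hf, hg⟩, rfl⟩
  have hconn₀ : (G.contract e).ConnOn ↑S₀ :=
    connOn_contract_of hT₀.1 (by rw [hmap]; exact Finset.subset_insert _ _)
  have hS₀S : S₀ = S :=
    Finset.eq_of_subset_of_card_le (Finset.filter_subset _ _) (hS.card_le S₀ hconn₀)
  have hTree : G.IsSpanningTree (S.map (emb e)) := by
    rw [← hS₀S, hmap]; exact hT₀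
  have hre : G.Reach ↑(S.map (emb e)) (G.fst e) (G.snd e) := hTree.1 _ _
  obtain ⟨S', hS'sub, hS'r, hS'min⟩ := exists_minimal_connector _ hre
  obtain ⟨y, hyS'⟩ : S'.Nonempty := by
    rcases Finset.eq_empty_or_nonempty S' with rfl | h
    · exact absurd (reach_empty hS'r) hloop
    · exact h
  have hymin := hS'min y hyS'
  set D : Set V := {v | G.Reach ↑(S'.erase y) (G.fst e) v} with hD
  set D' : Set V := {v | G.Reach ↑(S'.erase y) (G.snd e) v} with hD'
  have hDD' : ∀ v, v ∈ D → v ∈ D' → False := fun v h1 h2 =>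
    hymin (Relation.ReflTransGen.trans h1 (Reach.symm h2))
  have hfeD : G.fst e ∈ D := Relation.ReflTransGen.refl
  have hseD' : G.snd e ∈ D' := Relation.ReflTransGen.refl
  have hseD : G.snd e ∉ D := fun h => hymin h
  have hfeD' : G.fst e ∉ D' := fun h => hymin (Reach.symm h)
  obtain ⟨z, hz, hcross⟩ := exists_crossing hS'r hfeD hseD
  have hzy : z = y := by
    by_contra hne
    have hz' : z ∈ (↑(S'.erase y) : Set E) := Finset.mem_coe.mpr (Finset.mem_erase.mpr ⟨hne, hz⟩)
    rcases hcross with ⟨h1, h2⟩ | ⟨h1, h2⟩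
    · exact h2 (Relation.ReflTransGen.tail h1 ⟨z, hz', Or.inl ⟨rfl, rfl⟩⟩)
    · exact h2 (Relation.ReflTransGen.tail h1 ⟨z, hz', Or.inr ⟨rfl, rfl⟩⟩)
  subst hzy
  obtain ⟨z₂, hz₂, hcross₂⟩ := exists_crossing (Reach.symm hS'r) hseD' hfeD'
  have hzy₂ : z₂ = z := by
    by_contra hne
    have hz' : z₂ ∈ (↑(S'.erase z) : Set E) :=
      Finset.mem_coe.mpr (Finset.mem_erase.mpr ⟨hne, hz₂⟩)
    rcases hcross₂ with ⟨h1, h2⟩ | ⟨h1, h2⟩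
    · exact h2 (Relation.ReflTransGen.tail h1 ⟨z₂, hz', Or.inl ⟨rfl, rfl⟩⟩)
    · exact h2 (Relation.ReflTransGen.tail h1 ⟨z₂, hz', Or.inr ⟨rfl, rfl⟩⟩)
  subst hzy₂
  have hpd : (G.fst z₂ ∈ D ∧ G.snd z₂ ∈ D') ∨ (G.snd z₂ ∈ D ∧ G.fst z₂ ∈ D') := by
    rcases hcross with ⟨h1, h2⟩ | ⟨h1, h2⟩
    · rcases hcross₂ with ⟨h3, h4⟩ | ⟨h3, h4⟩
      · exact absurd h3 (fun h => hDD' _ h1 h)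
      · exact Or.inl ⟨h1, h3⟩
    · rcases hcross₂ with ⟨h3, h4⟩ | ⟨h3, h4⟩
      · exact Or.inr ⟨h1, h3⟩
      · exact absurd h3 (fun h => hDD' _ h1 h)
  have hyT : z₂ ∈ S.map (emb e) := hS'sub hyS'
  obtain ⟨y', hy'S, hy'val⟩ := Finset.mem_map.mp hyT
  have hproj : ∀ {a b : V}, G.Reach ↑((S.map (emb e)).erase z₂) a b →
      (G.contract e).Reach ↑(S.erase y') (qmk G e a) (qmk G e b) := by
    intro a b h
    refine reach_project ?_ h
    rw [Finset.map_erase, hy'val]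
    exact Finset.subset_insert _ _
  have hD_sub : (↑(S'.erase z₂) : Set E) ⊆ ↑((S.map (emb e)).erase z₂) := by
    intro w hw
    obtain ⟨h1, h2⟩ := Finset.mem_erase.mp (Finset.mem_coe.mp hw)
    exact Finset.mem_coe.mpr (Finset.mem_erase.mpr ⟨h1, hS'sub h2⟩)
  have hq : qmk G e (G.fst e) = qmk G e (G.snd e) := qmk_fst_snd
  have hkey : (G.contract e).Reach ↑(S.erase y') (qmk G e (G.fst z₂)) (qmk G e (G.snd z₂)) := by
    rcases hpd with ⟨h1, h2⟩ | ⟨h1, h2⟩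
    · have r1 := hproj (Reach.mono hD_sub h1)
      have r2 := hproj (Reach.mono hD_sub h2)
      exact (Reach.symm r1).trans (by rw [hq]; exact r2)
    · have r1 := hproj (Reach.mono hD_sub h1)
      have r2 := hproj (Reach.mono hD_sub h2)
      exact (Reach.symm r2).trans (by rw [← hq]; exact r1)
  have hto : ∀ u : V,
      (G.contract e).Reach ↑(S.erase y') (qmk G e u) (qmk G e (G.fst z₂)) := by
    intro u
    rcases cut_cover (x := z₂) hTree.1 u with h | h
    · exact Reach.symm (hproj h)
    · exact (Reach.symm (hproj h)).trans (Reach.symm hkey)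
  have hcon : (G.contract e).ConnOn ↑(S.erase y') := by
    intro a b
    induction a using Quot.ind with | _ u =>
    induction b using Quot.ind with | _ v =>
    exact (hto u).trans (Reach.symm (hto v))
  exact hS.2 y' hy'S hcon

theorem isSpanningTree_contract_iff (hloop : G.fst e ≠ G.snd e)
    {S : Finset {e' : E // e' ≠ e}} :
    (G.contract e).IsSpanningTree S ↔ G.IsSpanningTree (insert e (S.map (emb e))) := by
  have herase : ∀ x' : {e' : E // e' ≠ e},
      (insert e (S.map (emb e))).erase ((emb e) x') =
        insert e (((S.erase x')).map (emb e)) := by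
    intro x'
    have hco : ((emb e) x') = x'.val := rfl
    rw [Finset.map_erase, hco, Finset.erase_insert_of_ne (fun h => x'.2 h.symm)]
  constructor
  · intro hS
    refine ⟨connOn_of_contract (Finset.mem_insert_self _ _) (Finset.subset_insert _ _) hS.1, ?_⟩
    intro x hx
    rcases Finset.mem_insert.mp hx with rfl | hx'
    · rw [Finset.erase_insert e_not_mem_map]
      exact not_connOn_map_of_contract_tree hloop hS
    · obtain ⟨x', hx'S, rfl⟩ := Finset.mem_map.mp hx'
      intro hcon
      refine hS.2 x' hx'S (connOn_contract_of hcon ?_)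
      rw [herase x']
  · intro hT
    refine ⟨connOn_contract_of hT.1 subset_rfl, ?_⟩
    intro x' hx'S hcon
    have hcon' := connOn_of_contract (T₀ := insert e ((S.erase x').map (emb e)))
      (Finset.mem_insert_self _ _) (Finset.subset_insert _ _) hcon
    rw [← herase x'] at hcon'
    exact hT.2 ((emb e) x') (Finset.mem_insert_of_mem (Finset.mem_map_of_mem _ hx'S)) hcon'

end Contract

open MvPolynomial

section Euler

variable {σ W : Type} [Fintype σ] [DecidableEq σ]

theorem pderiv_prod_X (i : σ) (A : Finset σ) :
    pderiv i (∏ a ∈ A, (X a : MvPolynomial σ ℚ)) =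
      if i ∈ A then ∏ a ∈ A.erase i, X a else 0 := by
  induction A using Finset.induction_on with
  | empty => simp
  | @insert a A ha ih =>
    rw [Finset.prod_insert ha, pderiv_mul, ih]
    by_cases hia : i = a
    · subst hia
      simp [ha, pderiv_X_self, Finset.erase_insert ha]
    · rw [pderiv_X_of_ne (Ne.symm hia)]
      by_cases hiA : i ∈ A
      · rw [if_pos hiA, if_pos (Finset.mem_insert_of_mem hiA),
          Finset.erase_insert_of_ne (Ne.symm hia), zero_mul, zero_add,
          Finset.prod_insert (fun h => ha (Finset.mem_of_mem_erase h))]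
      · simp [Finset.mem_insert, hiA, hia]

theorem sum_X_mul_pderiv_prod (A : Finset σ) :
    ∑ i : σ, X i * pderiv i (∏ a ∈ A, (X a : MvPolynomial σ ℚ)) =
      A.card • ∏ a ∈ A, X a := by
  simp_rw [pderiv_prod_X, mul_ite, mul_zero]
  rw [Finset.sum_ite_mem, Finset.univ_inter]
  rw [Finset.sum_congr rfl (fun i hi => Finset.mul_prod_erase A _ hi), Finset.sum_const]

open Classical in
theorem euler_kirchhoff {H : Multigraph W σ} {n : ℕ}
    (hcard : ∀ T : Finset σ, H.IsSpanningTree T → Tᶜ.card = n) :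
    ∑ i : σ, X i * pderiv i H.kirchhoff = n • H.kirchhoff := by
  have key : ∀ T : Finset σ,
      ∑ i : σ, X i * pderiv i
        (if H.IsSpanningTree T then ∏ f ∈ Tᶜ, (X f : MvPolynomial σ ℚ) else 0) =
      n • (if H.IsSpanningTree T then ∏ f ∈ Tᶜ, (X f : MvPolynomial σ ℚ) else 0) := by
    intro T
    by_cases hT : H.IsSpanningTree T
    · rw [if_pos hT, sum_X_mul_pderiv_prod, hcard T hT]
    · simp [if_neg hT]
  unfold kirchhoff
  rw [Finset.smul_sum]
  calc ∑ i : σ, X i * pderiv i (∑ T : Finset σ,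
          if H.IsSpanningTree T then ∏ f ∈ Tᶜ, (X f : MvPolynomial σ ℚ) else 0)
      = ∑ i : σ, ∑ T : Finset σ, X i * pderiv i
          (if H.IsSpanningTree T then ∏ f ∈ Tᶜ, (X f : MvPolynomial σ ℚ) else 0) := by
        simp_rw [map_sum, Finset.mul_sum]
    _ = ∑ T : Finset σ, ∑ i : σ, X i * pderiv i
          (if H.IsSpanningTree T then ∏ f ∈ Tᶜ, (X f : MvPolynomial σ ℚ) else 0) :=
        Finset.sum_comm
    _ = _ := Finset.sum_congr rfl (fun T _ => key T)

theorem kirchhoff_mem_jacobianIdeal {H : Multigraph W σ} {n : ℕ}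
    (hcard : ∀ T : Finset σ, H.IsSpanningTree T → Tᶜ.card = n) (hn : n ≠ 0) :
    H.kirchhoff ∈ jacobianIdeal H.kirchhoff := by
  have hsum : ∑ i : σ, X i * pderiv i H.kirchhoff ∈ jacobianIdeal H.kirchhoff :=
    Ideal.sum_mem _ (fun i _ => Ideal.mul_mem_left _ _ (Ideal.subset_span ⟨i, rfl⟩))
  rw [euler_kirchhoff hcard] at hsum
  have h2 := Ideal.mul_mem_left _ (C ((n : ℚ)⁻¹)) hsum
  have heq : C ((n : ℚ)⁻¹) * (n • H.kirchhoff) = H.kirchhoff := by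
    rw [nsmul_eq_mul]
    rw [show ((n : MvPolynomial σ ℚ)) = C ((n : ℚ)) from (map_natCast (C : ℚ →+* MvPolynomial σ ℚ) n).symm]
    rw [← mul_assoc, ← C_mul, inv_mul_cancel₀ (by exact_mod_cast hn), C_1, one_mul]
  rwa [heq] at h2

open Classical in
theorem kirchhoff_ne_zero {H : Multigraph W σ}
    (h : H.ConnOn ↑(Finset.univ : Finset σ)) : H.kirchhoff ≠ 0 := by
  obtain ⟨T, _, hT⟩ := exists_spanningTree_subset _ h
  intro h0
  have heval := congrArg (eval (fun _ => (1 : ℚ))) h0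
  rw [map_zero] at heval
  unfold kirchhoff at heval
  rw [map_sum] at heval
  simp only [apply_ite (eval fun _ => (1 : ℚ)), map_prod, eval_X, map_zero,
    Finset.prod_const_one] at heval
  have hle : (1 : ℚ) ≤ ∑ T' : Finset σ,
      (if H.IsSpanningTree T' then (1 : ℚ) else 0) := by
    have := Finset.single_le_sum
      (f := fun T' : Finset σ => if H.IsSpanningTree T' then (1 : ℚ) else 0)
      (fun i _ => by split <;> norm_num) (Finset.mem_univ T)
    simpa [hT] using this
  rw [heval] at hle
  norm_num at hle

end Euler

section CD

variable [Fintype E] [DecidableEq E] {G : Multigraph V E} {e : E}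

theorem map_subtype_of_not_mem {T : Finset E} (h : e ∉ T) :
    (T.subtype (· ≠ e)).map (emb e) = T := by
  unfold emb
  rw [Finset.subtype_map, Finset.filter_true_of_mem]
  intro x hx hxe
  exact h (hxe ▸ hx)

theorem subtype_map_self {S : Finset {e' : E // e' ≠ e}} :
    (S.map (emb e)).subtype (· ≠ e) = S := by
  ext f
  simp only [Finset.mem_subtype]
  constructor
  · intro h
    obtain ⟨g, hg, hgf⟩ := Finset.mem_map.mp h
    exact (Subtype.ext hgf : g = f) ▸ hg
  · intro h
    exact Finset.mem_map_of_mem _ h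

theorem subtype_insert_self {S : Finset {e' : E // e' ≠ e}} :
    (insert e (S.map (emb e))).subtype (· ≠ e) = S := by
  ext f
  simp only [Finset.mem_subtype, Finset.mem_insert]
  constructor
  · rintro (h | h)
    · exact absurd h f.2
    · obtain ⟨g, hg, hgf⟩ := Finset.mem_map.mp h
      exact (Subtype.ext hgf : g = f) ▸ hg
  · intro h
    exact Or.inr (Finset.mem_map_of_mem _ h)

theorem insert_map_subtype {T : Finset E} (h : e ∈ T) :
    insert e ((T.subtype (· ≠ e)).map (emb e)) = T := by
  unfold emb
  rw [Finset.subtype_map, Finset.filter_ne', Finset.insert_erase h]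

theorem compl_map (S : Finset {e' : E // e' ≠ e}) :
    (S.map (emb e))ᶜ = insert e (Sᶜ.map (emb e)) := by
  ext g
  simp only [Finset.mem_compl, Finset.mem_insert, Finset.mem_map]
  by_cases hg : g = e
  · subst hg
    refine ⟨fun _ => Or.inl rfl, fun _ h => ?_⟩
    obtain ⟨a, _, hae⟩ := h
    exact a.2 hae
  · constructor
    · intro hns
      exact Or.inr ⟨⟨g, hg⟩, fun hmem => hns ⟨⟨g, hg⟩, hmem, rfl⟩, rfl⟩
    · rintro (h | ⟨a, haS, rfl⟩)
      · exact absurd h hg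
      · intro hmem
        obtain ⟨b, hb, hba⟩ := hmem
        exact haS (((emb e).injective hba) ▸ hb)

theorem compl_insert_map (S : Finset {e' : E // e' ≠ e}) :
    (insert e (S.map (emb e)))ᶜ = Sᶜ.map (emb e) := by
  rw [Finset.compl_insert, compl_map, Finset.erase_insert e_not_mem_map]

open Classical in
theorem sum_delete_part :
    ∑ T ∈ Finset.univ.filter (fun T : Finset E => e ∉ T),
        (if G.IsSpanningTree T then ∏ f ∈ Tᶜ, (X f : MvPolynomial E ℚ) else 0) =
      X e * rename (Subtype.val : {e' : E // e' ≠ e} → E) (G.delete e).kirchhoff := by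
  unfold kirchhoff
  rw [map_sum, Finset.mul_sum]
  refine Finset.sum_bij' (fun T _ => T.subtype (· ≠ e)) (fun S _ => S.map (emb e))
    (fun T hT => Finset.mem_univ _)
    (fun S _ => Finset.mem_filter.mpr ⟨Finset.mem_univ _, e_not_mem_map⟩)
    (fun T hT => map_subtype_of_not_mem (Finset.mem_filter.mp hT).2)
    (fun S _ => subtype_map_self) ?_
  intro T hT
  have he : e ∉ T := (Finset.mem_filter.mp hT).2
  have hTS : (T.subtype (· ≠ e)).map (emb e) = T := map_subtype_of_not_mem he
  rw [apply_ite (rename (Subtype.val : {e' : E // e' ≠ e} → E)), map_zero, mul_ite, mul_zero]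
  refine if_congr ?_ ?_ rfl
  · rw [isSpanningTree_delete_iff, hTS]
  · show (∏ f ∈ Tᶜ, (X f : MvPolynomial E ℚ)) =
        X e * rename (Subtype.val : {e' : E // e' ≠ e} → E)
          (∏ f ∈ (T.subtype (· ≠ e))ᶜ, X f)
    conv_lhs => rw [← hTS]
    rw [compl_map, Finset.prod_insert e_not_mem_map, Finset.prod_map, map_prod]
    simp only [rename_X]
    rfl

open Classical in
theorem sum_contract_part (hloop : G.fst e ≠ G.snd e) :
    ∑ T ∈ Finset.univ.filter (fun T : Finset E => e ∈ T),
        (if G.IsSpanningTree T then ∏ f ∈ Tᶜ, (X f : MvPolynomial E ℚ) else 0) =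
      rename (Subtype.val : {e' : E // e' ≠ e} → E) (G.contract e).kirchhoff := by
  unfold kirchhoff
  rw [map_sum]
  refine Finset.sum_bij' (fun T _ => T.subtype (· ≠ e)) (fun S _ => insert e (S.map (emb e)))
    (fun T hT => Finset.mem_univ _)
    (fun S _ => Finset.mem_filter.mpr ⟨Finset.mem_univ _, Finset.mem_insert_self _ _⟩)
    (fun T hT => insert_map_subtype (Finset.mem_filter.mp hT).2)
    (fun S _ => subtype_insert_self) ?_
  intro T hT
  have he : e ∈ T := (Finset.mem_filter.mp hT).2
  have hTS : insert e ((T.subtype (· ≠ e)).map (emb e)) = T := insert_map_subtype he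
  rw [apply_ite (rename (Subtype.val : {e' : E // e' ≠ e} → E)), map_zero]
  refine if_congr ?_ ?_ rfl
  · rw [isSpanningTree_contract_iff hloop, hTS]
  · show (∏ f ∈ Tᶜ, (X f : MvPolynomial E ℚ)) =
        rename (Subtype.val : {e' : E // e' ≠ e} → E) (∏ f ∈ (T.subtype (· ≠ e))ᶜ, X f)
    conv_lhs => rw [← hTS]
    rw [compl_insert_map, Finset.prod_map, map_prod]
    simp only [rename_X]
    rfl

open Classical in
theorem kirchhoff_contract_delete (hloop : G.fst e ≠ G.snd e) :
    G.kirchhoff = X e * rename (Subtype.val : {e' : E // e' ≠ e} → E) (G.delete e).kirchhoff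
      + rename (Subtype.val : {e' : E // e' ≠ e} → E) (G.contract e).kirchhoff := by
  rw [← sum_delete_part, ← sum_contract_part hloop]
  conv_lhs => rw [kirchhoff]
  rw [← Finset.sum_filter_add_sum_filter_not Finset.univ (fun T : Finset E => e ∉ T)]
  congr 1
  exact Finset.sum_congr (Finset.filter_congr (fun T _ => not_not)) (fun _ _ => rfl)

theorem mem_jacobianIdeal_rename {f : MvPolynomial {e' : E // e' ≠ e} ℚ}
    (h : f ∈ jacobianIdeal f) :
    rename (Subtype.val : {e' : E // e' ≠ e} → E) f ∈
      jacobianIdeal (rename (Subtype.val : {e' : E // e' ≠ e} → E) f) := by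
  have h1 : rename (Subtype.val : {e' : E // e' ≠ e} → E) f ∈
      Ideal.map (rename (Subtype.val : {e' : E // e' ≠ e} → E)) (jacobianIdeal f) :=
    Ideal.mem_map_of_mem _ h
  rw [jacobianIdeal, Ideal.map_span] at h1
  refine Ideal.span_mono ?_ h1
  rintro _ ⟨_, ⟨i, rfl⟩, rfl⟩
  exact ⟨i.val, pderiv_rename Subtype.val_injective i f⟩

end CD

end Multigraph

open Multigraph MvPolynomial in
/-- For `e` neither a bridge nor a self-loop, Condition 1 for `(G,e)` is
equivalent to `Ψ_{G/e} ∈ ⟨∂Ψ_{G∖e}⟩`. -/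
theorem cond1_iff_contract_mem {V E : Type} [Fintype E] [DecidableEq E]
    (G : Multigraph V E) (hconn : G.ConnectedGraph) (e : E)
    (hbr : ¬ G.IsBridge e) (hloop : ¬ G.IsLoop e) :
    G.Cond1 e ↔
      rename (Subtype.val : {e' : E // e' ≠ e} → E) (G.contract e).kirchhoff ∈
        jacobianIdeal (rename (Subtype.val : {e' : E // e' ≠ e} → E)
          (G.delete e).kirchhoff) := by
  classical
  have hloop' : G.fst e ≠ G.snd e := hloop
  have hGconn : G.ConnOn ↑(Finset.univ : Finset E) := by
    rw [Finset.coe_univ]; exact hconn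
  have hdelconn : (G.delete e).ConnOn ↑(Finset.univ : Finset {e' : E // e' ≠ e}) := by
    rw [connOn_delete_iff]
    have hmapuniv :
        ↑((Finset.univ : Finset {e' : E // e' ≠ e}).map (emb e)) = {e' : E | e' ≠ e} := by
      ext g
      simp only [Finset.coe_map, Finset.coe_univ, Set.image_univ, Set.mem_range,
        Set.mem_setOf_eq]
      exact ⟨fun ⟨a, ha⟩ => ha ▸ a.2, fun hg => ⟨⟨g, hg⟩, rfl⟩⟩
    rw [hmapuniv]
    exact not_not.mp hbr
  obtain ⟨Td, _, hTd⟩ := exists_spanningTree_subset _ hdelconn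
  set n := (Tdᶜ).card with hn
  have hcard : ∀ S, (G.delete e).IsSpanningTree S → Sᶜ.card = n := by
    intro S hS
    rw [hn, Finset.card_compl, Finset.card_compl, hS.card_eq hTd]
  have hCD := kirchhoff_contract_delete (G := G) (e := e) hloop'
  by_cases hn0 : n = 0
  · -- degenerate case: `G ∖ e` is a tree, both sides are false
    have huniv : ∀ S, (G.delete e).IsSpanningTree S → S = Finset.univ := by
      intro S hS
      have := hcard S hS
      rw [hn0, Finset.card_eq_zero] at this
      rwa [← Finset.compl_eq_empty_iff]
    have hdel1 : (G.delete e).kirchhoff = 1 := by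
      unfold kirchhoff
      rw [Finset.sum_eq_single Finset.univ
        (fun S _ hne => if_neg (fun ht => hne (huniv S ht)))
        (fun h => absurd (Finset.mem_univ _) h)]
      rw [if_pos ((huniv Td hTd) ▸ hTd), Finset.compl_univ, Finset.prod_empty]
    have hJ : jacobianIdeal (rename (Subtype.val : {e' : E // e' ≠ e} → E)
        (G.delete e).kirchhoff) = ⊥ := by
      rw [hdel1, map_one, jacobianIdeal]
      refine le_antisymm (Ideal.span_le.mpr ?_) bot_le
      rintro _ ⟨i, rfl⟩
      simp only [pderiv_one, SetLike.mem_coe]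
      exact zero_mem ⊥
    have hG0 : G.kirchhoff ≠ 0 := kirchhoff_ne_zero hGconn
    have hconconn : (G.contract e).ConnOn ↑(Finset.univ : Finset {e' : E // e' ≠ e}) := by
      refine connOn_contract_of hGconn ?_
      intro g _
      by_cases hge : g = e
      · exact hge ▸ Finset.mem_insert_self _ _
      · exact Finset.mem_insert_of_mem
          (Finset.mem_map.mpr ⟨⟨g, hge⟩, Finset.mem_univ _, rfl⟩)
    have hC0 : rename (Subtype.val : {e' : E // e' ≠ e} → E) (G.contract e).kirchhoff ≠ 0 := by
      intro h0
      refine kirchhoff_ne_zero hconconn ?_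
      exact rename_injective _ Subtype.val_injective (by rw [h0, map_zero])
    unfold Cond1
    rw [hJ]
    simp only [Ideal.mem_bot]
    exact ⟨fun h => absurd h hG0, fun h => absurd h hC0⟩
  · have hfmem : (G.delete e).kirchhoff ∈ jacobianIdeal (G.delete e).kirchhoff :=
      kirchhoff_mem_jacobianIdeal hcard hn0
    have hXD := Ideal.mul_mem_left _ (X e) (mem_jacobianIdeal_rename hfmem)
    unfold Cond1
    rw [hCD]
    exact Submodule.add_mem_iff_right _ hXD
end
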